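/- arXiv:1604.02002 — 5 statements merged into one kernel-verified Lean document; each statement's English description precedes it below -/
import Mathlib

section
/- Assume V : ℝ^n → ℝ is of class C², satisfies (Hcoerc), and all critical points of V are nondegenerate. Then there exists a constant C > 0, depending only on V, such that for every c > 0 and every bounded solution φ : ℝ → ℝ^n of the differential system φ'' = −c φ' + ∇V(φ): sup_{x∈ℝ} |φ(x)| ≤ C, and there exist critical points u₋ and u₊ of V such that φ(x) → u₋ as x → −∞ and φ(x) → u₊ as x → +∞; moreover, if φ is nonconstant, then V(u₋) < V(u₊). -/
open Filter Topology Set MeasureTheory Real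

noncomputable section

variable {n : ℕ}

/-- The Hessian of `V` at `u`, i.e. the derivative of the gradient of `V`. -/
def hessian (V : EuclideanSpace ℝ (Fin n) → ℝ) (u : EuclideanSpace ℝ (Fin n)) :
    EuclideanSpace ℝ (Fin n) →L[ℝ] EuclideanSpace ℝ (Fin n) :=
  fderiv ℝ (gradient V) u

/-- `m` is a nondegenerate local minimum point of `V`: it is a critical point and
the Hessian of `V` at `m` is positive definite. -/
def IsMinPt (V : EuclideanSpace ℝ (Fin n) → ℝ) (m : EuclideanSpace ℝ (Fin n)) : Prop :=
  gradient V m = 0 ∧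
    ∀ w : EuclideanSpace ℝ (Fin n), w ≠ 0 → 0 < (inner ℝ (hessian V m w) w : ℝ)

/-- Coercivity hypothesis (Hcoerc): `u · ∇V(u) ≥ ε |u|²` for `|u|` large. -/
def Hcoerc (V : EuclideanSpace ℝ (Fin n) → ℝ) : Prop :=
  ∃ ε > (0 : ℝ), ∃ R : ℝ, ∀ u : EuclideanSpace ℝ (Fin n), R ≤ ‖u‖ →
    ε * ‖u‖ ^ 2 ≤ (inner ℝ u (gradient V u) : ℝ)

/-- `φ` is a (C²) solution of the travelling-wave equation `φ'' = -c φ' + ∇V(φ)`. -/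
def SolTW (V : EuclideanSpace ℝ (Fin n) → ℝ) (c : ℝ) (φ : ℝ → EuclideanSpace ℝ (Fin n)) :
    Prop :=
  ContDiff ℝ 2 φ ∧
    ∀ x : ℝ, deriv (deriv φ) x = (-c) • deriv φ x + gradient V (φ x)

/-- The set `Φ_c(u₋, u₊)` of nonconstant travelling-wave profiles at speed `c`
connecting `u₋` (at `-∞`) to `u₊` (at `+∞`). -/
def PhiSet (V : EuclideanSpace ℝ (Fin n) → ℝ) (c : ℝ)
    (um up : EuclideanSpace ℝ (Fin n)) : Set (ℝ → EuclideanSpace ℝ (Fin n)) :=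
  {φ | SolTW V c φ ∧ (∃ x y, φ x ≠ φ y) ∧
    Tendsto φ atBot (𝓝 um) ∧ Tendsto φ atTop (𝓝 up)}

/-- The set `Φ_{c,norm}(u₋, u₊)` of normalized travelling-wave profiles. -/
def PhiNorm (V : EuclideanSpace ℝ (Fin n) → ℝ) (dEsc c : ℝ)
    (um up : EuclideanSpace ℝ (Fin n)) : Set (ℝ → EuclideanSpace ℝ (Fin n)) :=
  {φ | φ ∈ PhiSet V c um up ∧ ‖φ 0 - up‖ = dEsc ∧ ∀ ξ : ℝ, 0 < ξ → ‖φ ξ - up‖ < dEsc}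

/-- Property of the escape distance `dEsc`: at distance at most `dEsc` of every
nondegenerate local minimum point, every eigenvalue of the Hessian of `V` lies
between `lamMin / 2` and `2 * lamMax`. -/
def EscSandwich (V : EuclideanSpace ℝ (Fin n) → ℝ) (lamMin lamMax dEsc : ℝ) : Prop :=
  ∀ m, IsMinPt V m → ∀ u : EuclideanSpace ℝ (Fin n), ‖u - m‖ ≤ dEsc →
    ∀ lam : ℝ, ∀ w : EuclideanSpace ℝ (Fin n), w ≠ 0 → hessian V u w = lam • w →
      lamMin / 2 ≤ lam ∧ lam ≤ 2 * lamMax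

/-- A bounded classical solution of `u_t = -∇V(u) + u_xx` (first argument: space,
second argument: time), with bounded partial derivatives on `ℝ × [ε, ∞)` for every
`ε > 0`. -/
def IsBddSol (V : EuclideanSpace ℝ (Fin n) → ℝ) (u : ℝ → ℝ → EuclideanSpace ℝ (Fin n)) :
    Prop :=
  ContinuousOn (fun p : ℝ × ℝ => u p.1 p.2) (univ ×ˢ Ici 0) ∧
  (∀ k : ℕ, ContDiffOn ℝ k (fun p : ℝ × ℝ => u p.1 p.2) (univ ×ˢ Ioi 0)) ∧
  (∀ x t : ℝ, 0 < t →
    deriv (fun s => u x s) t = -gradient V (u x t) + deriv (deriv (fun y => u y t)) x) ∧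
  (∃ C, ∀ x t : ℝ, 0 ≤ t → ‖u x t‖ ≤ C) ∧
  (∀ ε : ℝ, 0 < ε → ∃ C, ∀ x t : ℝ, ε ≤ t →
    ‖deriv (fun y => u y t) x‖ ≤ C ∧ ‖deriv (deriv (fun y => u y t)) x‖ ≤ C ∧
    ‖deriv (fun s => u x s) t‖ ≤ C)

/-- A bounded classical solution of `v_t - c v_y = -∇V(v) + v_yy` (first argument:
space, second argument: time), with bounded partial derivatives. -/
def IsBddSolTF (V : EuclideanSpace ℝ (Fin n) → ℝ) (c : ℝ)
    (v : ℝ → ℝ → EuclideanSpace ℝ (Fin n)) : Prop :=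
  ContinuousOn (fun p : ℝ × ℝ => v p.1 p.2) (univ ×ˢ Ici 0) ∧
  (∀ k : ℕ, ContDiffOn ℝ k (fun p : ℝ × ℝ => v p.1 p.2) (univ ×ˢ Ioi 0)) ∧
  (∀ y s : ℝ, 0 < s →
    deriv (fun τ => v y τ) s - c • deriv (fun z => v z s) y
      = -gradient V (v y s) + deriv (deriv (fun z => v z s)) y) ∧
  (∃ C, ∀ y s : ℝ, 0 ≤ s → ‖v y s‖ ≤ C) ∧
  (∀ ε : ℝ, 0 < ε → ∃ C, ∀ y s : ℝ, ε ≤ s →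
    ‖deriv (fun z => v z s) y‖ ≤ C ∧ ‖deriv (deriv (fun z => v z s)) y‖ ≤ C ∧
    ‖deriv (fun τ => v y τ) s‖ ≤ C)


/-- Maximum principle: a bounded-above C² function with `ρ'' + cρ' ≥ δ > 0`
wherever `ρ > K` satisfies `ρ ≤ K` everywhere. -/
lemma maxprin {ρ : ℝ → ℝ} {c δ K B : ℝ} (hc : 0 < c) (hδ : 0 < δ)
    (hd1 : Differentiable ℝ ρ) (hd2 : Differentiable ℝ (deriv ρ))
    (hB : ∀ x, ρ x ≤ B)
    (h : ∀ x, K < ρ x → δ ≤ deriv (deriv ρ) x + c * deriv ρ x) :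
    ∀ x, ρ x ≤ K := by
  set f : ℝ → ℝ := fun x => exp (c*x) * deriv ρ x with hf
  have hexpd : ∀ x : ℝ, HasDerivAt (fun y => exp (c*y)) (exp (c*x) * c) x := by
    intro x
    have h1 : HasDerivAt (fun y : ℝ => c*y) c x := by
      simpa using (hasDerivAt_id x).const_mul c
    exact h1.exp
  have hfd : ∀ x, HasDerivAt f (exp (c*x) * (deriv (deriv ρ) x + c * deriv ρ x)) x := by
    intro x
    have h2 : HasDerivAt (deriv ρ) (deriv (deriv ρ) x) x := (hd2 x).hasDerivAt
    have := (hexpd x).mul h2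
    refine this.congr_deriv ?_
    ring
  -- monotonicity tool
  have mono : ∀ a b : ℝ, a ≤ b → (∀ y, y ∈ Ioo a b → K < ρ y) →
      (δ/c) * (exp (c*b) - exp (c*a)) ≤ f b - f a := by
    intro a b hab hK
    set F : ℝ → ℝ := fun x => f x - (δ/c) * exp (c*x) with hF
    have hFd : ∀ x, HasDerivAt F
        (exp (c*x) * (deriv (deriv ρ) x + c * deriv ρ x) - (δ/c) * (exp (c*x) * c)) x := by
      intro x
      exact (hfd x).sub ((hexpd x).const_mul (δ/c))
    have hmono : MonotoneOn F (Icc a b) := by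
      apply monotoneOn_of_deriv_nonneg (convex_Icc a b)
      · have : Differentiable ℝ F := fun x => (hFd x).differentiableAt
        exact this.continuous.continuousOn
      · intro x _
        exact (hFd x).differentiableAt.differentiableWithinAt
      · intro x hx
        rw [interior_Icc] at hx
        rw [(hFd x).deriv]
        have hKx := h x (hK x hx)
        have heq : (δ/c) * (exp (c*x) * c) = δ * exp (c*x) := by
          field_simp
        rw [heq]
        nlinarith [exp_pos (c*x)]
    have := hmono (left_mem_Icc.2 hab) (right_mem_Icc.2 hab) hab
    simp only [hF] at this
    linarith
  by_contra hcon
  push_neg at hcon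
  obtain ⟨x₀, hx₀⟩ := hcon
  rcases le_or_gt 0 (deriv ρ x₀) with hpos | hneg
  · -- Case A : forward blow-up
    have step1 : ∀ x, x₀ ≤ x → K < ρ x := by
      by_contra hs
      push_neg at hs
      set S : Set ℝ := {x | x₀ ≤ x ∧ ρ x ≤ K} with hS
      have hSne : S.Nonempty := by obtain ⟨x, hx1, hx2⟩ := hs; exact ⟨x, hx1, hx2⟩
      have hScl : IsClosed S := by
        have : S = Ici x₀ ∩ ρ ⁻¹' (Iic K) := by ext t; simp [hS]
        rw [this]; exact isClosed_Ici.inter (isClosed_Iic.preimage hd1.continuous)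
      have hSbdd : BddBelow S := ⟨x₀, fun t ht => ht.1⟩
      have hbS : sInf S ∈ S := hScl.csInf_mem hSne hSbdd
      set b := sInf S with hb
      have hx₀b : x₀ < b := by
        rcases lt_or_eq_of_le hbS.1 with h1 | h1
        · exact h1
        · exfalso; rw [← h1] at hbS; linarith [hbS.2]
      have hIoo : ∀ y, y ∈ Ioo x₀ b → K < ρ y := by
        intro y hy
        by_contra hyK
        push_neg at hyK
        have : y ∈ S := ⟨le_of_lt hy.1, hyK⟩
        have := csInf_le hSbdd this
        linarith [hy.2]
      have hder : ∀ y, y ∈ Ioo x₀ b → 0 < deriv ρ y := by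
        intro y hy
        have h1 := mono x₀ y (le_of_lt hy.1) (fun z hz => hIoo z ⟨hz.1, lt_trans hz.2 hy.2⟩)
        have hfx₀ : 0 ≤ f x₀ := mul_nonneg (exp_pos _).le hpos
        have hexp : exp (c*x₀) < exp (c*y) := exp_lt_exp.2 ((mul_lt_mul_iff_right₀ hc).2 hy.1)
        have hpos2 : 0 < (δ/c) * (exp (c*y) - exp (c*x₀)) :=
          mul_pos (by positivity) (by linarith)
        have hfy : 0 < f y := by linarith
        have hfval : f y = exp (c*y) * deriv ρ y := rfl
        by_contra hnp
        push_neg at hnp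
        have : exp (c*y) * deriv ρ y ≤ 0 :=
          mul_nonpos_of_nonneg_of_nonpos (exp_pos _).le hnp
        linarith [hfval ▸ hfy]
      have hmono2 : StrictMonoOn ρ (Icc x₀ b) := by
        apply strictMonoOn_of_deriv_pos (convex_Icc _ _) hd1.continuous.continuousOn
        intro y hy
        rw [interior_Icc] at hy
        exact hder y hy
      have := hmono2 (left_mem_Icc.2 hx₀b.le) (right_mem_Icc.2 hx₀b.le) hx₀b
      linarith [hbS.2]
    have hf2 : ∀ x, x₀ ≤ x → (δ/c) * (exp (c*x) - exp (c*x₀)) ≤ f x - f x₀ := by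
      intro x hx
      exact mono x₀ x hx (fun z hz => step1 z hz.1.le)
    have hder2 : ∀ x, x₀ ≤ x → (δ/c) * (1 - exp (c*(x₀ - x))) ≤ deriv ρ x := by
      intro x hx
      have h1 := hf2 x hx
      have hfx₀ : 0 ≤ f x₀ := mul_nonneg (exp_pos _).le hpos
      have hfx : (δ/c) * (exp (c*x) - exp (c*x₀)) ≤ f x := by linarith
      have hex : 0 < exp (c*x) := exp_pos _
      have hprod : exp (c*(x₀ - x)) * exp (c*x) = exp (c*x₀) := by
        rw [← exp_add]; ring_nf
      have heq : (δ/c) * (1 - exp (c*(x₀-x))) * exp (c*x)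
          = (δ/c) * (exp (c*x) - exp (c*x₀)) := by
        linear_combination (-(δ/c)) * hprod
      have hfval : f x = exp (c*x) * deriv ρ x := rfl
      have hle : (δ/c) * (1 - exp (c*(x₀-x))) * exp (c*x) ≤ exp (c*x) * deriv ρ x := by
        rw [heq, ← hfval]; exact hfx
      nlinarith [hle]
    obtain ⟨x₁, hx₁⟩ : ∃ t : ℝ, t = x₀ + Real.log 2 / c := ⟨_, rfl⟩
    have hlog2 : 0 < Real.log 2 := Real.log_pos (by norm_num)
    have hx₀x₁ : x₀ ≤ x₁ := by
      have h2 : 0 < Real.log 2 / c := by positivity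
      rw [hx₁]; linarith
    have hderlarge : ∀ x, x₁ ≤ x → δ/(2*c) ≤ deriv ρ x := by
      intro x hx
      have h1 := hder2 x (le_trans hx₀x₁ hx)
      have hexp : exp (c*(x₀ - x)) ≤ 1/2 := by
        have hle : c*(x₀ - x) ≤ -Real.log 2 := by
          have h3 : Real.log 2 / c ≤ x - x₀ := by
            rw [hx₁] at hx; linarith
          have h4 := (div_le_iff₀ hc).1 h3
          nlinarith
        calc exp (c*(x₀ - x)) ≤ exp (-Real.log 2) := exp_le_exp.2 hle
          _ = 1/2 := by
            rw [exp_neg, exp_log (by norm_num : (0:ℝ) < 2)]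
            norm_num
      have hdc : 0 < δ/c := by positivity
      have h2 : (δ/c) * (1/2) ≤ (δ/c) * (1 - exp (c*(x₀ - x))) := by nlinarith
      have h3 : δ/(2*c) = δ/c * (1/2) := by ring
      linarith [h3 ▸ le_trans (le_of_eq h3) (le_trans h2 h1)]
    have hgrow : ∀ x, x₁ ≤ x → ρ x₁ + δ/(2*c) * (x - x₁) ≤ ρ x := by
      intro x hx
      set G : ℝ → ℝ := fun y => ρ y - δ/(2*c) * y with hG
      have hGd : ∀ y, HasDerivAt G (deriv ρ y - δ/(2*c)) y := by
        intro y
        have := (hd1 y).hasDerivAt.sub ((hasDerivAt_id y).const_mul (δ/(2*c)))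
        simp at this; exact this
      have hmono3 : MonotoneOn G (Icc x₁ x) := by
        apply monotoneOn_of_deriv_nonneg (convex_Icc _ _)
        · have : Differentiable ℝ G := fun y => (hGd y).differentiableAt
          exact this.continuous.continuousOn
        · intro y _
          exact (hGd y).differentiableAt.differentiableWithinAt
        · intro y hy
          rw [interior_Icc] at hy
          rw [(hGd y).deriv]
          linarith [hderlarge y hy.1.le]
      have := hmono3 (left_mem_Icc.2 hx) (right_mem_Icc.2 hx) hx
      simp only [hG] at this
      linarith
    have hlim : Tendsto (fun x => ρ x₁ + δ/(2*c) * (x - x₁)) atTop atTop := by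
      apply tendsto_atTop_add_const_left
      apply Tendsto.const_mul_atTop (by positivity : (0:ℝ) < δ/(2*c))
      simpa [sub_eq_add_neg] using tendsto_atTop_add_const_right atTop (-x₁) tendsto_id
    obtain ⟨x, hx1, hx2⟩ := ((hlim.eventually_gt_atTop B).and (eventually_ge_atTop x₁)).exists
    linarith [hgrow x hx2, hB x]
  · -- Case B : backward blow-up
    have step1 : ∀ x, x ≤ x₀ → K < ρ x := by
      by_contra hs
      push_neg at hs
      set S : Set ℝ := {x | x ≤ x₀ ∧ ρ x ≤ K} with hS
      have hSne : S.Nonempty := by obtain ⟨x, hx1, hx2⟩ := hs; exact ⟨x, hx1, hx2⟩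
      have hScl : IsClosed S := by
        have : S = Iic x₀ ∩ ρ ⁻¹' (Iic K) := by ext t; simp [hS]
        rw [this]; exact isClosed_Iic.inter (isClosed_Iic.preimage hd1.continuous)
      have hSbdd : BddAbove S := ⟨x₀, fun t ht => ht.1⟩
      have haS : sSup S ∈ S := hScl.csSup_mem hSne hSbdd
      set a := sSup S with ha
      have hax₀ : a < x₀ := by
        rcases lt_or_eq_of_le haS.1 with h1 | h1
        · exact h1
        · exfalso; rw [h1] at haS; linarith [haS.2]
      have hIoo : ∀ y, y ∈ Ioo a x₀ → K < ρ y := by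
        intro y hy
        by_contra hyK
        push_neg at hyK
        have : y ∈ S := ⟨le_of_lt hy.2, hyK⟩
        have := le_csSup hSbdd this
        linarith [hy.1]
      have hder : ∀ y, y ∈ Ioo a x₀ → deriv ρ y < 0 := by
        intro y hy
        have h1 := mono y x₀ hy.2.le (fun z hz => hIoo z ⟨lt_trans hy.1 hz.1, hz.2⟩)
        have hfx₀ : f x₀ < 0 := mul_neg_of_pos_of_neg (exp_pos _) hneg
        have hexp : exp (c*y) < exp (c*x₀) := exp_lt_exp.2 ((mul_lt_mul_iff_right₀ hc).2 hy.2)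
        have hpos2 : 0 ≤ (δ/c) * (exp (c*x₀) - exp (c*y)) :=
          mul_nonneg (by positivity) (by linarith)
        have hfy : f y < 0 := by linarith
        have hfval : f y = exp (c*y) * deriv ρ y := rfl
        by_contra hnp
        push_neg at hnp
        have : 0 ≤ exp (c*y) * deriv ρ y := mul_nonneg (exp_pos _).le hnp
        linarith [hfval ▸ hfy]
      have hmono2 : StrictAntiOn ρ (Icc a x₀) := by
        apply strictAntiOn_of_deriv_neg (convex_Icc _ _) hd1.continuous.continuousOn
        intro y hy
        rw [interior_Icc] at hy
        exact hder y hy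
      have := hmono2 (left_mem_Icc.2 hax₀.le) (right_mem_Icc.2 hax₀.le) hax₀
      linarith [haS.2]
    have hf2 : ∀ y, y ≤ x₀ → f y ≤ f x₀ := by
      intro y hy
      have h1 := mono y x₀ hy (fun z hz => step1 z hz.2.le)
      have hexp : exp (c*y) ≤ exp (c*x₀) :=
        exp_le_exp.2 (mul_le_mul_of_nonneg_left hy hc.le)
      have h2 : 0 ≤ (δ/c) * (exp (c*x₀) - exp (c*y)) :=
        mul_nonneg (by positivity) (by linarith)
      linarith
    set m := f x₀ with hm
    have hmneg : m < 0 := mul_neg_of_pos_of_neg (exp_pos _) hneg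
    have hder2 : ∀ y, y ≤ x₀ → deriv ρ y ≤ m * exp (-(c*y)) := by
      intro y hy
      have h1 := hf2 y hy
      have hey : 0 < exp (c*y) := exp_pos _
      have hfy : exp (c*y) * deriv ρ y ≤ m := h1
      have h2 : deriv ρ y ≤ m / exp (c*y) := by
        rw [le_div_iff₀ hey]; linarith
      calc deriv ρ y ≤ m / exp (c*y) := h2
        _ = m * exp (-(c*y)) := by rw [exp_neg]; ring
    have hgrow : ∀ y, y ≤ x₀ → ρ x₀ + (m/c) * (exp (-(c*x₀)) - exp (-(c*y))) ≤ ρ y := by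
      intro y hy
      set q : ℝ → ℝ := fun z => ρ z + (m/c) * exp (-(c*z)) with hq
      have hexpd2 : ∀ z : ℝ, HasDerivAt (fun w => exp (-(c*w))) (exp (-(c*z)) * (-c)) z := by
        intro z
        have h1 : HasDerivAt (fun w : ℝ => -(c*w)) (-c) z := by
          have := ((hasDerivAt_id z).const_mul c).neg
          simp at this; exact this
        exact h1.exp
      have hqd : ∀ z, HasDerivAt q (deriv ρ z + (m/c) * (exp (-(c*z)) * (-c))) z := by
        intro z
        exact (hd1 z).hasDerivAt.add ((hexpd2 z).const_mul (m/c))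
      have hanti : AntitoneOn q (Icc y x₀) := by
        apply antitoneOn_of_deriv_nonpos (convex_Icc _ _)
        · have : Differentiable ℝ q := fun z => (hqd z).differentiableAt
          exact this.continuous.continuousOn
        · intro z _
          exact (hqd z).differentiableAt.differentiableWithinAt
        · intro z hz
          rw [interior_Icc] at hz
          rw [(hqd z).deriv]
          have h1 := hder2 z hz.2.le
          have h2 : (m/c) * (exp (-(c*z)) * (-c)) = -(m * exp (-(c*z))) := by
            field_simp
          rw [h2]
          linarith
      have := hanti (left_mem_Icc.2 hy) (right_mem_Icc.2 hy) hy
      simp only [hq] at this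
      linarith
    have hlim : Tendsto (fun y => ρ x₀ + (m/c) * (exp (-(c*x₀)) - exp (-(c*y)))) atBot atTop := by
      have hcb : Tendsto (fun y : ℝ => c*y) atBot atBot :=
        Tendsto.const_mul_atBot hc tendsto_id
      have hnegt : Tendsto (fun y : ℝ => -(c*y)) atBot atTop :=
        tendsto_neg_atBot_atTop.comp hcb
      have h1 : Tendsto (fun y : ℝ => exp (-(c*y))) atBot atTop :=
        tendsto_exp_atTop.comp hnegt
      have h2 : Tendsto (fun y : ℝ => exp (-(c*x₀)) - exp (-(c*y))) atBot atBot := by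
        have := tendsto_neg_atTop_atBot.comp h1
        simpa [sub_eq_add_neg] using
          tendsto_atBot_add_const_left atBot (exp (-(c*x₀))) this
      have hmc : m/c < 0 := div_neg_of_neg_of_pos hmneg hc
      have h3 := Tendsto.const_mul_atBot_of_neg hmc h2
      exact tendsto_atTop_add_const_left atBot (ρ x₀) h3
    obtain ⟨y, hy1, hy2⟩ := ((hlim.eventually_gt_atTop B).and (eventually_le_atBot x₀)).exists
    linarith [hgrow y hy2, hB y]

local notation "⟪" x ", " y "⟫" => @inner ℝ _ _ x y

variable {n : ℕ}

lemma gradient_contDiff {V : EuclideanSpace ℝ (Fin n) → ℝ} (hV : ContDiff ℝ 2 V) :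
    ContDiff ℝ 1 (gradient V) := by
  have h1 : ContDiff ℝ 1 (fun x => fderiv ℝ V x) := hV.fderiv_right (by norm_num)
  exact ((InnerProductSpace.toDual ℝ (EuclideanSpace ℝ (Fin n))).symm.contDiff).comp h1

lemma inner_gradient_eq {V : EuclideanSpace ℝ (Fin n) → ℝ} {u v : EuclideanSpace ℝ (Fin n)} :
    ⟪gradient V u, v⟫ = fderiv ℝ V u v := by
  simp [gradient]

lemma hasDerivAt_V_comp {V : EuclideanSpace ℝ (Fin n) → ℝ} (hV : ContDiff ℝ 2 V)
    {φ : ℝ → EuclideanSpace ℝ (Fin n)} (hφd : Differentiable ℝ φ) (x : ℝ) :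
    HasDerivAt (fun y => V (φ y)) ⟪gradient V (φ x), deriv φ x⟫ x := by
  have hVd : DifferentiableAt ℝ V (φ x) := (hV.differentiable (by norm_num)) (φ x)
  have hg : HasGradientAt V (gradient V (φ x)) (φ x) := hVd.hasGradientAt
  have hF : HasFDerivAt V (InnerProductSpace.toDual ℝ _ (gradient V (φ x))) (φ x) := hg
  have := hF.comp_hasDerivAt x (hφd x).hasDerivAt
  exact this.congr_deriv (by simp [InnerProductSpace.toDual_apply_apply])

lemma deriv_differentiable {φ : ℝ → EuclideanSpace ℝ (Fin n)} (hφ : ContDiff ℝ 2 φ) :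
    Differentiable ℝ (deriv φ) ∧ Continuous (deriv (deriv φ)) := by
  have h2 : ContDiff ℝ ((1:ℕ∞)+1) φ := hφ.of_le (by norm_num)
  rw [contDiff_succ_iff_deriv] at h2
  have h3 : ContDiff ℝ 1 (deriv φ) := h2.2.2
  exact ⟨h3.differentiable one_ne_zero, h3.continuous_deriv le_rfl⟩

/-- Uniform bound on bounded solutions. -/
lemma sol_bound {V : EuclideanSpace ℝ (Fin n) → ℝ} (hV : ContDiff ℝ 2 V)
    {ε R : ℝ} (hε : 0 < ε)
    (hco : ∀ u : EuclideanSpace ℝ (Fin n), R ≤ ‖u‖ → ε * ‖u‖ ^ 2 ≤ ⟪u, gradient V u⟫)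
    {c : ℝ} (hc : 0 < c) {φ : ℝ → EuclideanSpace ℝ (Fin n)} (hφ : ContDiff ℝ 2 φ)
    (hode : ∀ x, deriv (deriv φ) x = (-c) • deriv φ x + gradient V (φ x))
    {B : ℝ} (hB : ∀ x, ‖φ x‖ ≤ B) : ∀ x, ‖φ x‖ ≤ max R 1 := by
  set C := max R 1 with hC
  have hC1 : (1:ℝ) ≤ C := le_max_right _ _
  have hC0 : 0 < C := lt_of_lt_of_le one_pos hC1
  have hφd : Differentiable ℝ φ := hφ.differentiable (by norm_num)
  obtain ⟨hφ'd, hφ''c⟩ := deriv_differentiable hφ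
  set ρ : ℝ → ℝ := fun x => ⟪φ x, φ x⟫ with hρ
  have hρval : ∀ x, ρ x = ‖φ x‖ ^ 2 := fun x => real_inner_self_eq_norm_sq _
  have hρd : ∀ x, HasDerivAt ρ (2 * ⟪φ x, deriv φ x⟫) x := by
    intro x
    have := HasDerivAt.inner ℝ (hφd x).hasDerivAt (hφd x).hasDerivAt
    refine this.congr_deriv ?_
    rw [real_inner_comm (deriv φ x) (φ x)]
    ring
  have hρderiv : deriv ρ = fun x => 2 * ⟪φ x, deriv φ x⟫ := funext fun x => (hρd x).deriv
  have hρ'd : ∀ x, HasDerivAt (deriv ρ)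
      (2 * (⟪deriv φ x, deriv φ x⟫ + ⟪φ x, deriv (deriv φ) x⟫)) x := by
    intro x
    rw [hρderiv]
    have := (HasDerivAt.inner ℝ (hφd x).hasDerivAt (hφ'd x).hasDerivAt).const_mul 2
    refine this.congr_deriv ?_
    ring
  have key : ∀ x, C^2 < ρ x →
      2*ε*C^2 ≤ deriv (deriv ρ) x + c * deriv ρ x := by
    intro x hx
    rw [(hρ'd x).deriv, hρderiv]
    have hnorm : C ≤ ‖φ x‖ := by
      by_contra hn
      push_neg at hn
      have := hρval x
      nlinarith [norm_nonneg (φ x)]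
    have hR : R ≤ ‖φ x‖ := le_trans (le_max_left _ _) hnorm
    have hco2 := hco (φ x) hR
    have hinner : ⟪φ x, deriv (deriv φ) x⟫
        = -c * ⟪φ x, deriv φ x⟫ + ⟪φ x, gradient V (φ x)⟫ := by
      rw [hode x, inner_add_right, real_inner_smul_right]
    have hsq : (0:ℝ) ≤ ⟪deriv φ x, deriv φ x⟫ := real_inner_self_nonneg
    have h3 : C^2 ≤ ‖φ x‖^2 := by nlinarith
    have hC2 : ε * C^2 ≤ ε * ‖φ x‖^2 := mul_le_mul_of_nonneg_left h3 hε.le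
    rw [hinner]
    have hbeta : (fun x => 2 * ⟪φ x, deriv φ x⟫) x = 2 * ⟪φ x, deriv φ x⟫ := rfl
    rw [hbeta]
    nlinarith [hco2, hsq, hC2]
  have hbound : ∀ x, ρ x ≤ B^2 := by
    intro x
    rw [hρval]
    have h0 := hB x
    have h1 := norm_nonneg (φ x)
    nlinarith
  have := maxprin hc (by positivity : (0:ℝ) < 2*ε*C^2)
    (fun x => (hρd x).differentiableAt) (fun x => (hρ'd x).differentiableAt)
    hbound key
  intro x
  have h2 := this x
  rw [hρval] at h2
  nlinarith [norm_nonneg (φ x), sq_nonneg (‖φ x‖ + C)]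
/-- Duhamel bound: forward decay of the derivative. -/
lemma duhamel {V : EuclideanSpace ℝ (Fin n) → ℝ} (hV : ContDiff ℝ 2 V) {c : ℝ} (hc : 0 < c)
    {φ : ℝ → EuclideanSpace ℝ (Fin n)} (hφ : ContDiff ℝ 2 φ)
    (hode : ∀ x, deriv (deriv φ) x = (-c) • deriv φ x + gradient V (φ x))
    {C M : ℝ} (hCb : ∀ x, ‖φ x‖ ≤ C)
    (hM : ∀ u : EuclideanSpace ℝ (Fin n), ‖u‖ ≤ C → ‖gradient V u‖ ≤ M) :
    ∀ a x : ℝ, a ≤ x → ‖deriv φ x‖ ≤ exp (c*(a-x)) * ‖deriv φ a‖ + M/c := by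
  intro a x hax
  have hφd : Differentiable ℝ φ := hφ.differentiable (by norm_num)
  obtain ⟨hφ'd, hφ''c⟩ := deriv_differentiable hφ
  have hgradc : Continuous (gradient V) := (gradient_contDiff hV).continuous
  set f : ℝ → EuclideanSpace ℝ (Fin n) := fun t => exp (c*t) • deriv φ t with hfdef
  have hexpd : ∀ t : ℝ, HasDerivAt (fun s => exp (c*s)) (exp (c*t) * c) t := by
    intro t
    have h1 : HasDerivAt (fun s : ℝ => c*s) c t := by
      simpa using (hasDerivAt_id t).const_mul c
    exact h1.exp
  have hfd : ∀ t, HasDerivAt f (exp (c*t) • gradient V (φ t)) t := by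
    intro t
    have h3 := (hexpd t).smul (hφ'd t).hasDerivAt
    rw [hode t] at h3
    refine h3.congr_deriv ?_
    module
  have hcont : Continuous (fun t => exp (c*t) • gradient V (φ t)) :=
    (continuous_exp.comp (continuous_const.mul continuous_id)).smul
      (hgradc.comp hφd.continuous)
  have hFTC : ∫ t in a..x, exp (c*t) • gradient V (φ t) = f x - f a :=
    intervalIntegral.integral_eq_sub_of_hasDerivAt (fun t _ => hfd t)
      (hcont.intervalIntegrable a x)
  have hexpint : ∫ t in a..x, exp (c*t) * M = (M/c) * (exp (c*x) - exp (c*a)) := by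
    have hA : ∀ t : ℝ, HasDerivAt (fun s => (M/c) * exp (c*s)) (exp (c*t) * M) t := by
      intro t
      have := (hexpd t).const_mul (M/c)
      refine this.congr_deriv ?_
      field_simp
    have := intervalIntegral.integral_eq_sub_of_hasDerivAt (fun t _ => hA t)
      (((continuous_exp.comp (continuous_const.mul continuous_id)).mul
        continuous_const).intervalIntegrable a x)
    rw [this]; ring
  have hbnd : ‖f x - f a‖ ≤ (M/c) * (exp (c*x) - exp (c*a)) := by
    rw [← hFTC, ← hexpint]
    have h1 : ∀ t ∈ Set.uIoc a x, ‖exp (c*t) • gradient V (φ t)‖ ≤ exp (c*t) * M := by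
      intro t _
      rw [norm_smul, Real.norm_eq_abs, abs_of_pos (exp_pos _)]
      exact mul_le_mul_of_nonneg_left (hM (φ t) (hCb t)) (exp_pos _).le
    have h1' : ∀ᵐ t ∂(MeasureTheory.volume.restrict (Set.uIoc a x)),
        ‖exp (c*t) • gradient V (φ t)‖ ≤ exp (c*t) * M :=
      (MeasureTheory.ae_restrict_iff' measurableSet_uIoc).2 (Filter.Eventually.of_forall h1)
    have h2 := intervalIntegral.norm_integral_le_abs_of_norm_le h1'
      (((continuous_exp.comp (continuous_const.mul continuous_id)).mul
        continuous_const).intervalIntegrable a x)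
    calc ‖∫ t in a..x, exp (c*t) • gradient V (φ t)‖
        ≤ |∫ t in a..x, exp (c*t) * M| := h2
      _ = |(M/c) * (exp (c*x) - exp (c*a))| := by rw [hexpint]
      _ = (M/c) * (exp (c*x) - exp (c*a)) := by
          rw [abs_of_nonneg]
          rw [hexpint] at *
          have hM0 : 0 ≤ M := le_trans (norm_nonneg _) (hM (φ a) (hCb a))
          have : exp (c*a) ≤ exp (c*x) := exp_le_exp.2 (mul_le_mul_of_nonneg_left hax hc.le)
          have hMc : 0 ≤ M/c := by positivity
          nlinarith
      _ = ∫ t in a..x, exp (c*t) * M := (hexpint).symm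
    -- close with rewriting back
  have hfx : ‖f x‖ = exp (c*x) * ‖deriv φ x‖ := by
    rw [hfdef]
    simp [norm_smul, abs_of_pos (exp_pos _)]
  have hfa : ‖f a‖ = exp (c*a) * ‖deriv φ a‖ := by
    rw [hfdef]
    simp [norm_smul, abs_of_pos (exp_pos _)]
  have htri : ‖f x‖ - ‖f a‖ ≤ ‖f x - f a‖ := norm_sub_norm_le _ _
  have hX : (0:ℝ) < exp (c*x) := exp_pos _
  have hA : (0:ℝ) < exp (c*a) := exp_pos _
  have hkey : exp (c*x) * ‖deriv φ x‖
      ≤ exp (c*a) * ‖deriv φ a‖ + (M/c) * exp (c*x) := by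
    have := le_trans htri hbnd
    rw [hfx, hfa] at this
    have hM0 : 0 ≤ M := le_trans (norm_nonneg _) (hM (φ a) (hCb a))
    have hMc : 0 ≤ M/c := by positivity
    nlinarith
  have hgoal : ‖deriv φ x‖ ≤ (exp (c*a) * ‖deriv φ a‖ + (M/c) * exp (c*x)) / exp (c*x) := by
    rw [le_div_iff₀ hX]
    calc ‖deriv φ x‖ * exp (c*x) = exp (c*x) * ‖deriv φ x‖ := by ring
      _ ≤ _ := hkey
  calc ‖deriv φ x‖ ≤ (exp (c*a) * ‖deriv φ a‖ + (M/c) * exp (c*x)) / exp (c*x) := hgoal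
    _ = exp (c*(a-x)) * ‖deriv φ a‖ + M/c := by
        rw [show c*(a-x) = c*a - c*x from by ring, exp_sub, add_div,
          mul_div_right_comm, mul_div_cancel_right₀ _ hX.ne']
/-- The energy `E = ½|φ'|² - V(φ)` has derivative `-c |φ'|²`. -/
lemma energy_hasDerivAt {V : EuclideanSpace ℝ (Fin n) → ℝ} (hV : ContDiff ℝ 2 V) {c : ℝ}
    {φ : ℝ → EuclideanSpace ℝ (Fin n)} (hφ : ContDiff ℝ 2 φ)
    (hode : ∀ x, deriv (deriv φ) x = (-c) • deriv φ x + gradient V (φ x)) (x : ℝ) :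
    HasDerivAt (fun y => (1/2) * ⟪deriv φ y, deriv φ y⟫ - V (φ y))
      (-c * ⟪deriv φ x, deriv φ x⟫) x := by
  have hφd : Differentiable ℝ φ := hφ.differentiable (by norm_num)
  obtain ⟨hφ'd, _⟩ := deriv_differentiable hφ
  have h1 : HasDerivAt (fun y => ⟪deriv φ y, deriv φ y⟫)
      (⟪deriv φ x, deriv (deriv φ) x⟫ + ⟪deriv (deriv φ) x, deriv φ x⟫) x :=
    HasDerivAt.inner ℝ (hφ'd x).hasDerivAt (hφ'd x).hasDerivAt
  have h2 := (h1.const_mul (1/2 : ℝ)).sub (hasDerivAt_V_comp hV hφd x)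
  refine h2.congr_deriv ?_
  rw [hode x, inner_add_right, inner_add_left, real_inner_smul_right, real_inner_smul_left,
    real_inner_comm (gradient V (φ x)) (deriv φ x)]
  ring

set_option maxHeartbeats 1000000 in
/-- Global bound on the derivative of a bounded solution. -/
lemma deriv_global_bound {V : EuclideanSpace ℝ (Fin n) → ℝ} (hV : ContDiff ℝ 2 V) {c : ℝ}
    (hc : 0 < c) {φ : ℝ → EuclideanSpace ℝ (Fin n)} (hφ : ContDiff ℝ 2 φ)
    (hode : ∀ x, deriv (deriv φ) x = (-c) • deriv φ x + gradient V (φ x))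
    {C M MV : ℝ} (hCb : ∀ x, ‖φ x‖ ≤ C)
    (hM : ∀ u : EuclideanSpace ℝ (Fin n), ‖u‖ ≤ C → ‖gradient V u‖ ≤ M)
    (hMV : ∀ u : EuclideanSpace ℝ (Fin n), ‖u‖ ≤ C → |V u| ≤ MV) :
    ∀ x, ‖deriv φ x‖ ≤ ‖deriv φ 0‖ + M/c := by
  have hφd : Differentiable ℝ φ := hφ.differentiable (by norm_num)
  obtain ⟨hφ'd, hφ''c⟩ := deriv_differentiable hφ
  have hφ'c : Continuous (deriv φ) := hφ'd.continuous
  have hgradc : Continuous (gradient V) := (gradient_contDiff hV).continuous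
  have hC0 : 0 ≤ C := le_trans (norm_nonneg _) (hCb 0)
  have hM0 : 0 ≤ M := le_trans (norm_nonneg _) (hM (φ 0) (hCb 0))
  set g : ℝ → ℝ := fun x => ⟪deriv φ x, deriv φ x⟫ with hgdef
  have hgval : ∀ x, g x = ‖deriv φ x‖^2 := fun x => real_inner_self_eq_norm_sq _
  have hgcont : Continuous g := hφ'c.inner hφ'c
  have hgnn : ∀ x, 0 ≤ g x := fun x => real_inner_self_nonneg
  set Efun : ℝ → ℝ := fun y => (1/2 : ℝ) * g y - V (φ y) with hEdef
  have hEd : ∀ x, HasDerivAt Efun (-c * g x) x := energy_hasDerivAt hV hφ hode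
  -- backwards linear bound on ‖φ'‖
  have hlin : ∀ x : ℝ, x ≤ 0 → ‖deriv φ x‖
      ≤ (2*c*C + (2*Efun 0 + 2*MV + 2*c*(C*‖deriv φ 0‖ + c*C^2)) + 1)
        + (2*c*(C*M)) * (-x) := by
    intro x hx
    -- FTC for energy
    have hEint : (∫ t in x..0, -c * g t) = Efun 0 - Efun x :=
      intervalIntegral.integral_eq_sub_of_hasDerivAt (fun t _ => hEd t)
        ((continuous_const.mul hgcont).intervalIntegrable x 0)
    have hIg : (∫ t in x..0, -c * g t) = -c * ∫ t in x..0, g t :=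
      intervalIntegral.integral_const_mul _ _
    set I := ∫ t in x..0, g t with hI
    have hEx : Efun x = Efun 0 + c * I := by
      rw [hIg] at hEint; linarith [hEint]
    have hInn : 0 ≤ I := intervalIntegral.integral_nonneg hx (fun t _ => hgnn t)
    -- FTC for ρ' : ∫ (2g + 2⟪φ,φ''⟫) = ρ'(0) - ρ'(x), with ρ' = 2⟪φ,φ'⟫
    have hρd : ∀ t, HasDerivAt (fun s => ⟪φ s, φ s⟫) (2 * ⟪φ t, deriv φ t⟫) t := by
      intro t
      have := HasDerivAt.inner ℝ (hφd t).hasDerivAt (hφd t).hasDerivAt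
      refine this.congr_deriv ?_
      rw [real_inner_comm (deriv φ t) (φ t)]
      ring
    have hρ'd : ∀ t, HasDerivAt (fun s => 2 * ⟪φ s, deriv φ s⟫)
        (2 * (g t + ⟪φ t, deriv (deriv φ) t⟫)) t := by
      intro t
      have := (HasDerivAt.inner ℝ (hφd t).hasDerivAt (hφ'd t).hasDerivAt).const_mul (2:ℝ)
      refine this.congr_deriv ?_
      simp only [hgdef]
      ring
    have hcont2 : Continuous (fun t => 2 * (g t + ⟪φ t, deriv (deriv φ) t⟫)) :=
      continuous_const.mul (hgcont.add ((hφd.continuous).inner hφ''c))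
    have hρint : (∫ t in x..0, 2 * (g t + ⟪φ t, deriv (deriv φ) t⟫))
        = 2 * ⟪φ 0, deriv φ 0⟫ - 2 * ⟪φ x, deriv φ x⟫ :=
      intervalIntegral.integral_eq_sub_of_hasDerivAt (fun t _ => hρ'd t)
        (hcont2.intervalIntegrable x 0)
    -- rewrite integrand using the ODE
    set h : ℝ → ℝ := fun t => ⟪φ t, gradient V (φ t)⟫ with hhdef
    have hcongr : ∀ t, 2 * (g t + ⟪φ t, deriv (deriv φ) t⟫)
        = 2 * g t + (-c * (2 * ⟪φ t, deriv φ t⟫) + 2 * h t) := by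
      intro t
      rw [hode t, inner_add_right, real_inner_smul_right]
      ring
    have hhc : Continuous h := (hφd.continuous).inner (hgradc.comp hφd.continuous)
    have hρc : Continuous (fun t => 2 * ⟪φ t, deriv φ t⟫) :=
      continuous_const.mul ((hφd.continuous).inner hφ'c)
    have hsplit : (∫ t in x..0, 2 * (g t + ⟪φ t, deriv (deriv φ) t⟫))
        = (∫ t in x..0, 2 * g t)
          + ((∫ t in x..0, -c * (2 * ⟪φ t, deriv φ t⟫)) + (∫ t in x..0, 2 * h t)) := by
      rw [← intervalIntegral.integral_add (f := fun t => -c * (2 * ⟪φ t, deriv φ t⟫)) (g := fun t => 2 * h t) ((continuous_const.mul hρc).intervalIntegrable x 0)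
        ((continuous_const.mul hhc).intervalIntegrable x 0),
        ← intervalIntegral.integral_add (f := fun t => 2 * g t) (g := fun t => -c * (2 * ⟪φ t, deriv φ t⟫) + 2 * h t) ((continuous_const.mul hgcont).intervalIntegrable x 0)
        (((continuous_const.mul hρc).add (continuous_const.mul hhc)).intervalIntegrable x 0)]
      exact intervalIntegral.integral_congr (fun t _ => hcongr t)
    -- FTC for ρ
    have hρFTC : (∫ t in x..0, 2 * ⟪φ t, deriv φ t⟫) = ⟪φ 0, φ 0⟫ - ⟪φ x, φ x⟫ :=
      intervalIntegral.integral_eq_sub_of_hasDerivAt (fun t _ => hρd t)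
        (hρc.intervalIntegrable x 0)
    -- bound on ∫ h
    have hIh : |∫ t in x..0, h t| ≤ C * M * (-x) := by
      have hb : ∀ t ∈ Set.uIoc x 0, ‖h t‖ ≤ C * M := by
        intro t _
        rw [Real.norm_eq_abs]
        calc |h t| ≤ ‖φ t‖ * ‖gradient V (φ t)‖ := abs_real_inner_le_norm _ _
          _ ≤ C * M := mul_le_mul (hCb t) (hM (φ t) (hCb t)) (norm_nonneg _) hC0
      have := intervalIntegral.norm_integral_le_of_norm_le_const hb
      rw [Real.norm_eq_abs] at this
      calc |∫ t in x..0, h t| ≤ C * M * |0 - x| := this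
        _ = C * M * (-x) := by rw [abs_of_nonneg (by linarith)]; ring
    -- assemble inequality  2I ≤ 2C u0' + 2C u + 2cC² + 2CM(-x)
    have hIg2 : (∫ t in x..0, 2 * g t) = 2 * I :=
      intervalIntegral.integral_const_mul _ _
    have hIρ : (∫ t in x..0, -c * (2 * ⟪φ t, deriv φ t⟫)) = -c * (⟪φ 0, φ 0⟫ - ⟪φ x, φ x⟫) := by
      rw [intervalIntegral.integral_const_mul, hρFTC]
    have hIh2 : (∫ t in x..0, 2 * h t) = 2 * ∫ t in x..0, h t :=
      intervalIntegral.integral_const_mul _ _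
    have hkey : 2 * I = 2 * ⟪φ 0, deriv φ 0⟫ - 2 * ⟪φ x, deriv φ x⟫
        + c * (⟪φ 0, φ 0⟫ - ⟪φ x, φ x⟫) - 2 * ∫ t in x..0, h t := by
      have := hsplit
      rw [hρint, hIg2, hIρ, hIh2] at this
      linarith
    have habs1 : |⟪φ 0, deriv φ 0⟫| ≤ C * ‖deriv φ 0‖ := by
      calc |⟪φ 0, deriv φ 0⟫| ≤ ‖φ 0‖ * ‖deriv φ 0‖ := abs_real_inner_le_norm _ _
        _ ≤ C * ‖deriv φ 0‖ := mul_le_mul_of_nonneg_right (hCb 0) (norm_nonneg _)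
    have habs2 : |⟪φ x, deriv φ x⟫| ≤ C * ‖deriv φ x‖ := by
      calc |⟪φ x, deriv φ x⟫| ≤ ‖φ x‖ * ‖deriv φ x‖ := abs_real_inner_le_norm _ _
        _ ≤ C * ‖deriv φ x‖ := mul_le_mul_of_nonneg_right (hCb x) (norm_nonneg _)
    have hρ0 : ⟪φ 0, φ 0⟫ ≤ C^2 := by
      rw [real_inner_self_eq_norm_sq]
      nlinarith [hCb 0, norm_nonneg (φ 0)]
    have hρx : (0:ℝ) ≤ ⟪φ x, φ x⟫ := real_inner_self_nonneg
    have hIbound : I ≤ C * ‖deriv φ x‖ + (C*‖deriv φ 0‖ + c*C^2) + (C*M) * (-x) := by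
      nlinarith [hkey, abs_le.1 habs1, abs_le.1 habs2, abs_le.1 hIh]
    -- g x ≤ 2 E0 + 2MV + 2cI
    have hgx : g x = 2 * (Efun x + V (φ x)) := by rw [hEdef]; ring
    have hVb := abs_le.1 (hMV (φ x) (hCb x))
    have hgb : g x ≤ 2 * Efun 0 + 2 * MV + 2 * c * I := by
      rw [hgx, hEx]; linarith
    -- quadratic inequality
    set u := ‖deriv φ x‖ with hu
    have hun : 0 ≤ u := norm_nonneg _
    have hgu : g x = u^2 := hgval x
    have hb0 : 0 ≤ 2*Efun 0 + 2*MV := by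
      have h00 : g 0 = 2 * (Efun 0 + V (φ 0)) := by rw [hEdef]; ring
      have := hgnn 0
      have := abs_le.1 (hMV (φ 0) (hCb 0))
      linarith
    have hA1 : 0 ≤ C*‖deriv φ 0‖ + c*C^2 := by positivity
    have hA2 : (0:ℝ) ≤ C*M := by positivity
    have hquad : u^2 ≤ (2*c*C) * u
        + ((2*Efun 0 + 2*MV + 2*c*(C*‖deriv φ 0‖ + c*C^2)) + (2*c*(C*M))*(-x)) := by
      rw [← hgu]
      nlinarith [hIbound, hgb]
    by_contra hcon
    push_neg at hcon
    have hxn : 0 ≤ -x := by linarith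
    have hK2x : 0 ≤ 2*c*(C*M)*(-x) := mul_nonneg (by positivity) hxn
    have hu0 : 0 < u := by nlinarith
    have hu1 : 1 ≤ u := by nlinarith
    have hb : 0 ≤ (2*Efun 0 + 2*MV + 2*c*(C*‖deriv φ 0‖ + c*C^2)) + 2*c*(C*M)*(-x) := by
      nlinarith [hb0, hA1, hc.le]
    have hprod := mul_lt_mul_of_pos_right hcon hu0
    nlinarith [hquad, hprod, hu1, hb,
      le_mul_of_one_le_right hb hu1]
  -- now conclude via Duhamel
  have hduh := duhamel hV hc hφ hode hCb hM
  intro x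
  rcases le_or_gt 0 x with hx | hx
  · have := hduh 0 x hx
    have h1 : exp (c*(0-x)) ≤ 1 := by
      rw [exp_le_one_iff]
      nlinarith
    nlinarith [norm_nonneg (deriv φ 0), exp_pos (c*(0-x)), this,
      mul_le_mul_of_nonneg_right h1 (norm_nonneg (deriv φ 0))]
  · -- x < 0 : take a → -∞ in Duhamel
    obtain ⟨K₁, hK₁⟩ : ∃ t : ℝ, t = (2*c*C + (2*Efun 0 + 2*MV + 2*c*(C*‖deriv φ 0‖ + c*C^2)) + 1) :=
      ⟨_, rfl⟩
    obtain ⟨K₂, hK₂⟩ : ∃ t : ℝ, t = (2*c*(C*M)) := ⟨_, rfl⟩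
    have hlin' : ∀ y : ℝ, y ≤ 0 → ‖deriv φ y‖ ≤ K₁ + K₂*(-y) := by
      intro y hy
      rw [hK₁, hK₂]
      exact hlin y hy
    have hev : ∀ a : ℝ, a ≤ x → ‖deriv φ x‖ ≤ exp (c*(a-x)) * (K₁ + K₂*(-a)) + M/c := by
      intro a ha
      have h1 := hduh a x ha
      have h2 := hlin' a (by linarith)
      calc ‖deriv φ x‖ ≤ exp (c*(a-x)) * ‖deriv φ a‖ + M/c := h1
        _ ≤ exp (c*(a-x)) * (K₁ + K₂*(-a)) + M/c := by
            have := mul_le_mul_of_nonneg_left h2 (exp_pos (c*(a-x))).le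
            linarith
    -- the RHS tends to M/c as a → -∞
    have hten : Tendsto (fun a : ℝ => exp (c*(a-x)) * (K₁ + K₂*(-a)) + M/c)
        atBot (𝓝 (0 + M/c)) := by
      apply Tendsto.add _ tendsto_const_nhds
      have hF : Tendsto (fun t : ℝ => exp (-(c*x)) *
          (K₁ * exp (-(c*t)) + K₂ * (t * exp (-(c*t))))) atTop (𝓝 (exp (-(c*x)) * (K₁*0 + K₂*0))) := by
        apply Tendsto.const_mul
        apply Tendsto.add
        · apply Tendsto.const_mul
          have hnt : Tendsto (fun t : ℝ => -(c*t)) atTop atBot :=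
            tendsto_neg_atTop_atBot.comp (Tendsto.const_mul_atTop hc tendsto_id)
          exact tendsto_exp_atBot.comp hnt
        · apply Tendsto.const_mul
          have h3 : Tendsto (fun s : ℝ => s ^ 1 * exp (-s)) atTop (𝓝 0) :=
            tendsto_pow_mul_exp_neg_atTop_nhds_zero 1
          have h4 : Tendsto (fun t : ℝ => c * t) atTop atTop :=
            Tendsto.const_mul_atTop hc tendsto_id
          have h5 := (h3.comp h4).const_mul (1/c)
          simp only [Function.comp] at h5
          have h6 : (fun t : ℝ => (1/c) * ((c*t)^1 * exp (-(c*t)))) = fun t : ℝ => t * exp (-(c*t)) := by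
            funext t
            field_simp
          rw [h6] at h5
          simpa using h5
      have hF0 : Tendsto (fun t : ℝ => exp (-(c*x)) *
          (K₁ * exp (-(c*t)) + K₂ * (t * exp (-(c*t))))) atTop (𝓝 0) := by
        simpa using hF
      have hfun : (fun a : ℝ => exp (c*(a-x)) * (K₁ + K₂*(-a)))
          = (fun t : ℝ => exp (-(c*x)) * (K₁ * exp (-(c*t)) + K₂ * (t * exp (-(c*t))))) ∘ Neg.neg := by
        funext a
        simp only [Function.comp_apply]
        rw [show c*(a-x) = -(c*(-a)) + -(c*x) from by ring, exp_add]
        ring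
      rw [hfun]
      exact hF0.comp tendsto_neg_atBot_atTop
    rw [zero_add] at hten
    have hMc : M/c ≤ ‖deriv φ 0‖ + M/c := by linarith [norm_nonneg (deriv φ 0)]
    refine le_trans (ge_of_tendsto hten ?_) hMc
    filter_upwards [eventually_le_atBot x] with a ha
    exact hev a ha
set_option maxHeartbeats 1000000 in
/-- The derivative of a bounded solution tends to `0` at `±∞`. -/
lemma deriv_tendsto_zero {V : EuclideanSpace ℝ (Fin n) → ℝ} (hV : ContDiff ℝ 2 V) {c : ℝ}
    (hc : 0 < c) {φ : ℝ → EuclideanSpace ℝ (Fin n)} (hφ : ContDiff ℝ 2 φ)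
    (hode : ∀ x, deriv (deriv φ) x = (-c) • deriv φ x + gradient V (φ x))
    {C M MV : ℝ} (hCb : ∀ x, ‖φ x‖ ≤ C)
    (hM : ∀ u : EuclideanSpace ℝ (Fin n), ‖u‖ ≤ C → ‖gradient V u‖ ≤ M)
    (hMV : ∀ u : EuclideanSpace ℝ (Fin n), ‖u‖ ≤ C → |V u| ≤ MV) :
    Tendsto (fun x => ‖deriv φ x‖) atTop (𝓝 0) ∧
      Tendsto (fun x => ‖deriv φ x‖) atBot (𝓝 0) := by
  have hφd : Differentiable ℝ φ := hφ.differentiable (by norm_num)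
  obtain ⟨hφ'd, hφ''c⟩ := deriv_differentiable hφ
  have hφ'c : Continuous (deriv φ) := hφ'd.continuous
  have hM0 : 0 ≤ M := le_trans (norm_nonneg _) (hM (φ 0) (hCb 0))
  obtain ⟨D, hD, hD0⟩ : ∃ D, (∀ x, ‖deriv φ x‖ ≤ D) ∧ 0 ≤ D :=
    ⟨‖deriv φ 0‖ + M/c, deriv_global_bound hV hc hφ hode hCb hM hMV,
      by positivity⟩
  set g : ℝ → ℝ := fun x => ⟪deriv φ x, deriv φ x⟫ with hgdef
  have hgval : ∀ x, g x = ‖deriv φ x‖^2 := fun x => real_inner_self_eq_norm_sq _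
  have hgcont : Continuous g := hφ'c.inner hφ'c
  have hgnn : ∀ x, 0 ≤ g x := fun x => real_inner_self_nonneg
  have hgb : ∀ x, g x ≤ D^2 := by
    intro x
    rw [hgval]
    nlinarith [hD x, norm_nonneg (deriv φ x)]
  set Efun : ℝ → ℝ := fun y => (1/2 : ℝ) * g y - V (φ y) with hEdef
  have hEd : ∀ x, HasDerivAt Efun (-c * g x) x := energy_hasDerivAt hV hφ hode
  have hEanti : Antitone Efun := by
    apply antitone_of_deriv_nonpos (fun x => (hEd x).differentiableAt)
    intro x
    rw [(hEd x).deriv]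
    have := hgnn x
    nlinarith
  have hEb : ∀ x, |Efun x| ≤ (1/2)*D^2 + MV := by
    intro x
    have h1 := abs_le.1 (hMV (φ x) (hCb x))
    have h2 := hgb x
    have h3 := hgnn x
    rw [hEdef, abs_le]
    constructor <;> simp only <;> nlinarith
  -- derivative bound for g
  have hgd : ∀ x, HasDerivAt g (⟪deriv φ x, deriv (deriv φ) x⟫
      + ⟪deriv (deriv φ) x, deriv φ x⟫) x :=
    fun x => HasDerivAt.inner ℝ (hφ'd x).hasDerivAt (hφ'd x).hasDerivAt
  obtain ⟨L, hL1, hLb⟩ : ∃ L : ℝ, 0 < L ∧ ∀ x, |⟪deriv φ x, deriv (deriv φ) x⟫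
      + ⟪deriv (deriv φ) x, deriv φ x⟫| ≤ L := by
    refine ⟨2*(c*D+M)*D + 1, by positivity, ?_⟩
    intro x
    have h1 : ‖deriv (deriv φ) x‖ ≤ c*D + M := by
      rw [hode x]
      calc ‖(-c) • deriv φ x + gradient V (φ x)‖
          ≤ ‖(-c) • deriv φ x‖ + ‖gradient V (φ x)‖ := norm_add_le _ _
        _ ≤ c*D + M := by
            rw [norm_smul, Real.norm_eq_abs, abs_neg, abs_of_pos hc]
            have := mul_le_mul_of_nonneg_left (hD x) hc.le
            have := hM (φ x) (hCb x)
            linarith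
    have h2 : |⟪deriv φ x, deriv (deriv φ) x⟫| ≤ D * (c*D+M) := by
      calc |⟪deriv φ x, deriv (deriv φ) x⟫| ≤ ‖deriv φ x‖ * ‖deriv (deriv φ) x‖ :=
            abs_real_inner_le_norm _ _
        _ ≤ D * (c*D+M) := mul_le_mul (hD x) h1 (norm_nonneg _) hD0
    have h3 : |⟪deriv (deriv φ) x, deriv φ x⟫| ≤ (c*D+M) * D := by
      calc |⟪deriv (deriv φ) x, deriv φ x⟫| ≤ ‖deriv (deriv φ) x‖ * ‖deriv φ x‖ :=
            abs_real_inner_le_norm _ _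
        _ ≤ (c*D+M) * D := mul_le_mul h1 (hD x) (norm_nonneg _) (by positivity)
    calc |⟪deriv φ x, deriv (deriv φ) x⟫ + ⟪deriv (deriv φ) x, deriv φ x⟫|
        ≤ |⟪deriv φ x, deriv (deriv φ) x⟫| + |⟪deriv (deriv φ) x, deriv φ x⟫| := abs_add_le _ _
      _ ≤ 2*(c*D+M)*D + 1 := by nlinarith
  -- limits of the energy
  have hbdd_below : BddBelow (Set.range Efun) := by
    refine ⟨-((1/2)*D^2 + MV), ?_⟩
    rintro y ⟨x, rfl⟩
    linarith [abs_le.1 (hEb x) |>.1]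
  have hbdd_above : BddAbove (Set.range Efun) := by
    refine ⟨(1/2)*D^2 + MV, ?_⟩
    rintro y ⟨x, rfl⟩
    linarith [abs_le.1 (hEb x) |>.2]
  have hEtop : Tendsto Efun atTop (𝓝 (⨅ x, Efun x)) := tendsto_atTop_ciInf hEanti hbdd_below
  have hEbot : Tendsto Efun atBot (𝓝 (⨆ x, Efun x)) := tendsto_atBot_ciSup hEanti hbdd_above
  have hEinf_le : ∀ x, (⨅ y, Efun y) ≤ Efun x := fun x => ciInf_le hbdd_below x
  have hEsup_ge : ∀ x, Efun x ≤ (⨆ y, Efun y) := fun x => le_ciSup hbdd_above x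
  -- FTC for energy differences
  have hEFTC : ∀ a b : ℝ, (∫ t in a..b, -c * g t) = Efun b - Efun a := fun a b =>
    intervalIntegral.integral_eq_sub_of_hasDerivAt (fun t _ => hEd t)
      ((continuous_const.mul hgcont).intervalIntegrable a b)
  clear_value g Efun
  have hgtend : Tendsto g atTop (𝓝 0) := by
    rw [Metric.tendsto_nhds]
    intro ε hε
    by_contra hcon
    rw [Filter.not_eventually] at hcon
    have hfreq : ∃ᶠ x in atTop, ε ≤ g x := by
      apply hcon.mono
      intro x hx
      rw [Real.dist_eq, not_lt, abs_of_nonneg (by linarith [hgnn x] : (0:ℝ) ≤ g x - 0)] at hx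
      linarith
    obtain ⟨η, hη0, hηL⟩ : ∃ η : ℝ, 0 < η ∧ L * η ≤ ε/2 :=
      ⟨ε/(2*L), by positivity, by rw [mul_div_assoc']; rw [div_le_div_iff₀ (by positivity) (by norm_num)]; ring_nf; nlinarith⟩
    have hev : ∀ᶠ x in atTop, Efun x - (⨅ y, Efun y) < c*(ε/2)*η := by
      have h1 : Tendsto (fun x => Efun x - (⨅ y, Efun y)) atTop (𝓝 0) := by
        simpa using hEtop.sub (tendsto_const_nhds (x := ⨅ y, Efun y))
      have := h1.eventually_lt_const (by positivity : (0:ℝ) < c*(ε/2)*η)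
      exact this
    obtain ⟨x, hx1, hx2⟩ := (hfreq.and_eventually hev).exists
    -- on [x, x+η], g ≥ ε/2
    have hglow : ∀ y ∈ Set.Icc x (x+η), ε/2 ≤ g y := by
      intro y hy
      have hw : MonotoneOn (fun y => g y + L * y) (Set.Icc x (x+η)) := by
        apply monotoneOn_of_deriv_nonneg (convex_Icc _ _)
        · exact (hgcont.add (continuous_const.mul continuous_id)).continuousOn
        · intro z _
          exact ((hgd z).differentiableAt.add
            ((differentiableAt_id.const_mul L))).differentiableWithinAt
        · intro z _
          have hd : HasDerivAt (fun y => g y + L * y)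
              ((⟪deriv φ z, deriv (deriv φ) z⟫ + ⟪deriv (deriv φ) z, deriv φ z⟫) + L) z := by
            have h5 : HasDerivAt (fun y : ℝ => L * y) L z := by
              simpa using (hasDerivAt_id z).const_mul L
            exact (hgd z).add h5
          rw [hd.deriv]
          linarith [abs_le.1 (hLb z) |>.1]
      have := hw (Set.left_mem_Icc.2 (by linarith)) hy hy.1
      simp only at this
      have hyx : y - x ≤ η := by linarith [hy.2]
      have hLyx : L * (y - x) ≤ L * η := mul_le_mul_of_nonneg_left hyx hL1.le
      nlinarith [hx1]
    -- energy drop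
    have hdrop : c*(ε/2)*η ≤ Efun x - Efun (x+η) := by
      have h1 := hEFTC x (x+η)
      have h2 : (∫ t in x..(x+η), c * (ε/2)) ≤ ∫ t in x..(x+η), c * g t := by
        apply intervalIntegral.integral_mono_on (by linarith)
          (intervalIntegrable_const) ((continuous_const.mul hgcont).intervalIntegrable _ _)
        intro t ht
        exact mul_le_mul_of_nonneg_left (hglow t ht) hc.le
      rw [intervalIntegral.integral_const] at h2
      have h3 : (∫ t in x..(x+η), c * g t) = - ∫ t in x..(x+η), -c * g t := by
        rw [← intervalIntegral.integral_neg]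
        congr 1
        funext t
        ring
      rw [h3, h1] at h2
      have h4 : (x + η - x) • (c * (ε/2)) = c*(ε/2)*η := by
        simp [smul_eq_mul]
        ring
      rw [h4] at h2
      linarith
    have h5 := hEinf_le (x+η)
    linarith
  have hgbot : Tendsto g atBot (𝓝 0) := by
    rw [Metric.tendsto_nhds]
    intro ε hε
    by_contra hcon
    rw [Filter.not_eventually] at hcon
    have hfreq : ∃ᶠ x in atBot, ε ≤ g x := by
      apply hcon.mono
      intro x hx
      rw [Real.dist_eq, not_lt, abs_of_nonneg (by linarith [hgnn x] : (0:ℝ) ≤ g x - 0)] at hx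
      linarith
    obtain ⟨η, hη0, hηL⟩ : ∃ η : ℝ, 0 < η ∧ L * η ≤ ε/2 :=
      ⟨ε/(2*L), by positivity, by rw [mul_div_assoc']; rw [div_le_div_iff₀ (by positivity) (by norm_num)]; ring_nf; nlinarith⟩
    have hev : ∀ᶠ x in atBot, (⨆ y, Efun y) - Efun x < c*(ε/2)*η := by
      have h1 : Tendsto (fun x => (⨆ y, Efun y) - Efun x) atBot (𝓝 0) := by
        simpa using (tendsto_const_nhds (x := ⨆ y, Efun y)).sub hEbot
      exact h1.eventually_lt_const (by positivity : (0:ℝ) < c*(ε/2)*η)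
    obtain ⟨x, hx1, hx2⟩ := (hfreq.and_eventually hev).exists
    -- on [x-η, x], g ≥ ε/2
    have hglow : ∀ y ∈ Set.Icc (x-η) x, ε/2 ≤ g y := by
      intro y hy
      have hw : AntitoneOn (fun y => g y - L * y) (Set.Icc (x-η) x) := by
        apply antitoneOn_of_deriv_nonpos (convex_Icc _ _)
        · exact (hgcont.sub (continuous_const.mul continuous_id)).continuousOn
        · intro z _
          exact ((hgd z).differentiableAt.sub
            ((differentiableAt_id.const_mul L))).differentiableWithinAt
        · intro z _
          have hd : HasDerivAt (fun y => g y - L * y)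
              ((⟪deriv φ z, deriv (deriv φ) z⟫ + ⟪deriv (deriv φ) z, deriv φ z⟫) - L) z := by
            have h5 : HasDerivAt (fun y : ℝ => L * y) L z := by
              simpa using (hasDerivAt_id z).const_mul L
            exact (hgd z).sub h5
          rw [hd.deriv]
          linarith [abs_le.1 (hLb z) |>.2]
      have := hw hy (Set.right_mem_Icc.2 (by linarith)) hy.2
      simp only at this
      have hyx : x - y ≤ η := by linarith [hy.1]
      have hLyx : L * (x - y) ≤ L * η := mul_le_mul_of_nonneg_left hyx hL1.le
      nlinarith [hx1]
    have hdrop : c*(ε/2)*η ≤ Efun (x-η) - Efun x := by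
      have h1 := hEFTC (x-η) x
      have h2 : (∫ t in (x-η)..x, c * (ε/2)) ≤ ∫ t in (x-η)..x, c * g t := by
        apply intervalIntegral.integral_mono_on (by linarith)
          (intervalIntegrable_const) ((continuous_const.mul hgcont).intervalIntegrable _ _)
        intro t ht
        exact mul_le_mul_of_nonneg_left (hglow t ht) hc.le
      rw [intervalIntegral.integral_const] at h2
      have h3 : (∫ t in (x-η)..x, c * g t) = - ∫ t in (x-η)..x, -c * g t := by
        rw [← intervalIntegral.integral_neg]
        congr 1
        funext t
        ring
      rw [h3, h1] at h2
      have h4 : (x - (x-η)) • (c * (ε/2)) = c*(ε/2)*η := by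
        simp [smul_eq_mul]
        ring
      rw [h4] at h2
      linarith
    have h5 := hEsup_ge (x-η)
    linarith
  -- conclude for the norm
  have hnorm : ∀ x, ‖deriv φ x‖ = Real.sqrt (g x) := by
    intro x
    rw [hgval, Real.sqrt_sq (norm_nonneg _)]
  constructor
  · have := (Real.continuous_sqrt.tendsto 0).comp hgtend
    simp only [Function.comp, Real.sqrt_zero] at this
    exact this.congr (fun x => (hnorm x).symm)
  · have := (Real.continuous_sqrt.tendsto 0).comp hgbot
    simp only [Function.comp, Real.sqrt_zero] at this
    exact this.congr (fun x => (hnorm x).symm)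
set_option maxHeartbeats 1000000 in
/-- The gradient along a bounded solution tends to `0` at `±∞`. -/
lemma grad_tendsto_zero {V : EuclideanSpace ℝ (Fin n) → ℝ} (hV : ContDiff ℝ 2 V) {c : ℝ}
    (hc : 0 < c) {φ : ℝ → EuclideanSpace ℝ (Fin n)} (hφ : ContDiff ℝ 2 φ)
    (hode : ∀ x, deriv (deriv φ) x = (-c) • deriv φ x + gradient V (φ x))
    {C M MV MH : ℝ} (hCb : ∀ x, ‖φ x‖ ≤ C)
    (hM : ∀ u : EuclideanSpace ℝ (Fin n), ‖u‖ ≤ C → ‖gradient V u‖ ≤ M)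
    (hMV : ∀ u : EuclideanSpace ℝ (Fin n), ‖u‖ ≤ C → |V u| ≤ MV)
    (hMH : ∀ u : EuclideanSpace ℝ (Fin n), ‖u‖ ≤ C → ‖fderiv ℝ (gradient V) u‖ ≤ MH) :
    Tendsto (fun x => gradient V (φ x)) atTop (𝓝 0) ∧
      Tendsto (fun x => gradient V (φ x)) atBot (𝓝 0) := by
  have hφd : Differentiable ℝ φ := hφ.differentiable (by norm_num)
  obtain ⟨hφ'd, hφ''c⟩ := deriv_differentiable hφ
  have hM0 : 0 ≤ M := le_trans (norm_nonneg _) (hM (φ 0) (hCb 0))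
  obtain ⟨D, hD, hD0⟩ : ∃ D, (∀ x, ‖deriv φ x‖ ≤ D) ∧ 0 ≤ D :=
    ⟨‖deriv φ 0‖ + M/c, deriv_global_bound hV hc hφ hode hCb hM hMV, by positivity⟩
  have hMH0 : 0 ≤ MH := le_trans (norm_nonneg _) (hMH (φ 0) (hCb 0))
  obtain ⟨htop, hbot⟩ := deriv_tendsto_zero hV hc hφ hode hCb hM hMV
  set ψ : ℝ → EuclideanSpace ℝ (Fin n) := deriv (deriv φ) with hψdef
  -- ψ' exists and is bounded by K
  have hgrad1 : ContDiff ℝ 1 (gradient V) := gradient_contDiff hV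
  have hψeq : ψ = fun t => (-c) • deriv φ t + gradient V (φ t) := funext hode
  have hψd : ∀ t, HasDerivAt ψ
      ((-c) • deriv (deriv φ) t + (fderiv ℝ (gradient V) (φ t)) (deriv φ t)) t := by
    intro t
    rw [hψeq]
    have h1 : HasDerivAt (fun s => (-c) • deriv φ s) ((-c) • deriv (deriv φ) t) t :=
      ((hφ'd t).hasDerivAt).const_smul (-c)
    have h2 : HasFDerivAt (gradient V) (fderiv ℝ (gradient V) (φ t)) (φ t) :=
      ((hgrad1.differentiable one_ne_zero) (φ t)).hasFDerivAt
    have h3 : HasDerivAt (fun s => gradient V (φ s))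
        ((fderiv ℝ (gradient V) (φ t)) (deriv φ t)) t :=
      h2.comp_hasDerivAt t (hφd t).hasDerivAt
    exact h1.add h3
  obtain ⟨K, hK0, hKb⟩ : ∃ K : ℝ, 0 < K ∧ ∀ t,
      ‖(-c) • deriv (deriv φ) t + (fderiv ℝ (gradient V) (φ t)) (deriv φ t)‖ ≤ K := by
    refine ⟨c*(c*D+M) + MH*D + 1, by positivity, ?_⟩
    intro t
    have hψb : ‖deriv (deriv φ) t‖ ≤ c*D + M := by
      rw [← hψdef, hode t]
      calc ‖(-c) • deriv φ t + gradient V (φ t)‖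
          ≤ ‖(-c) • deriv φ t‖ + ‖gradient V (φ t)‖ := norm_add_le _ _
        _ ≤ c*D + M := by
            rw [norm_smul, Real.norm_eq_abs, abs_neg, abs_of_pos hc]
            have := mul_le_mul_of_nonneg_left (hD t) hc.le
            have := hM (φ t) (hCb t)
            linarith
    calc ‖(-c) • deriv (deriv φ) t + (fderiv ℝ (gradient V) (φ t)) (deriv φ t)‖
        ≤ ‖(-c) • deriv (deriv φ) t‖ + ‖(fderiv ℝ (gradient V) (φ t)) (deriv φ t)‖ :=
          norm_add_le _ _
      _ ≤ c*(c*D+M) + MH*D + 1 := by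
          rw [norm_smul, Real.norm_eq_abs, abs_neg, abs_of_pos hc]
          have h4 : ‖(fderiv ℝ (gradient V) (φ t)) (deriv φ t)‖
              ≤ ‖fderiv ℝ (gradient V) (φ t)‖ * ‖deriv φ t‖ :=
            (fderiv ℝ (gradient V) (φ t)).le_opNorm _
          have h5 : ‖fderiv ℝ (gradient V) (φ t)‖ * ‖deriv φ t‖ ≤ MH * D :=
            mul_le_mul (hMH (φ t) (hCb t)) (hD t) (norm_nonneg _) hMH0
          have h6 := mul_le_mul_of_nonneg_left hψb hc.le
          linarith
  -- Landau-type estimate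
  have hLandau : ∀ x h : ℝ, 0 < h →
      ‖ψ x‖ ≤ (‖deriv φ (x+h)‖ + ‖deriv φ x‖)/h + K*h := by
    intro x h hh
    have hFTC : ∫ t in x..(x+h), ψ t = deriv φ (x+h) - deriv φ x :=
      intervalIntegral.integral_eq_sub_of_hasDerivAt
        (fun t _ => (hφ'd t).hasDerivAt) (hφ''c.intervalIntegrable _ _)
    have hconst : ∫ t in x..(x+h), ψ x = h • ψ x := by
      rw [intervalIntegral.integral_const]
      congr 1
      ring
    have hsub : (∫ t in x..(x+h), ψ t - ψ x)
        = (deriv φ (x+h) - deriv φ x) - h • ψ x := by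
      rw [intervalIntegral.integral_sub (hφ''c.intervalIntegrable _ _)
        (intervalIntegrable_const), hFTC, hconst]
    have hψlip : ∀ t ∈ Set.uIoc x (x+h), ‖ψ t - ψ x‖ ≤ K * h := by
      intro t ht
      rw [Set.uIoc_of_le (by linarith)] at ht
      have hIcc : Convex ℝ (Set.Icc x (x+h)) := convex_Icc _ _
      have := hIcc.norm_image_sub_le_of_norm_hasDerivWithin_le
        (fun s hs => (hψd s).hasDerivWithinAt) (fun s _ => hKb s)
        (Set.left_mem_Icc.2 (by linarith)) (Set.mem_Icc.2 ⟨ht.1.le, ht.2⟩)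
      calc ‖ψ t - ψ x‖ ≤ K * |t - x| := this
        _ ≤ K * h := by
            apply mul_le_mul_of_nonneg_left _ hK0.le
            rw [abs_of_nonneg (by linarith [ht.1.le] : (0:ℝ) ≤ t - x)]
            linarith [ht.2]
    have hbnd : ‖(deriv φ (x+h) - deriv φ x) - h • ψ x‖ ≤ (K*h) * |x + h - x| := by
      rw [← hsub]
      exact intervalIntegral.norm_integral_le_of_norm_le_const hψlip
    have habs : |x + h - x| = h := by rw [show x + h - x = h from by ring, abs_of_pos hh]
    rw [habs] at hbnd
    have htri : h * ‖ψ x‖ - (‖deriv φ (x+h)‖ + ‖deriv φ x‖) ≤ K*h*h := by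
      have h1 : ‖h • ψ x‖ - ‖deriv φ (x+h) - deriv φ x‖
          ≤ ‖(deriv φ (x+h) - deriv φ x) - h • ψ x‖ := by
        rw [norm_sub_rev ((deriv φ (x+h) - deriv φ x)) (h • ψ x)]
        exact norm_sub_norm_le _ _
      have h2 : ‖h • ψ x‖ = h * ‖ψ x‖ := by
        rw [norm_smul, Real.norm_eq_abs, abs_of_pos hh]
      have h3 : ‖deriv φ (x+h) - deriv φ x‖ ≤ ‖deriv φ (x+h)‖ + ‖deriv φ x‖ :=
        norm_sub_le _ _
      nlinarith [hbnd]
    have hdiv : ‖ψ x‖ ≤ ((‖deriv φ (x+h)‖ + ‖deriv φ x‖) + K*h*h)/h := by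
      rw [le_div_iff₀ hh]
      nlinarith [htri]
    calc ‖ψ x‖ ≤ ((‖deriv φ (x+h)‖ + ‖deriv φ x‖) + K*h*h)/h := hdiv
      _ = (‖deriv φ (x+h)‖ + ‖deriv φ x‖)/h + K*h := by
          field_simp
  -- ψ → 0 at ±∞
  have hψtop : Tendsto ψ atTop (𝓝 0) := by
    rw [tendsto_zero_iff_norm_tendsto_zero, Metric.tendsto_nhds]
    intro ε hε
    set h := ε/(2*K) with hhdef
    have hh0 : 0 < h := by positivity
    have hKh : K*h ≤ ε/2 := by
      rw [hhdef]
      rw [mul_div_assoc']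
      rw [div_le_div_iff₀ (by positivity) (by norm_num)]
      ring_nf
      nlinarith
    have hev : ∀ᶠ y in atTop, ‖deriv φ y‖ < ε*h/8 := by
      have := htop.eventually_lt_const (by positivity : (0:ℝ) < ε*h/8)
      exact this
    rw [eventually_atTop] at hev ⊢
    obtain ⟨X, hX⟩ := hev
    refine ⟨X, fun x hx => ?_⟩
    have h1 := hX x hx
    have h2 := hX (x+h) (by linarith)
    have h3 := hLandau x h hh0
    rw [Real.dist_eq, sub_zero, abs_of_nonneg (norm_nonneg _)]
    have h4 : (‖deriv φ (x+h)‖ + ‖deriv φ x‖)/h < ε/4 := by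
      rw [div_lt_iff₀ hh0]
      nlinarith
    calc ‖ψ x‖ ≤ (‖deriv φ (x+h)‖ + ‖deriv φ x‖)/h + K*h := h3
      _ < ε/4 + ε/2 := by linarith
      _ < ε := by linarith
  have hψbot : Tendsto ψ atBot (𝓝 0) := by
    rw [tendsto_zero_iff_norm_tendsto_zero, Metric.tendsto_nhds]
    intro ε hε
    set h := ε/(2*K) with hhdef
    have hh0 : 0 < h := by positivity
    have hKh : K*h ≤ ε/2 := by
      rw [hhdef]
      rw [mul_div_assoc']
      rw [div_le_div_iff₀ (by positivity) (by norm_num)]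
      ring_nf
      nlinarith
    have hev : ∀ᶠ y in atBot, ‖deriv φ y‖ < ε*h/8 := by
      exact hbot.eventually_lt_const (by positivity : (0:ℝ) < ε*h/8)
    rw [eventually_atBot] at hev ⊢
    obtain ⟨X, hX⟩ := hev
    refine ⟨X - h, fun x hx => ?_⟩
    have h1 := hX x (by linarith)
    have h2 := hX (x+h) (by linarith)
    have h3 := hLandau x h hh0
    rw [Real.dist_eq, sub_zero, abs_of_nonneg (norm_nonneg _)]
    have h4 : (‖deriv φ (x+h)‖ + ‖deriv φ x‖)/h < ε/4 := by
      rw [div_lt_iff₀ hh0]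
      nlinarith
    calc ‖ψ x‖ ≤ (‖deriv φ (x+h)‖ + ‖deriv φ x‖)/h + K*h := h3
      _ < ε/4 + ε/2 := by linarith
      _ < ε := by linarith
  -- conclude : ∇V(φ) = ψ + c • φ'
  have heq : (fun x => gradient V (φ x)) = fun x => ψ x + c • deriv φ x := by
    funext x
    rw [hode x]
    module
  constructor
  · rw [heq]
    have h1 : Tendsto (fun x => c • deriv φ x) atTop (𝓝 0) := by
      have h2 : Tendsto (deriv φ) atTop (𝓝 0) := by
        rw [tendsto_zero_iff_norm_tendsto_zero]
        exact htop
      simpa using h2.const_smul c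
    simpa using hψtop.add h1
  · rw [heq]
    have h1 : Tendsto (fun x => c • deriv φ x) atBot (𝓝 0) := by
      have h2 : Tendsto (deriv φ) atBot (𝓝 0) := by
        rw [tendsto_zero_iff_norm_tendsto_zero]
        exact hbot
      simpa using h2.const_smul c
    simpa using hψbot.add h1
/-- Nondegenerate critical points are isolated. -/
lemma crit_isolated {V : EuclideanSpace ℝ (Fin n) → ℝ} (hV : ContDiff ℝ 2 V)
    (hnd : ∀ u : EuclideanSpace ℝ (Fin n), gradient V u = 0 →
      ∀ w : EuclideanSpace ℝ (Fin n), w ≠ 0 → fderiv ℝ (gradient V) u w ≠ 0) :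
    ∀ z : EuclideanSpace ℝ (Fin n), gradient V z = 0 →
      ∃ r > (0:ℝ), ∀ u, dist u z < r → gradient V u = 0 → u = z := by
  intro z hz
  have h1 : ContDiffAt ℝ 1 (gradient V) z := (gradient_contDiff hV).contDiffAt
  set J := fderiv ℝ (gradient V) z with hJ
  have hinj : Function.Injective J := by
    intro a b hab
    by_contra hne
    have hsub : a - b ≠ 0 := sub_ne_zero.2 hne
    have h2 := hnd z hz (a-b) hsub
    rw [map_sub, hab, sub_self] at h2
    exact h2 rfl
  have hbij : Function.Bijective (J : EuclideanSpace ℝ (Fin n) →ₗ[ℝ] EuclideanSpace ℝ (Fin n)) :=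
    ⟨hinj, LinearMap.injective_iff_surjective.1 hinj⟩
  set Jeq := LinearEquiv.ofBijective
    (J : EuclideanSpace ℝ (Fin n) →ₗ[ℝ] EuclideanSpace ℝ (Fin n)) hbij with hJeq
  set Jc := Jeq.toContinuousLinearEquiv with hJc
  have hcoe : (Jc : EuclideanSpace ℝ (Fin n) →L[ℝ] EuclideanSpace ℝ (Fin n)) = J := by
    refine ContinuousLinearMap.ext fun w => ?_
    have := Jeq.coe_toContinuousLinearEquiv'
    calc (Jc : EuclideanSpace ℝ (Fin n) →L[ℝ] EuclideanSpace ℝ (Fin n)) w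
        = Jeq w := by rw [hJc]; exact congrFun this w
      _ = J w := rfl
  have hstrict : HasStrictFDerivAt (gradient V)
      (Jc : EuclideanSpace ℝ (Fin n) →L[ℝ] EuclideanSpace ℝ (Fin n)) z := by
    rw [hcoe]
    exact h1.hasStrictFDerivAt one_ne_zero
  have hev := hstrict.eventually_left_inverse
  rw [Metric.eventually_nhds_iff] at hev
  obtain ⟨r, hr0, hr⟩ := hev
  refine ⟨r, hr0, fun u hu hgu => ?_⟩
  have h2 := hr (show dist u z < r from hu)
  have h3 := hr (show dist z z < r by simpa using hr0)
  rw [hgu] at h2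
  rw [hz] at h3
  exact h2.symm.trans h3

/-- The set of critical points in a ball is finite. -/
lemma crit_finite {V : EuclideanSpace ℝ (Fin n) → ℝ} (hV : ContDiff ℝ 2 V)
    (hnd : ∀ u : EuclideanSpace ℝ (Fin n), gradient V u = 0 →
      ∀ w : EuclideanSpace ℝ (Fin n), w ≠ 0 → fderiv ℝ (gradient V) u w ≠ 0)
    (C : ℝ) :
    {u : EuclideanSpace ℝ (Fin n) | ‖u‖ ≤ C ∧ gradient V u = 0}.Finite := by
  set Z := {u : EuclideanSpace ℝ (Fin n) | ‖u‖ ≤ C ∧ gradient V u = 0} with hZ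
  have hgradc : Continuous (gradient V) := (gradient_contDiff hV).continuous
  have hclosed : IsClosed Z := by
    have : Z = {u : EuclideanSpace ℝ (Fin n) | ‖u‖ ≤ C} ∩ (gradient V) ⁻¹' {0} := by
      ext u; simp [hZ]
    rw [this]
    exact (isClosed_le continuous_norm continuous_const).inter
      (isClosed_singleton.preimage hgradc)
  have hZcomp : IsCompact Z := by
    apply Metric.isCompact_of_isClosed_isBounded hclosed
    apply Bornology.IsBounded.subset (Metric.isBounded_closedBall (x := (0:EuclideanSpace ℝ (Fin n))) (r := C))
    intro u hu
    rw [Metric.mem_closedBall, dist_zero_right]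
    exact hu.1
  have hiso := crit_isolated hV hnd
  choose! r hr0 hr using hiso
  have hcover : Z ⊆ ⋃ z : Z, Metric.ball (z : EuclideanSpace ℝ (Fin n)) (r z) := by
    intro u hu
    rw [Set.mem_iUnion]
    exact ⟨⟨u, hu⟩, Metric.mem_ball_self (hr0 u hu.2)⟩
  obtain ⟨t, ht⟩ := hZcomp.elim_finite_subcover
    (fun z : Z => Metric.ball (z : EuclideanSpace ℝ (Fin n)) (r z))
    (fun _ => Metric.isOpen_ball) hcover
  have hsubset : Z ⊆ (fun z : Z => (z : EuclideanSpace ℝ (Fin n))) '' (t : Set Z) := by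
    intro u hu
    have := ht hu
    rw [Set.mem_iUnion₂] at this
    obtain ⟨z, hzt, hz⟩ := this
    rw [Metric.mem_ball] at hz
    have heq : u = (z : EuclideanSpace ℝ (Fin n)) := hr (z : EuclideanSpace ℝ (Fin n)) z.2.2 u hz hu.2
    exact ⟨z, hzt, heq.symm⟩
  exact Set.Finite.subset (t.finite_toSet.image _) hsubset

set_option maxHeartbeats 1000000 in
/-- A bounded continuous path whose gradient tends to zero converges to a critical point. -/
lemma tendsto_crit_of_grad_tendsto {V : EuclideanSpace ℝ (Fin n) → ℝ} (hV : ContDiff ℝ 2 V)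
    (hnd : ∀ u : EuclideanSpace ℝ (Fin n), gradient V u = 0 →
      ∀ w : EuclideanSpace ℝ (Fin n), w ≠ 0 → fderiv ℝ (gradient V) u w ≠ 0)
    {ψ : ℝ → EuclideanSpace ℝ (Fin n)} (hψc : Continuous ψ) {C : ℝ}
    (hCb : ∀ x, ‖ψ x‖ ≤ C)
    (hgr : Tendsto (fun x => gradient V (ψ x)) atTop (𝓝 0)) :
    ∃ p, gradient V p = 0 ∧ Tendsto ψ atTop (𝓝 p) := by
  classical
  set Z := {u : EuclideanSpace ℝ (Fin n) | ‖u‖ ≤ C ∧ gradient V u = 0} with hZ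
  have hgradc : Continuous (gradient V) := (gradient_contDiff hV).continuous
  have hZfin : Z.Finite := crit_finite hV hnd C
  have hZcomp : IsCompact Z := hZfin.isCompact
  -- a helper : limit points of ψ along sequences tending to ∞ are in Z
  have hlimpt : ∀ x : ℕ → ℝ, Tendsto x atTop atTop → ∃ p ∈ Z,
      ∃ σ : ℕ → ℕ, StrictMono σ ∧ Tendsto (fun j => ψ (x (σ j))) atTop (𝓝 p) := by
    intro x hx
    have hcomp : IsCompact (Metric.closedBall (0:EuclideanSpace ℝ (Fin n)) C) :=
      isCompact_closedBall _ _
    have hmem : ∀ k : ℕ, ψ (x k) ∈ Metric.closedBall (0:EuclideanSpace ℝ (Fin n)) C := by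
      intro k
      rw [Metric.mem_closedBall, dist_zero_right]
      exact hCb _
    obtain ⟨p, hpC, σ, hσmono, hσlim⟩ := hcomp.tendsto_subseq hmem
    have hxs : Tendsto (fun j => x (σ j)) atTop atTop :=
      hx.comp hσmono.tendsto_atTop
    have h1 : Tendsto (fun j => gradient V (ψ (x (σ j)))) atTop (𝓝 (gradient V p)) :=
      (hgradc.tendsto p).comp hσlim
    have h3 : Tendsto (fun j => gradient V (ψ (x (σ j)))) atTop (𝓝 0) := hgr.comp hxs
    have hp0 : gradient V p = 0 := tendsto_nhds_unique h1 h3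
    exact ⟨p, ⟨mem_closedBall_zero_iff.1 hpC, hp0⟩, σ, hσmono, hσlim⟩
  have hZne : Z.Nonempty := by
    obtain ⟨p, hp, _⟩ := hlimpt (fun k => (k:ℝ)) tendsto_natCast_atTop_atTop
    exact ⟨p, hp⟩
  -- infDist tends to zero
  have hdist : Tendsto (fun x => Metric.infDist (ψ x) Z) atTop (𝓝 0) := by
    rw [Metric.tendsto_nhds]
    by_contra hcon
    push_neg at hcon
    obtain ⟨ε, hε, hfreq⟩ := hcon
    have hfreq2 : ∃ᶠ x in atTop, ε ≤ Metric.infDist (ψ x) Z := by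
      apply hfreq.mono
      intro x hx
      rw [Real.dist_eq, abs_of_nonneg
        (by linarith [Metric.infDist_nonneg (x := ψ x) (s := Z)] :
          (0:ℝ) ≤ Metric.infDist (ψ x) Z - 0)] at hx
      linarith
    rw [Filter.frequently_atTop] at hfreq2
    choose x hx1 hx2 using fun k : ℕ => hfreq2 (k : ℝ)
    have hxt : Tendsto x atTop atTop :=
      tendsto_atTop_mono hx1 tendsto_natCast_atTop_atTop
    obtain ⟨p, hpZ, σ, hσmono, hσlim⟩ := hlimpt x hxt
    have h4 : Tendsto (fun j => Metric.infDist (ψ (x (σ j))) Z) atTop (𝓝 (Metric.infDist p Z)) :=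
      ((Metric.continuous_infDist_pt Z).tendsto p).comp hσlim
    have h5 : Metric.infDist p Z = 0 := Metric.infDist_zero_of_mem hpZ
    rw [h5] at h4
    have h6 := h4.eventually_lt_const hε
    obtain ⟨j, hj⟩ := h6.exists
    exact absurd (hx2 (σ j)) (not_le.2 hj)
  -- separation of Z
  obtain ⟨d, hd0, hsep⟩ : ∃ d > (0:ℝ), ∀ z ∈ Z, ∀ z' ∈ Z, z ≠ z' → d ≤ dist z z' := by
    by_cases h : (Finset.filter (fun p => p.1 ≠ p.2) (hZfin.toFinset ×ˢ hZfin.toFinset)).Nonempty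
    · have hdne : (Finset.image (fun p => dist p.1 p.2)
          (Finset.filter (fun p => p.1 ≠ p.2) (hZfin.toFinset ×ˢ hZfin.toFinset))).Nonempty :=
        h.image _
      refine ⟨(Finset.image (fun p => dist p.1 p.2)
          (Finset.filter (fun p => p.1 ≠ p.2) (hZfin.toFinset ×ˢ hZfin.toFinset))).min' hdne,
        ?_, ?_⟩
      · obtain ⟨p, hp, hpd⟩ := Finset.mem_image.1 (Finset.min'_mem _ hdne)
        rw [Finset.mem_filter] at hp
        rw [← hpd]
        exact dist_pos.2 hp.2
      · intro z hz z' hz' hne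
        apply Finset.min'_le
        apply Finset.mem_image.2
        refine ⟨(z, z'), ?_, rfl⟩
        rw [Finset.mem_filter, Finset.mem_product]
        exact ⟨⟨hZfin.mem_toFinset.2 hz, hZfin.mem_toFinset.2 hz'⟩, hne⟩
    · refine ⟨1, one_pos, ?_⟩
      intro z hz z' hz' hne
      exfalso
      apply h
      refine ⟨(z, z'), ?_⟩
      rw [Finset.mem_filter, Finset.mem_product]
      exact ⟨⟨hZfin.mem_toFinset.2 hz, hZfin.mem_toFinset.2 hz'⟩, hne⟩
  set r := d/3 with hrdef
  have hr0 : 0 < r := by positivity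
  have hattain : ∀ x : ℝ, ∀ b : ℝ, Metric.infDist (ψ x) Z < b →
      ∃ z ∈ Z, dist (ψ x) z < b := by
    intro x b hx
    obtain ⟨z, hzZ, hzd⟩ := hZcomp.exists_infDist_eq_dist hZne (ψ x)
    exact ⟨z, hzZ, by rw [← hzd]; exact hx⟩
  have hev : ∀ᶠ x in atTop, Metric.infDist (ψ x) Z < r := hdist.eventually_lt_const hr0
  rw [eventually_atTop] at hev
  obtain ⟨X, hX⟩ := hev
  obtain ⟨z₀, hz₀Z, hz₀d⟩ := hattain X r (hX X le_rfl)
  have hstay : ∀ x, X ≤ x → dist (ψ x) z₀ < r := by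
    by_contra hcon
    push_neg at hcon
    set S := {x | X ≤ x ∧ r ≤ dist (ψ x) z₀} with hS
    have hSne : S.Nonempty := by
      obtain ⟨x, h1, h2⟩ := hcon; exact ⟨x, h1, h2⟩
    have hScl : IsClosed S := by
      have : S = Set.Ici X ∩ (fun x => dist (ψ x) z₀) ⁻¹' (Set.Ici r) := by
        ext t; simp [hS]
      rw [this]
      exact isClosed_Ici.inter (isClosed_Ici.preimage (hψc.dist continuous_const))
    have hSbdd : BddBelow S := ⟨X, fun t ht => ht.1⟩
    have hbS : sInf S ∈ S := hScl.csInf_mem hSne hSbdd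
    set b := sInf S with hb
    have hXb : X < b := by
      rcases lt_or_eq_of_le hbS.1 with h1 | h1
      · exact h1
      · exfalso; rw [← h1] at hbS; linarith [hbS.2, hz₀d]
    have hlt : ∀ y, y ∈ Set.Ico X b → dist (ψ y) z₀ < r := by
      intro y hy
      by_contra hyr
      push_neg at hyr
      have : y ∈ S := ⟨hy.1, hyr⟩
      have := csInf_le hSbdd this
      linarith [hy.2]
    have hble : dist (ψ b) z₀ ≤ r := by
      have hcontd : Tendsto (fun y => dist (ψ y) z₀) (𝓝[<] b) (𝓝 (dist (ψ b) z₀)) :=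
        ((hψc.dist continuous_const).continuousAt).tendsto.mono_left nhdsWithin_le_nhds
      apply le_of_tendsto hcontd
      filter_upwards [Ico_mem_nhdsLT_of_mem (show b ∈ Set.Ioc X b from ⟨hXb, le_rfl⟩)] with y hy
      exact (hlt y hy).le
    obtain ⟨z', hz'Z, hz'd⟩ := hattain b r (hX b (le_of_lt hXb))
    have hz'ne : z' ≠ z₀ := by
      intro heq
      rw [heq] at hz'd
      linarith [hbS.2]
    have h7 := hsep z' hz'Z z₀ hz₀Z hz'ne
    have h8 : dist z' z₀ ≤ dist z' (ψ b) + dist (ψ b) z₀ := dist_triangle _ _ _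
    rw [dist_comm z' (ψ b)] at h8
    have h9 : dist z' z₀ < r + r := by linarith
    rw [hrdef] at h9
    linarith
  refine ⟨z₀, hz₀Z.2, ?_⟩
  rw [Metric.tendsto_nhds]
  intro ε hε
  have hε' : 0 < min ε r := lt_min hε hr0
  filter_upwards [hdist.eventually_lt_const hε', eventually_ge_atTop X] with x h1 h2
  obtain ⟨z', hz'Z, hz'd⟩ := hattain x (min ε r) h1
  have hz'eq : z' = z₀ := by
    by_contra hne
    have h7 := hsep z' hz'Z z₀ hz₀Z hne
    have h8 : dist z' z₀ ≤ dist z' (ψ x) + dist (ψ x) z₀ := dist_triangle _ _ _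
    rw [dist_comm z' (ψ x)] at h8
    have h9 := hstay x h2
    have h10 : dist (ψ x) z' < r := lt_of_lt_of_le hz'd (min_le_right _ _)
    have h11 : dist z' z₀ < r + r := by linarith
    rw [hrdef] at h11
    linarith
  rw [hz'eq] at hz'd
  exact lt_of_lt_of_le hz'd (min_le_left _ _)


set_option maxHeartbeats 1000000 in
/-- Travelling waves approach critical points. -/
theorem statement4
    (n : ℕ) (hn : 1 ≤ n) (V : EuclideanSpace ℝ (Fin n) → ℝ)
    (hV : ContDiff ℝ 2 V) (hcoerc : Hcoerc V)
    (hnondeg : ∀ u : EuclideanSpace ℝ (Fin n), gradient V u = 0 →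
      ∀ w : EuclideanSpace ℝ (Fin n), w ≠ 0 → hessian V u w ≠ 0) :
    ∃ C > (0:ℝ), ∀ c : ℝ, 0 < c → ∀ φ : ℝ → EuclideanSpace ℝ (Fin n),
      SolTW V c φ → (∃ B, ∀ x : ℝ, ‖φ x‖ ≤ B) →
      (∀ x : ℝ, ‖φ x‖ ≤ C) ∧
      ∃ um up : EuclideanSpace ℝ (Fin n),
        gradient V um = 0 ∧ gradient V up = 0 ∧
        Tendsto φ atBot (𝓝 um) ∧ Tendsto φ atTop (𝓝 up) ∧
        ((∃ x y, φ x ≠ φ y) → V um < V up) := by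
  classical
  obtain ⟨ε, hε, R, hco⟩ := hcoerc
  refine ⟨max R 1, lt_of_lt_of_le one_pos (le_max_right _ _), ?_⟩
  intro c hc φ hsol hbdd
  obtain ⟨hφ, hode⟩ := hsol
  obtain ⟨B, hB⟩ := hbdd
  have hCb : ∀ x, ‖φ x‖ ≤ max R 1 := sol_bound hV hε hco hc hφ hode hB
  refine ⟨hCb, ?_⟩
  have hφd : Differentiable ℝ φ := hφ.differentiable (by norm_num)
  have hφc : Continuous φ := hφd.continuous
  have hgradc : Continuous (gradient V) := (gradient_contDiff hV).continuous
  -- bounds by compactness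
  obtain ⟨M, hM'⟩ := (isCompact_closedBall (0 : EuclideanSpace ℝ (Fin n)) (max R 1)
    ).exists_bound_of_continuousOn hgradc.continuousOn
  have hM : ∀ u : EuclideanSpace ℝ (Fin n), ‖u‖ ≤ max R 1 → ‖gradient V u‖ ≤ M :=
    fun u hu => hM' u (by rwa [Metric.mem_closedBall, dist_zero_right])
  obtain ⟨MV, hMV'⟩ := (isCompact_closedBall (0 : EuclideanSpace ℝ (Fin n)) (max R 1)
    ).exists_bound_of_continuousOn (hV.continuous.continuousOn)
  have hMV : ∀ u : EuclideanSpace ℝ (Fin n), ‖u‖ ≤ max R 1 → |V u| ≤ MV := by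
    intro u hu
    have := hMV' u (by rwa [Metric.mem_closedBall, dist_zero_right])
    rwa [Real.norm_eq_abs] at this
  have hHcont : Continuous (fun u => fderiv ℝ (gradient V) u) := by
    have h1 : ContDiff ℝ 0 (fun u => fderiv ℝ (gradient V) u) :=
      (gradient_contDiff hV).fderiv_right (by norm_num)
    exact h1.continuous
  obtain ⟨MH, hMH'⟩ := (isCompact_closedBall (0 : EuclideanSpace ℝ (Fin n)) (max R 1)
    ).exists_bound_of_continuousOn hHcont.continuousOn
  have hMH : ∀ u : EuclideanSpace ℝ (Fin n), ‖u‖ ≤ max R 1 → ‖fderiv ℝ (gradient V) u‖ ≤ MH :=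
    fun u hu => hMH' u (by rwa [Metric.mem_closedBall, dist_zero_right])
  obtain ⟨hgt, hgb⟩ := grad_tendsto_zero hV hc hφ hode hCb hM hMV hMH
  have hnd : ∀ u : EuclideanSpace ℝ (Fin n), gradient V u = 0 →
      ∀ w : EuclideanSpace ℝ (Fin n), w ≠ 0 → fderiv ℝ (gradient V) u w ≠ 0 := hnondeg
  obtain ⟨up, hupcrit, huptend⟩ := tendsto_crit_of_grad_tendsto hV hnd hφc hCb hgt
  have hψc : Continuous (fun x : ℝ => φ (-x)) := hφc.comp continuous_neg
  have hψb : ∀ x : ℝ, ‖φ (-x)‖ ≤ max R 1 := fun x => hCb (-x)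
  have hψg : Tendsto (fun x : ℝ => gradient V (φ (-x))) atTop (𝓝 0) :=
    hgb.comp tendsto_neg_atTop_atBot
  obtain ⟨um, humcrit, humtend'⟩ := tendsto_crit_of_grad_tendsto hV hnd hψc hψb hψg
  have humtend : Tendsto φ atBot (𝓝 um) := by
    have h1 := humtend'.comp tendsto_neg_atBot_atTop
    exact h1.congr (fun x => congrArg φ (neg_neg x))
  refine ⟨um, up, humcrit, hupcrit, humtend, huptend, ?_⟩
  intro hnc
  obtain ⟨hφ'd, _⟩ := deriv_differentiable hφ
  set g : ℝ → ℝ := fun x => ⟪deriv φ x, deriv φ x⟫ with hgdef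
  have hgnn : ∀ x, 0 ≤ g x := fun x => real_inner_self_nonneg
  set Efun : ℝ → ℝ := fun y => (1/2 : ℝ) * g y - V (φ y) with hEdef
  have hEd : ∀ x, HasDerivAt Efun (-c * g x) x := energy_hasDerivAt hV hφ hode
  have hEanti : Antitone Efun := by
    apply antitone_of_deriv_nonpos (fun x => (hEd x).differentiableAt)
    intro x
    rw [(hEd x).deriv]
    nlinarith [mul_nonneg hc.le (hgnn x)]
  obtain ⟨hn0t, hn0b⟩ := deriv_tendsto_zero hV hc hφ hode hCb hM hMV
  have hgt0 : Tendsto g atTop (𝓝 0) := by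
    have h1 := hn0t.mul hn0t
    rw [mul_zero] at h1
    exact h1.congr (fun x => (real_inner_self_eq_norm_mul_norm _).symm)
  have hgb0 : Tendsto g atBot (𝓝 0) := by
    have h1 := hn0b.mul hn0b
    rw [mul_zero] at h1
    exact h1.congr (fun x => (real_inner_self_eq_norm_mul_norm _).symm)
  have hVt : Tendsto (fun x => V (φ x)) atTop (𝓝 (V up)) :=
    (hV.continuous.tendsto up).comp huptend
  have hVb : Tendsto (fun x => V (φ x)) atBot (𝓝 (V um)) :=
    (hV.continuous.tendsto um).comp humtend
  have hEt : Tendsto Efun atTop (𝓝 (-(V up))) := by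
    have h1 := (hgt0.const_mul (1/2 : ℝ)).sub hVt
    rw [mul_zero, zero_sub] at h1
    exact h1
  have hEb : Tendsto Efun atBot (𝓝 (-(V um))) := by
    have h1 := (hgb0.const_mul (1/2 : ℝ)).sub hVb
    rw [mul_zero, zero_sub] at h1
    exact h1
  have hup_le : ∀ x, -(V up) ≤ Efun x := by
    intro x
    apply le_of_tendsto hEt
    filter_upwards [eventually_ge_atTop x] with y hy
    exact hEanti hy
  have hum_ge : ∀ x, Efun x ≤ -(V um) := by
    intro x
    apply ge_of_tendsto hEb
    filter_upwards [eventually_le_atBot x] with y hy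
    exact hEanti hy
  have hle : V um ≤ V up := by linarith [le_trans (hup_le 0) (hum_ge 0)]
  rcases lt_or_eq_of_le hle with h | h
  · exact h
  · exfalso
    obtain ⟨x₀, y₀, hxy⟩ := hnc
    have hconst : ∀ x, Efun x = -(V up) := by
      intro x
      have h1 : Efun x ≤ -(V up) := by rw [← h]; exact hum_ge x
      exact le_antisymm h1 (hup_le x)
    have hEfun : Efun = fun _ => -(V up) := funext hconst
    have hg0 : ∀ x, g x = 0 := by
      intro x
      have h1 := (hEd x).deriv
      have h2 : deriv Efun x = 0 := by rw [hEfun]; simp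
      rw [h2] at h1
      have := h1.symm
      nlinarith [hgnn x]
    have hderiv0 : ∀ x, deriv φ x = 0 := by
      intro x
      have h1 := hg0 x
      rw [hgdef] at h1
      exact inner_self_eq_zero.1 h1
    exact hxy (is_const_of_deriv_eq_zero hφd hderiv0 x₀ y₀)


end
end

section
/- Let V : ℝ^n → ℝ be of class C², let c ∈ ℝ, let I ⊆ (0,+∞) be an open interval, and let v : ℝ × I → ℝ^n be a smooth solution of v_t − c v_y = −∇V(v) + v_yy whose partial derivatives up to order three are bounded on ℝ × J for every compact subinterval J of I, with v itself bounded. Let ψ : ℝ × I → ℝ be smooth and such that for every compact subinterval J of I there is an integrable function g : ℝ → ℝ with |ψ(y,t)| + |ψ_y(y,t)| + |ψ_t(y,t)| ≤ g(y) for all y ∈ ℝ and t ∈ J. Then the function t ↦ ∫_ℝ ψ(y,t) ( |v_y(y,t)|²/2 + V(v(y,t)) ) dy is differentiable on I and, for every t ∈ I, d/dt ∫_ℝ ψ ( |v_y|²/2 + V(v) ) dy = ∫_ℝ [ −ψ |v_t|² + ψ_t ( |v_y|²/2 + V(v) ) + (cψ − ψ_y) v_y · v_t ] dy. -/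
open Filter Topology Set MeasureTheory Real

noncomputable section

variable {n : ℕ}

open scoped RealInnerProductSpace

namespace S7aux

variable {F : Type*} [NormedAddCommGroup F] [NormedSpace ℝ F]

lemma hasDerivAt_fst (f : ℝ × ℝ → F) {U : Set (ℝ × ℝ)} (hU : IsOpen U) {y t : ℝ}
    (hp : (y, t) ∈ U) (hf : ContDiffOn ℝ 1 f U) :
    HasDerivAt (fun z => f (z, t)) (fderiv ℝ f (y, t) (1, 0)) y := by
  have hd : HasFDerivAt f (fderiv ℝ f (y, t)) (y, t) :=
    ((hf.contDiffAt (hU.mem_nhds hp)).differentiableAt one_ne_zero).hasFDerivAt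
  have hline : HasDerivAt (fun z : ℝ => (z, t)) ((1 : ℝ), (0 : ℝ)) y :=
    (hasDerivAt_id y).prodMk (hasDerivAt_const y t)
  exact hd.comp_hasDerivAt y hline

lemma hasDerivAt_snd (f : ℝ × ℝ → F) {U : Set (ℝ × ℝ)} (hU : IsOpen U) {y t : ℝ}
    (hp : (y, t) ∈ U) (hf : ContDiffOn ℝ 1 f U) :
    HasDerivAt (fun s => f (y, s)) (fderiv ℝ f (y, t) (0, 1)) t := by
  have hd : HasFDerivAt f (fderiv ℝ f (y, t)) (y, t) :=
    ((hf.contDiffAt (hU.mem_nhds hp)).differentiableAt one_ne_zero).hasFDerivAt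
  have hline : HasDerivAt (fun s : ℝ => (y, s)) ((0 : ℝ), (1 : ℝ)) t :=
    (hasDerivAt_const t y).prodMk (hasDerivAt_id t)
  exact hd.comp_hasDerivAt t hline

lemma norm_one_zero : ‖((1 : ℝ), (0 : ℝ))‖ = 1 := by simp [Prod.norm_def]

lemma norm_zero_one : ‖((0 : ℝ), (1 : ℝ))‖ = 1 := by simp [Prod.norm_def]

lemma fderiv_apply_norm_le {f : ℝ × ℝ → F} {p u : ℝ × ℝ} {C : ℝ}
    (h : ‖iteratedFDeriv ℝ 1 f p‖ ≤ C) : ‖fderiv ℝ f p u‖ ≤ C * ‖u‖ := by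
  have h1 : fderiv ℝ f p u = iteratedFDeriv ℝ 1 f p ![u] := by
    rw [iteratedFDeriv_one_apply]; simp
  rw [h1]
  calc ‖iteratedFDeriv ℝ 1 f p ![u]‖ ≤ ‖iteratedFDeriv ℝ 1 f p‖ * ∏ i, ‖(![u] : Fin 1 → ℝ × ℝ) i‖ :=
        (iteratedFDeriv ℝ 1 f p).le_opNorm _
    _ ≤ C * ‖u‖ := by
        simp only [Fin.prod_univ_one]
        exact mul_le_mul_of_nonneg_right h (by simp)

lemma fderiv2_apply_norm_le {f : ℝ × ℝ → F} {p u₁ u₂ : ℝ × ℝ} {C : ℝ}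
    (h : ‖iteratedFDeriv ℝ 2 f p‖ ≤ C) :
    ‖fderiv ℝ (fderiv ℝ f) p u₁ u₂‖ ≤ C * ‖u₁‖ * ‖u₂‖ := by
  have h1 : fderiv ℝ (fderiv ℝ f) p u₁ u₂ = iteratedFDeriv ℝ 2 f p ![u₁, u₂] := by
    rw [iteratedFDeriv_two_apply]; simp
  rw [h1]
  calc ‖iteratedFDeriv ℝ 2 f p ![u₁, u₂]‖
      ≤ ‖iteratedFDeriv ℝ 2 f p‖ * ∏ i, ‖(![u₁, u₂] : Fin 2 → ℝ × ℝ) i‖ :=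
        (iteratedFDeriv ℝ 2 f p).le_opNorm _
    _ = ‖iteratedFDeriv ℝ 2 f p‖ * (‖u₁‖ * ‖u₂‖) := by simp [Fin.prod_univ_two]
    _ ≤ C * (‖u₁‖ * ‖u₂‖) := mul_le_mul_of_nonneg_right h (by positivity)
    _ = C * ‖u₁‖ * ‖u₂‖ := by ring

lemma cont_slice {f : ℝ × ℝ → F} {U : Set (ℝ × ℝ)} (hU : IsOpen U) {t : ℝ}
    (hm : ∀ y : ℝ, (y, t) ∈ U) (hf : ContinuousOn f U) :
    Continuous fun y => f (y, t) := by
  rw [continuous_iff_continuousAt]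
  intro y
  have h1 : ContinuousAt (fun y : ℝ => (y, t)) y :=
    (continuous_id.prodMk continuous_const).continuousAt
  have h2 := ContinuousAt.comp (x := y) (hf.continuousAt (hU.mem_nhds (hm y))) h1
  exact h2

lemma abs_half_add {p r e f : ℝ} (h1 : |p| ≤ e) (h3 : |r| ≤ f) : |p / 2 + r| ≤ e / 2 + f := by
  have := abs_add_le (p / 2) r
  have h2 : |p / 2| = |p| / 2 := by rw [abs_div]; norm_num
  linarith

lemma abs_comb {p q r e f : ℝ} (h1 : |p| ≤ e) (h2 : |q| ≤ e) (h3 : |r| ≤ f) :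
    |(p + q) / 2 + r| ≤ e + f := by
  have h4 := abs_add_le ((p + q) / 2) r
  have h5 : |(p + q) / 2| = |p + q| / 2 := by rw [abs_div]; norm_num
  have h6 := abs_add_le p q
  linarith

end S7aux

set_option maxHeartbeats 2000000 in
/-- Time derivative of the localized energy in a travelling frame. -/
theorem statement7
    (n : ℕ) (hn : 1 ≤ n) (V : EuclideanSpace ℝ (Fin n) → ℝ) (hV : ContDiff ℝ 2 V)
    (c : ℝ) (a b : ℝ) (I : Set ℝ) (hI : I = Ioo a b) (hIpos : I ⊆ Ioi 0)
    (v : ℝ → ℝ → EuclideanSpace ℝ (Fin n))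
    (hvsmooth : ∀ k : ℕ, ContDiffOn ℝ k (fun p : ℝ × ℝ => v p.1 p.2) (univ ×ˢ I))
    (heq : ∀ y t : ℝ, t ∈ I →
      deriv (fun s => v y s) t - c • deriv (fun z => v z t) y
        = -gradient V (v y t) + deriv (deriv (fun z => v z t)) y)
    (hvbdd : ∃ C, ∀ y t : ℝ, t ∈ I → ‖v y t‖ ≤ C)
    (hdbdd : ∀ J : Set ℝ, J ⊆ I → IsCompact J → ∃ C, ∀ y : ℝ, ∀ t ∈ J,
      ∀ i : ℕ, 1 ≤ i → i ≤ 3 →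
        ‖iteratedFDeriv ℝ i (fun p : ℝ × ℝ => v p.1 p.2) (y, t)‖ ≤ C)
    (ψ : ℝ → ℝ → ℝ)
    (hψ : ∀ k : ℕ, ContDiffOn ℝ k (fun p : ℝ × ℝ => ψ p.1 p.2) (univ ×ˢ I))
    (hψdom : ∀ J : Set ℝ, J ⊆ I → IsCompact J → ∃ g : ℝ → ℝ, Integrable g ∧
      ∀ y : ℝ, ∀ t ∈ J,
        |ψ y t| + |deriv (fun z => ψ z t) y| + |deriv (fun s => ψ y s) t| ≤ g y) :
    ∀ t ∈ I,
      HasDerivAt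
        (fun τ => ∫ y : ℝ, ψ y τ * (‖deriv (fun z => v z τ) y‖ ^ 2 / 2 + V (v y τ)))
        (∫ y : ℝ,
          (-(ψ y t) * ‖deriv (fun s => v y s) t‖ ^ 2
            + deriv (fun s => ψ y s) t * (‖deriv (fun z => v z t) y‖ ^ 2 / 2 + V (v y t))
            + (c * ψ y t - deriv (fun z => ψ z t) y) *
                (inner ℝ (deriv (fun z => v z t) y) (deriv (fun s => v y s) t) : ℝ)))
        t := by
  intro t₀ ht₀
  -- basic notation
  set w : ℝ × ℝ → EuclideanSpace ℝ (Fin n) := fun p => v p.1 p.2 with hw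
  set Ψ : ℝ × ℝ → ℝ := fun p => ψ p.1 p.2 with hΨdef
  set U : Set (ℝ × ℝ) := univ ×ˢ I with hUdef
  have hIopen : IsOpen I := hI ▸ isOpen_Ioo
  have hU : IsOpen U := isOpen_univ.prod hIopen
  have hmem : ∀ {y t : ℝ}, t ∈ I → (y, t) ∈ U := fun h => ⟨mem_univ _, h⟩
  have hwk : ∀ k : ℕ, ContDiffOn ℝ k w U := fun k => hvsmooth k
  have hψk : ∀ k : ℕ, ContDiffOn ℝ k Ψ U := fun k => hψ k
  have hw1 : ContDiffOn ℝ 1 w U := hwk 1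
  have hψ1 : ContDiffOn ℝ 1 Ψ U := hψk 1
  have hDcd : ContDiffOn ℝ 1 (fderiv ℝ w) U := by
    exact (hwk 2).fderiv_of_isOpen hU (m := 1) (by norm_num)
  -- first partial derivatives
  have hvy : ∀ (y : ℝ), ∀ t ∈ I, HasDerivAt (fun z => v z t) (fderiv ℝ w (y, t) (1, 0)) y :=
    fun y t ht => S7aux.hasDerivAt_fst w hU (hmem ht) hw1
  have hvt : ∀ (y : ℝ), ∀ t ∈ I, HasDerivAt (fun s => v y s) (fderiv ℝ w (y, t) (0, 1)) t :=
    fun y t ht => S7aux.hasDerivAt_snd w hU (hmem ht) hw1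
  have hψy : ∀ (y : ℝ), ∀ t ∈ I, HasDerivAt (fun z => ψ z t) (fderiv ℝ Ψ (y, t) (1, 0)) y :=
    fun y t ht => S7aux.hasDerivAt_fst Ψ hU (hmem ht) hψ1
  have hψt : ∀ (y : ℝ), ∀ t ∈ I, HasDerivAt (fun s => ψ y s) (fderiv ℝ Ψ (y, t) (0, 1)) t :=
    fun y t ht => S7aux.hasDerivAt_snd Ψ hU (hmem ht) hψ1
  -- second partial derivatives
  have hvyy : ∀ (y : ℝ), ∀ t ∈ I, HasDerivAt (fun z => fderiv ℝ w (z, t) (1, 0))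
      (fderiv ℝ (fderiv ℝ w) (y, t) (1, 0) (1, 0)) y := by
    intro y t ht
    have h := (S7aux.hasDerivAt_fst (fderiv ℝ w) hU (hmem ht) hDcd).clm_apply
      (hasDerivAt_const y ((1 : ℝ), (0 : ℝ)))
    simpa using h
  have hvty : ∀ (y : ℝ), ∀ t ∈ I, HasDerivAt (fun z => fderiv ℝ w (z, t) (0, 1))
      (fderiv ℝ (fderiv ℝ w) (y, t) (1, 0) (0, 1)) y := by
    intro y t ht
    have h := (S7aux.hasDerivAt_fst (fderiv ℝ w) hU (hmem ht) hDcd).clm_apply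
      (hasDerivAt_const y ((0 : ℝ), (1 : ℝ)))
    simpa using h
  have hvyt : ∀ (y : ℝ), ∀ t ∈ I, HasDerivAt (fun s => fderiv ℝ w (y, s) (1, 0))
      (fderiv ℝ (fderiv ℝ w) (y, t) (0, 1) (1, 0)) t := by
    intro y t ht
    have h := (S7aux.hasDerivAt_snd (y := y) (t := t) (fderiv ℝ w) hU (hmem ht) hDcd).clm_apply
      (hasDerivAt_const t ((1 : ℝ), (0 : ℝ)))
    simpa using h
  -- symmetry of second derivative
  have hsymm : ∀ (y : ℝ), ∀ t ∈ I, fderiv ℝ (fderiv ℝ w) (y, t) (1, 0) (0, 1)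
      = fderiv ℝ (fderiv ℝ w) (y, t) (0, 1) (1, 0) := by
    intro y t ht
    have h : ContDiffAt ℝ 2 w (y, t) := (hwk 2).contDiffAt (hU.mem_nhds (hmem ht))
    exact h.isSymmSndFDerivAt (by norm_num) _ _
  -- identification of iterated deriv in space
  have hderiv2 : ∀ (y : ℝ), ∀ t ∈ I, deriv (deriv (fun z => v z t)) y
      = fderiv ℝ (fderiv ℝ w) (y, t) (1, 0) (1, 0) := by
    intro y t ht
    have h1 : deriv (fun z => v z t) = fun z => fderiv ℝ w (z, t) (1, 0) :=
      funext fun z => (hvy z t ht).deriv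
    rw [h1]
    exact (hvyy y t ht).deriv
  -- the PDE rewritten
  have hpde : ∀ (y : ℝ), ∀ t ∈ I, gradient V (v y t)
      = fderiv ℝ (fderiv ℝ w) (y, t) (1, 0) (1, 0) + c • fderiv ℝ w (y, t) (1, 0)
        - fderiv ℝ w (y, t) (0, 1) := by
    intro y t ht
    have h := heq y t ht
    rw [(hvt y t ht).deriv, (hvy y t ht).deriv, hderiv2 y t ht] at h
    calc gradient V (v y t)
        = (fderiv ℝ w (y, t) (0, 1) - c • fderiv ℝ w (y, t) (1, 0)) + gradient V (v y t)
            + c • fderiv ℝ w (y, t) (1, 0) - fderiv ℝ w (y, t) (0, 1) := by abel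
      _ = (-gradient V (v y t) + fderiv ℝ (fderiv ℝ w) (y, t) (1, 0) (1, 0))
            + gradient V (v y t) + c • fderiv ℝ w (y, t) (1, 0) - fderiv ℝ w (y, t) (0, 1) := by
          rw [h]
      _ = fderiv ℝ (fderiv ℝ w) (y, t) (1, 0) (1, 0) + c • fderiv ℝ w (y, t) (1, 0)
            - fderiv ℝ w (y, t) (0, 1) := by abel
  -- compact time interval around t₀
  have hab : a < t₀ ∧ t₀ < b := by rw [hI] at ht₀; exact ⟨ht₀.1, ht₀.2⟩
  set δ : ℝ := min (t₀ - a) (b - t₀) / 2 with hδdef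
  have hmpos : 0 < min (t₀ - a) (b - t₀) := lt_min (by linarith [hab.1]) (by linarith [hab.2])
  have hδpos : 0 < δ := by positivity
  have hδa : δ < t₀ - a := by
    have h1 : min (t₀ - a) (b - t₀) ≤ t₀ - a := min_le_left _ _
    rw [hδdef]; linarith
  have hδb : δ < b - t₀ := by
    have h1 : min (t₀ - a) (b - t₀) ≤ b - t₀ := min_le_right _ _
    rw [hδdef]; linarith
  set J : Set ℝ := Icc (t₀ - δ) (t₀ + δ) with hJdef
  have hJI : J ⊆ I := by
    rw [hI]; rintro t ⟨h1, h2⟩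
    exact ⟨by linarith, by linarith⟩
  have ht₀J : t₀ ∈ J := ⟨by linarith, by linarith⟩
  have hballJ : Metric.ball t₀ δ ⊆ J := by
    rw [hJdef, Real.ball_eq_Ioo]; exact Ioo_subset_Icc_self
  have hballI : Metric.ball t₀ δ ⊆ I := hballJ.trans hJI
  obtain ⟨C₀, hC₀⟩ := hvbdd
  obtain ⟨C₁, hC₁⟩ := hdbdd J hJI isCompact_Icc
  obtain ⟨g, hgint, hgb⟩ := hψdom J hJI isCompact_Icc
  have hC₁0 : 0 ≤ C₁ := le_trans (norm_nonneg _) (hC₁ 0 t₀ ht₀J 1 le_rfl (by norm_num))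
  have hg0 : ∀ y, 0 ≤ g y := fun y => le_trans (by positivity) (hgb y t₀ ht₀J)
  -- derivative bounds on J
  have hbvy : ∀ (y : ℝ), ∀ t ∈ J, ‖fderiv ℝ w (y, t) (1, 0)‖ ≤ C₁ := by
    intro y t ht
    have h := S7aux.fderiv_apply_norm_le (u := ((1 : ℝ), (0 : ℝ)))
      (hC₁ y t ht 1 le_rfl (by norm_num))
    rwa [S7aux.norm_one_zero, mul_one] at h
  have hbvt : ∀ (y : ℝ), ∀ t ∈ J, ‖fderiv ℝ w (y, t) (0, 1)‖ ≤ C₁ := by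
    intro y t ht
    have h := S7aux.fderiv_apply_norm_le (u := ((0 : ℝ), (1 : ℝ)))
      (hC₁ y t ht 1 le_rfl (by norm_num))
    rwa [S7aux.norm_zero_one, mul_one] at h
  have hbD2 : ∀ (y : ℝ), ∀ t ∈ J, ∀ u₁ u₂ : ℝ × ℝ, ‖u₁‖ = 1 → ‖u₂‖ = 1 →
      ‖fderiv ℝ (fderiv ℝ w) (y, t) u₁ u₂‖ ≤ C₁ := by
    intro y t ht u₁ u₂ h1 h2
    have h := S7aux.fderiv2_apply_norm_le (u₁ := u₁) (u₂ := u₂)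
      (hC₁ y t ht 2 (by norm_num) (by norm_num))
    rwa [h1, h2, mul_one, mul_one] at h
  -- ψ bounds on J
  have hbψ : ∀ (y : ℝ), ∀ t ∈ J, |ψ y t| ≤ g y := by
    intro y t ht
    have h := hgb y t ht
    have h1 := abs_nonneg (deriv (fun z => ψ z t) y)
    have h2 := abs_nonneg (deriv (fun s => ψ y s) t)
    linarith
  have hbψy : ∀ (y : ℝ), ∀ t ∈ J, |fderiv ℝ Ψ (y, t) (1, 0)| ≤ g y := by
    intro y t ht
    have h := hgb y t ht
    rw [← (hψy y t (hJI ht)).deriv]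
    have h1 := abs_nonneg (ψ y t)
    have h2 := abs_nonneg (deriv (fun s => ψ y s) t)
    linarith
  have hbψt : ∀ (y : ℝ), ∀ t ∈ J, |fderiv ℝ Ψ (y, t) (0, 1)| ≤ g y := by
    intro y t ht
    have h := hgb y t ht
    rw [← (hψt y t (hJI ht)).deriv]
    have h1 := abs_nonneg (ψ y t)
    have h2 := abs_nonneg (deriv (fun z => ψ z t) y)
    linarith
  -- bounds for V and its gradient along v
  obtain ⟨MV, hMV⟩ := (isCompact_closedBall (0 : EuclideanSpace ℝ (Fin n))
    C₀).exists_bound_of_continuousOn (hV.continuous.continuousOn)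
  have hgradcont : Continuous (gradient V) := by
    have h1 : Continuous (fderiv ℝ V) := (hV.fderiv_right (m := 1) (by norm_num)).continuous
    exact ((InnerProductSpace.toDual ℝ (EuclideanSpace ℝ (Fin n))).symm.continuous).comp h1
  obtain ⟨MG, hMG⟩ := (isCompact_closedBall (0 : EuclideanSpace ℝ (Fin n))
    C₀).exists_bound_of_continuousOn (hgradcont.continuousOn)
  have hvball : ∀ (y : ℝ), ∀ t ∈ I, v y t ∈ Metric.closedBall (0 : EuclideanSpace ℝ (Fin n)) C₀ :=
    fun y t ht => mem_closedBall_zero_iff.mpr (hC₀ y t ht)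
  have hbV : ∀ (y : ℝ), ∀ t ∈ I, |V (v y t)| ≤ MV := by
    intro y t ht
    have h := hMV _ (hvball y t ht); rwa [Real.norm_eq_abs] at h
  have hbG : ∀ (y : ℝ), ∀ t ∈ I, ‖gradient V (v y t)‖ ≤ MG :=
    fun y t ht => hMG _ (hvball y t ht)
  have hMV0 : 0 ≤ MV := le_trans (abs_nonneg _) (hbV 0 t₀ ht₀)
  have hMG0 : 0 ≤ MG := le_trans (norm_nonneg _) (hbG 0 t₀ ht₀)
  -- continuity in the space variable
  have hcψ : ∀ t ∈ I, Continuous fun y => ψ y t := fun t ht =>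
    S7aux.cont_slice hU (fun y => hmem ht) ((hψk 0).continuousOn)
  have hcv : ∀ t ∈ I, Continuous fun y => v y t := fun t ht =>
    S7aux.cont_slice hU (fun y => hmem ht) ((hwk 0).continuousOn)
  have hcD : ∀ t ∈ I, Continuous fun y => fderiv ℝ w (y, t) := fun t ht =>
    S7aux.cont_slice hU (fun y => hmem ht)
      ((hwk 1).continuousOn_fderiv_of_isOpen hU (by norm_num))
  have hcD2 : ∀ t ∈ I, Continuous fun y => fderiv ℝ (fderiv ℝ w) (y, t) := fun t ht =>
    S7aux.cont_slice hU (fun y => hmem ht)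
      (hDcd.continuousOn_fderiv_of_isOpen hU (by norm_num))
  have hcΨD : ∀ t ∈ I, Continuous fun y => fderiv ℝ Ψ (y, t) := fun t ht =>
    S7aux.cont_slice hU (fun y => hmem ht)
      ((hψk 1).continuousOn_fderiv_of_isOpen hU (by norm_num))
  -- localized energy density and its time derivative
  set F : ℝ → ℝ → ℝ := fun τ y =>
    ψ y τ * (⟪fderiv ℝ w (y, τ) (1, 0), fderiv ℝ w (y, τ) (1, 0)⟫ / 2 + V (v y τ)) with hFdef
  set F' : ℝ → ℝ → ℝ := fun τ y =>
    fderiv ℝ Ψ (y, τ) (0, 1)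
        * (⟪fderiv ℝ w (y, τ) (1, 0), fderiv ℝ w (y, τ) (1, 0)⟫ / 2 + V (v y τ))
      + ψ y τ * ((⟪fderiv ℝ w (y, τ) (1, 0), fderiv ℝ (fderiv ℝ w) (y, τ) (0, 1) (1, 0)⟫
          + ⟪fderiv ℝ (fderiv ℝ w) (y, τ) (0, 1) (1, 0), fderiv ℝ w (y, τ) (1, 0)⟫) / 2
        + ⟪gradient V (v y τ), fderiv ℝ w (y, τ) (0, 1)⟫) with hF'def
  have hVdiff : Differentiable ℝ V := hV.differentiable (by norm_num)
  have hVcomp : ∀ (y : ℝ), ∀ τ ∈ I, HasDerivAt (fun s => V (v y s))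
      (⟪gradient V (v y τ), fderiv ℝ w (y, τ) (0, 1)⟫) τ := by
    intro y τ hτ
    have hg : HasFDerivAt V ((InnerProductSpace.toDual ℝ (EuclideanSpace ℝ (Fin n)))
        (gradient V (v y τ))) (v y τ) :=
      hasGradientAt_iff_hasFDerivAt.mp ((hVdiff (v y τ)).hasGradientAt)
    have h := hg.comp_hasDerivAt τ (hvt y τ hτ)
    simpa [InnerProductSpace.toDual_apply_apply, Function.comp_def] using h
  have hFderiv : ∀ (y : ℝ), ∀ τ ∈ I, HasDerivAt (fun σ => F σ y) (F' τ y) τ := by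
    intro y τ hτ
    have h1 : HasDerivAt (fun s => ⟪fderiv ℝ w (y, s) (1, 0), fderiv ℝ w (y, s) (1, 0)⟫)
        (⟪fderiv ℝ w (y, τ) (1, 0), fderiv ℝ (fderiv ℝ w) (y, τ) (0, 1) (1, 0)⟫
          + ⟪fderiv ℝ (fderiv ℝ w) (y, τ) (0, 1) (1, 0), fderiv ℝ w (y, τ) (1, 0)⟫) τ :=
      HasDerivAt.inner ℝ (hvyt y τ hτ) (hvyt y τ hτ)
    have h3 := (hψt y τ hτ).mul ((h1.div_const 2).add (hVcomp y τ hτ))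
    exact h3
  -- uniform bounds
  have hbF : ∀ (y : ℝ), ∀ τ ∈ J, |F τ y| ≤ g y * (C₁ * C₁ / 2 + MV) := by
    intro y τ hτJ
    have hτI := hJI hτJ
    have hX : ‖fderiv ℝ w (y, τ) (1, 0)‖ ≤ C₁ := hbvy y τ hτJ
    have i1 : |⟪fderiv ℝ w (y, τ) (1, 0), fderiv ℝ w (y, τ) (1, 0)⟫| ≤ C₁ * C₁ :=
      (abs_real_inner_le_norm _ _).trans (mul_le_mul hX hX (norm_nonneg _) hC₁0)
    have hVb : |V (v y τ)| ≤ MV := hbV y τ hτI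
    have hψb : |ψ y τ| ≤ g y := hbψ y τ hτJ
    have hE1 : |⟪fderiv ℝ w (y, τ) (1, 0), fderiv ℝ w (y, τ) (1, 0)⟫ / 2 + V (v y τ)|
        ≤ C₁ * C₁ / 2 + MV := S7aux.abs_half_add i1 hVb
    have habs : |F τ y| = |ψ y τ| * |⟪fderiv ℝ w (y, τ) (1, 0), fderiv ℝ w (y, τ) (1, 0)⟫ / 2
        + V (v y τ)| := by
      simp only [hFdef]; exact abs_mul _ _
    rw [habs]
    exact mul_le_mul hψb hE1 (abs_nonneg _) (hg0 y)
  have hbF' : ∀ (y : ℝ), ∀ τ ∈ J,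
      ‖F' τ y‖ ≤ g y * (C₁ * C₁ / 2 + MV + (C₁ * C₁ + MG * C₁)) := by
    intro y τ hτJ
    have hτI := hJI hτJ
    have hX : ‖fderiv ℝ w (y, τ) (1, 0)‖ ≤ C₁ := hbvy y τ hτJ
    have hT : ‖fderiv ℝ w (y, τ) (0, 1)‖ ≤ C₁ := hbvt y τ hτJ
    have hM : ‖fderiv ℝ (fderiv ℝ w) (y, τ) (0, 1) (1, 0)‖ ≤ C₁ :=
      hbD2 y τ hτJ _ _ S7aux.norm_zero_one S7aux.norm_one_zero
    have hVb : |V (v y τ)| ≤ MV := hbV y τ hτI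
    have hGb : ‖gradient V (v y τ)‖ ≤ MG := hbG y τ hτI
    have hψb : |ψ y τ| ≤ g y := hbψ y τ hτJ
    have hψtb : |fderiv ℝ Ψ (y, τ) (0, 1)| ≤ g y := hbψt y τ hτJ
    have i1 : |⟪fderiv ℝ w (y, τ) (1, 0), fderiv ℝ w (y, τ) (1, 0)⟫| ≤ C₁ * C₁ :=
      (abs_real_inner_le_norm _ _).trans (mul_le_mul hX hX (norm_nonneg _) hC₁0)
    have i2 : |⟪fderiv ℝ w (y, τ) (1, 0), fderiv ℝ (fderiv ℝ w) (y, τ) (0, 1) (1, 0)⟫|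
        ≤ C₁ * C₁ :=
      (abs_real_inner_le_norm _ _).trans (mul_le_mul hX hM (norm_nonneg _) hC₁0)
    have i3 : |⟪fderiv ℝ (fderiv ℝ w) (y, τ) (0, 1) (1, 0), fderiv ℝ w (y, τ) (1, 0)⟫|
        ≤ C₁ * C₁ :=
      (abs_real_inner_le_norm _ _).trans (mul_le_mul hM hX (norm_nonneg _) hC₁0)
    have i4 : |⟪gradient V (v y τ), fderiv ℝ w (y, τ) (0, 1)⟫| ≤ MG * C₁ :=
      (abs_real_inner_le_norm _ _).trans (mul_le_mul hGb hT (norm_nonneg _) hMG0)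
    have hE1 : |⟪fderiv ℝ w (y, τ) (1, 0), fderiv ℝ w (y, τ) (1, 0)⟫ / 2 + V (v y τ)|
        ≤ C₁ * C₁ / 2 + MV := S7aux.abs_half_add i1 hVb
    have hE2 : |(⟪fderiv ℝ w (y, τ) (1, 0), fderiv ℝ (fderiv ℝ w) (y, τ) (0, 1) (1, 0)⟫
          + ⟪fderiv ℝ (fderiv ℝ w) (y, τ) (0, 1) (1, 0), fderiv ℝ w (y, τ) (1, 0)⟫) / 2
        + ⟪gradient V (v y τ), fderiv ℝ w (y, τ) (0, 1)⟫| ≤ C₁ * C₁ + MG * C₁ :=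
      S7aux.abs_comb i2 i3 i4
    rw [Real.norm_eq_abs]
    have habs : |F' τ y| ≤ |fderiv ℝ Ψ (y, τ) (0, 1)|
          * |⟪fderiv ℝ w (y, τ) (1, 0), fderiv ℝ w (y, τ) (1, 0)⟫ / 2 + V (v y τ)|
        + |ψ y τ| * |(⟪fderiv ℝ w (y, τ) (1, 0), fderiv ℝ (fderiv ℝ w) (y, τ) (0, 1) (1, 0)⟫
            + ⟪fderiv ℝ (fderiv ℝ w) (y, τ) (0, 1) (1, 0), fderiv ℝ w (y, τ) (1, 0)⟫) / 2
          + ⟪gradient V (v y τ), fderiv ℝ w (y, τ) (0, 1)⟫| := by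
      simp only [hF'def]
      exact (abs_add_le _ _).trans (le_of_eq (by rw [abs_mul, abs_mul]))
    refine habs.trans ?_
    have hq1 := mul_le_mul hψtb hE1 (abs_nonneg _) (hg0 y)
    have hq2 := mul_le_mul hψb hE2 (abs_nonneg _) (hg0 y)
    have hq3 : g y * (C₁ * C₁ / 2 + MV) + g y * (C₁ * C₁ + MG * C₁)
        = g y * (C₁ * C₁ / 2 + MV + (C₁ * C₁ + MG * C₁)) := by ring
    linarith
  -- continuity in space of F and F'
  have hcF : ∀ τ ∈ I, Continuous fun y => F τ y := by
    intro τ hτ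
    simp only [hFdef]
    exact (hcψ τ hτ).mul
      (((((hcD τ hτ).clm_apply continuous_const).inner
        ((hcD τ hτ).clm_apply continuous_const)).div_const 2).add
        (hV.continuous.comp (hcv τ hτ)))
  have hcF' : ∀ τ ∈ I, Continuous fun y => F' τ y := by
    intro τ hτ
    simp only [hF'def]
    refine Continuous.add (Continuous.mul ((hcΨD τ hτ).clm_apply continuous_const) ?_)
      (Continuous.mul (hcψ τ hτ) ?_)
    · exact ((((hcD τ hτ).clm_apply continuous_const).inner
        ((hcD τ hτ).clm_apply continuous_const)).div_const 2).add
        (hV.continuous.comp (hcv τ hτ))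
    · exact (((((hcD τ hτ).clm_apply continuous_const).inner
        (((hcD2 τ hτ).clm_apply continuous_const).clm_apply continuous_const)).add
        ((((hcD2 τ hτ).clm_apply continuous_const).clm_apply continuous_const).inner
          ((hcD τ hτ).clm_apply continuous_const))).div_const 2).add
        ((hgradcont.comp (hcv τ hτ)).inner ((hcD τ hτ).clm_apply continuous_const))
  -- differentiation under the integral sign
  have key := hasDerivAt_integral_of_dominated_loc_of_deriv_le (μ := volume) (F := F) (F' := F')
    (x₀ := t₀) (bound := fun y => g y * (C₁ * C₁ / 2 + MV + (C₁ * C₁ + MG * C₁))) (Metric.ball_mem_nhds t₀ hδpos)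
    (by filter_upwards [hIopen.mem_nhds ht₀] with τ hτ
        exact (hcF τ hτ).aestronglyMeasurable)
    (Integrable.mono' (hgint.mul_const (C₁ * C₁ / 2 + MV))
      (hcF t₀ ht₀).aestronglyMeasurable
      (Eventually.of_forall fun y => by
        rw [Real.norm_eq_abs]; exact hbF y t₀ ht₀J))
    ((hcF' t₀ ht₀).aestronglyMeasurable)
    (Eventually.of_forall fun y τ hτ => hbF' y τ (hballJ hτ))
    (hgint.mul_const _)
    (Eventually.of_forall fun y τ hτ => hFderiv y τ (hballI hτ))
  obtain ⟨hF'int, hmain⟩ := key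
  -- the statement's function agrees with τ ↦ ∫ F τ near t₀
  have hFev : (fun τ => ∫ y : ℝ, ψ y τ * (‖deriv (fun z => v z τ) y‖ ^ 2 / 2 + V (v y τ)))
      =ᶠ[𝓝 t₀] fun τ => ∫ y : ℝ, F τ y := by
    filter_upwards [hIopen.mem_nhds ht₀] with τ hτ
    congr 1
    funext y
    rw [(hvy y τ hτ).deriv]
    simp only [hFdef, real_inner_self_eq_norm_sq]
  -- integration by parts: the derivative of G y = ψ ⟪v_y, v_t⟫ integrates to zero
  set G : ℝ → ℝ := fun y =>
    ψ y t₀ * ⟪fderiv ℝ w (y, t₀) (1, 0), fderiv ℝ w (y, t₀) (0, 1)⟫ with hGdef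
  set G' : ℝ → ℝ := fun y =>
    fderiv ℝ Ψ (y, t₀) (1, 0) * ⟪fderiv ℝ w (y, t₀) (1, 0), fderiv ℝ w (y, t₀) (0, 1)⟫
      + ψ y t₀ * (⟪fderiv ℝ w (y, t₀) (1, 0), fderiv ℝ (fderiv ℝ w) (y, t₀) (1, 0) (0, 1)⟫
        + ⟪fderiv ℝ (fderiv ℝ w) (y, t₀) (1, 0) (1, 0), fderiv ℝ w (y, t₀) (0, 1)⟫) with hG'def
  have hGderiv : ∀ y : ℝ, HasDerivAt G (G' y) y := by
    intro y
    exact (hψy y t₀ ht₀).mul (HasDerivAt.inner ℝ (hvyy y t₀ ht₀) (hvty y t₀ ht₀))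
  have hGcont : Continuous G := by
    simp only [hGdef]
    exact (hcψ t₀ ht₀).mul (((hcD t₀ ht₀).clm_apply continuous_const).inner
      ((hcD t₀ ht₀).clm_apply continuous_const))
  have hG'cont : Continuous G' := by
    simp only [hG'def]
    exact (((hcΨD t₀ ht₀).clm_apply continuous_const).mul
        (((hcD t₀ ht₀).clm_apply continuous_const).inner
          ((hcD t₀ ht₀).clm_apply continuous_const))).add
      ((hcψ t₀ ht₀).mul ((((hcD t₀ ht₀).clm_apply continuous_const).inner
          (((hcD2 t₀ ht₀).clm_apply continuous_const).clm_apply continuous_const)).add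
        ((((hcD2 t₀ ht₀).clm_apply continuous_const).clm_apply continuous_const).inner
          ((hcD t₀ ht₀).clm_apply continuous_const))))
  have hGint : Integrable G := by
    refine Integrable.mono' (hgint.mul_const (C₁ * C₁)) hGcont.aestronglyMeasurable
      (Eventually.of_forall fun y => ?_)
    simp only [hGdef]
    rw [Real.norm_eq_abs, abs_mul]
    exact mul_le_mul (hbψ y t₀ ht₀J) ((abs_real_inner_le_norm _ _).trans
      (mul_le_mul (hbvy y t₀ ht₀J) (hbvt y t₀ ht₀J) (norm_nonneg _) hC₁0))
      (abs_nonneg _) (hg0 y)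
  have hG'int : Integrable G' := by
    refine Integrable.mono' (hgint.mul_const (C₁ * C₁ + (C₁ * C₁ + C₁ * C₁)))
      hG'cont.aestronglyMeasurable (Eventually.of_forall fun y => ?_)
    have hX : ‖fderiv ℝ w (y, t₀) (1, 0)‖ ≤ C₁ := hbvy y t₀ ht₀J
    have hT : ‖fderiv ℝ w (y, t₀) (0, 1)‖ ≤ C₁ := hbvt y t₀ ht₀J
    have hM1 : ‖fderiv ℝ (fderiv ℝ w) (y, t₀) (1, 0) (0, 1)‖ ≤ C₁ :=
      hbD2 y t₀ ht₀J _ _ S7aux.norm_one_zero S7aux.norm_zero_one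
    have hM2 : ‖fderiv ℝ (fderiv ℝ w) (y, t₀) (1, 0) (1, 0)‖ ≤ C₁ :=
      hbD2 y t₀ ht₀J _ _ S7aux.norm_one_zero S7aux.norm_one_zero
    have i1 : |⟪fderiv ℝ w (y, t₀) (1, 0), fderiv ℝ w (y, t₀) (0, 1)⟫| ≤ C₁ * C₁ :=
      (abs_real_inner_le_norm _ _).trans (mul_le_mul hX hT (norm_nonneg _) hC₁0)
    have i2 : |⟪fderiv ℝ w (y, t₀) (1, 0), fderiv ℝ (fderiv ℝ w) (y, t₀) (1, 0) (0, 1)⟫|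
        ≤ C₁ * C₁ :=
      (abs_real_inner_le_norm _ _).trans (mul_le_mul hX hM1 (norm_nonneg _) hC₁0)
    have i3 : |⟪fderiv ℝ (fderiv ℝ w) (y, t₀) (1, 0) (1, 0), fderiv ℝ w (y, t₀) (0, 1)⟫|
        ≤ C₁ * C₁ :=
      (abs_real_inner_le_norm _ _).trans (mul_le_mul hM2 hT (norm_nonneg _) hC₁0)
    have hs : |⟪fderiv ℝ w (y, t₀) (1, 0), fderiv ℝ (fderiv ℝ w) (y, t₀) (1, 0) (0, 1)⟫
        + ⟪fderiv ℝ (fderiv ℝ w) (y, t₀) (1, 0) (1, 0), fderiv ℝ w (y, t₀) (0, 1)⟫|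
        ≤ C₁ * C₁ + C₁ * C₁ := (abs_add_le _ _).trans (add_le_add i2 i3)
    have habs : |G' y| ≤ |fderiv ℝ Ψ (y, t₀) (1, 0)|
          * |⟪fderiv ℝ w (y, t₀) (1, 0), fderiv ℝ w (y, t₀) (0, 1)⟫|
        + |ψ y t₀| * |⟪fderiv ℝ w (y, t₀) (1, 0), fderiv ℝ (fderiv ℝ w) (y, t₀) (1, 0) (0, 1)⟫
          + ⟪fderiv ℝ (fderiv ℝ w) (y, t₀) (1, 0) (1, 0), fderiv ℝ w (y, t₀) (0, 1)⟫| := by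
      simp only [hG'def]
      exact (abs_add_le _ _).trans (le_of_eq (by rw [abs_mul, abs_mul]))
    rw [Real.norm_eq_abs]
    refine habs.trans ?_
    have hq1 := mul_le_mul (hbψy y t₀ ht₀J) i1 (abs_nonneg _) (hg0 y)
    have hq2 := mul_le_mul (hbψ y t₀ ht₀J) hs (abs_nonneg _) (hg0 y)
    have hq3 : g y * (C₁ * C₁) + g y * (C₁ * C₁ + C₁ * C₁)
        = g y * (C₁ * C₁ + (C₁ * C₁ + C₁ * C₁)) := by ring
    linarith
  have hGzero : ∫ y : ℝ, G' y = 0 :=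
    integral_eq_zero_of_hasDerivAt_of_integrable hGderiv hG'int hGint
  -- pointwise identity F' t₀ = target + G'
  set T : ℝ → ℝ := fun y =>
    -(ψ y t₀) * ⟪fderiv ℝ w (y, t₀) (0, 1), fderiv ℝ w (y, t₀) (0, 1)⟫
      + fderiv ℝ Ψ (y, t₀) (0, 1)
        * (⟪fderiv ℝ w (y, t₀) (1, 0), fderiv ℝ w (y, t₀) (1, 0)⟫ / 2 + V (v y t₀))
      + (c * ψ y t₀ - fderiv ℝ Ψ (y, t₀) (1, 0))
        * ⟪fderiv ℝ w (y, t₀) (1, 0), fderiv ℝ w (y, t₀) (0, 1)⟫ with hTdef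
  have hid : ∀ y : ℝ, F' t₀ y = T y + G' y := by
    intro y
    simp only [hF'def, hG'def, hTdef]
    rw [hpde y t₀ ht₀]
    rw [hsymm y t₀ ht₀]
    rw [inner_sub_left, inner_add_left, real_inner_smul_left]
    rw [real_inner_comm (fderiv ℝ (fderiv ℝ w) (y, t₀) (0, 1) (1, 0))
      (fderiv ℝ w (y, t₀) (1, 0))]
    ring
  have hTint : Integrable T := by
    have h : T = fun y => F' t₀ y - G' y := funext fun y => by rw [hid y]; ring
    rw [h]
    exact hF'int.sub hG'int
  have hval : ∫ y : ℝ, F' t₀ y = ∫ y : ℝ, T y := by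
    have h1 : (fun y => F' t₀ y) = fun y => T y + G' y := funext hid
    rw [h1, integral_add hTint hG'int, hGzero, add_zero]
  have hfinal : (∫ y : ℝ, T y) = ∫ y : ℝ,
      (-(ψ y t₀) * ‖deriv (fun s => v y s) t₀‖ ^ 2
        + deriv (fun s => ψ y s) t₀ * (‖deriv (fun z => v z t₀) y‖ ^ 2 / 2 + V (v y t₀))
        + (c * ψ y t₀ - deriv (fun z => ψ z t₀) y) *
            (inner ℝ (deriv (fun z => v z t₀) y) (deriv (fun s => v y s) t₀) : ℝ)) := by
    congr 1
    funext y
    rw [(hvy y t₀ ht₀).deriv, (hvt y t₀ ht₀).deriv, (hψy y t₀ ht₀).deriv, (hψt y t₀ ht₀).deriv]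
    simp only [hTdef, real_inner_self_eq_norm_sq]
  have hEq : (∫ y : ℝ, F' t₀ y) = ∫ y : ℝ,
      (-(ψ y t₀) * ‖deriv (fun s => v y s) t₀‖ ^ 2
        + deriv (fun s => ψ y s) t₀ * (‖deriv (fun z => v z t₀) y‖ ^ 2 / 2 + V (v y t₀))
        + (c * ψ y t₀ - deriv (fun z => ψ z t₀) y) *
            (inner ℝ (deriv (fun z => v z t₀) y) (deriv (fun s => v y s) t₀) : ℝ)) :=
    hval.trans hfinal
  rw [← hEq]
  exact hmain.congr_of_eventuallyEq hFev


end
end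

section
/- Assume V : ℝ^n → ℝ is of class C², satisfies (Hcoerc), all critical points of V are nondegenerate, 0 ∈ M and V(0) = 0. Define κ₀ = min( √(2/ρ₀), √(λ_min/2) ) and d_esc = d_Esc · √( min(ρ₀/2, 1/4) / ((1+κ₀)/2) ). Then for every bounded C¹ function w : ℝ → ℝ^n with bounded derivative and every ξ ∈ ℝ: if ∫_ℝ e^{−κ₀|x−ξ|} ( ρ₀ ( |w'(x)|²/2 + V(w(x)) ) + |w(x)|²/2 ) dx ≤ d_esc², then |w(ξ)| ≤ d_Esc. -/
open Filter Topology Set MeasureTheory Real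

noncomputable section

variable {n : ℕ}

/-- `ρ₀ := 1 / max(1, -4 q_low)`, the weighting of the energy in the firewall
functions, defined from the convexity `q_low` of the lower quadratic hulls. -/
def rho0 (qlow : ℝ) : ℝ := 1 / max 1 (-(4 * qlow))

/-- `κ₀`, the decay rate of the weight of the firewall function in the laboratory
frame. -/
def kappa0 (qlow lamMin : ℝ) : ℝ :=
  min (Real.sqrt (2 / rho0 qlow)) (Real.sqrt (lamMin / 2))

/-- The small escape distance `d_esc`, measuring closeness to the minimum point in
terms of the firewall function. -/
def descSmall (qlow lamMin dEsc : ℝ) : ℝ :=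
  dEsc * Real.sqrt (min (rho0 qlow / 2) (1 / 4) / ((1 + kappa0 qlow lamMin) / 2))

private lemma integrable_exp_neg_abs_aux : Integrable (fun x : ℝ => Real.exp (-|x|)) := by
  have h1 : IntegrableOn (fun x : ℝ => Real.exp (-|x|)) (Iic (0:ℝ)) :=
    (integrableOn_exp_Iic 0).congr_fun (fun x hx => by
      simp [abs_of_nonpos (mem_Iic.1 hx)]) measurableSet_Iic
  have h2 : IntegrableOn (fun x : ℝ => Real.exp (-|x|)) (Ioi (0:ℝ)) :=
    (exp_neg_integrableOn_Ioi 0 one_pos).congr_fun (fun x hx => by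
      simp [abs_of_pos (mem_Ioi.1 hx)]) measurableSet_Ioi
  have h := h1.union h2
  rw [Iic_union_Ioi] at h; exact integrableOn_univ.1 h

private lemma integrable_exp_neg_mul_abs_sub (κ ξ : ℝ) (hκ : 0 < κ) :
    Integrable (fun x : ℝ => Real.exp (-(κ * |x - ξ|))) := by
  have h1 : Integrable (fun x : ℝ => Real.exp (-|κ * x|)) :=
    integrable_exp_neg_abs_aux.comp_mul_left' hκ.ne'
  have h2 : Integrable (fun x : ℝ => Real.exp (-(κ * |x|))) := by
    simpa [abs_mul, abs_of_pos hκ] using h1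
  simpa using h2.comp_sub_right ξ

set_option maxHeartbeats 1000000 in

set_option maxHeartbeats 1000000 in
/-- Lemma "escape/Escape": smallness of the firewall controls the distance to the
minimum point. -/
theorem statement9
    (n : ℕ) (hn : 1 ≤ n) (V : EuclideanSpace ℝ (Fin n) → ℝ)
    (hV : ContDiff ℝ 2 V) (hcoerc : Hcoerc V)
    (hnondeg : ∀ u : EuclideanSpace ℝ (Fin n), gradient V u = 0 →
      ∀ w : EuclideanSpace ℝ (Fin n), w ≠ 0 → hessian V u w ≠ 0)
    (h0 : IsMinPt V (0 : EuclideanSpace ℝ (Fin n))) (hV0 : V 0 = 0)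
    (lamMin lamMax dEsc : ℝ) (hlamMin : 0 < lamMin) (hlam : lamMin ≤ lamMax)
    (hdEsc : 0 < dEsc) (hsand : EscSandwich V lamMin lamMax dEsc)
    (qlow : ℝ)
    (hqlow : ∀ m : EuclideanSpace ℝ (Fin n), IsMinPt V m →
      ∀ u : EuclideanSpace ℝ (Fin n), qlow * ‖u - m‖ ^ 2 ≤ V u - V m) :
    ∀ w : ℝ → EuclideanSpace ℝ (Fin n), ContDiff ℝ 1 w →
      (∃ C, ∀ x : ℝ, ‖w x‖ ≤ C ∧ ‖deriv w x‖ ≤ C) →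
      ∀ ξ : ℝ,
        (∫ x : ℝ, exp (-(kappa0 qlow lamMin * |x - ξ|)) *
            (rho0 qlow * (‖deriv w x‖ ^ 2 / 2 + V (w x)) + ‖w x‖ ^ 2 / 2))
          ≤ (descSmall qlow lamMin dEsc) ^ 2 →
        ‖w ξ‖ ≤ dEsc := by
  intro w hw hbd ξ hI
  have hqlow0 : ∀ u : EuclideanSpace ℝ (Fin n), qlow * ‖u - 0‖ ^ 2 ≤ V u - V 0 :=
    hqlow 0 h0
  obtain ⟨C, hC⟩ := hbd
  have hC0 : 0 ≤ C := le_trans (norm_nonneg _) (hC 0).1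
  set ρ : ℝ := rho0 qlow with hρdef
  set κ : ℝ := kappa0 qlow lamMin with hκdef
  have hMpos : (0:ℝ) < max 1 (-(4 * qlow)) := lt_of_lt_of_le one_pos (le_max_left _ _)
  have hρpos : 0 < ρ := by rw [hρdef, rho0]; positivity
  have hρq : ρ * (-(4 * qlow)) ≤ 1 := by
    calc ρ * (-(4*qlow)) ≤ ρ * max 1 (-(4*qlow)) :=
          mul_le_mul_of_nonneg_left (le_max_right _ _) hρpos.le
      _ = 1 := by rw [hρdef, rho0]; field_simp
  have hκpos : 0 < κ := by
    rw [hκdef, kappa0, ← hρdef]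
    exact lt_min (Real.sqrt_pos.2 (by positivity)) (Real.sqrt_pos.2 (by positivity))
  set μ : ℝ := min (ρ / 2) (1/4 : ℝ) with hμdef
  have hμpos : 0 < μ := lt_min (by positivity) (by norm_num)
  set E : ℝ → ℝ := fun x => Real.exp (-(κ * |x - ξ|)) with hEdef
  have hEpos : ∀ x, 0 < E x := fun x => Real.exp_pos _
  have hEint : Integrable E := integrable_exp_neg_mul_abs_sub κ ξ hκpos
  have hEc : Continuous E :=
    Real.continuous_exp.comp ((continuous_const.mul ((continuous_id.sub continuous_const).abs)).neg)
  -- basic facts about w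
  have hwc : Continuous w := hw.continuous
  have hw'c : Continuous (deriv w) := hw.continuous_deriv le_rfl
  set g : ℝ → ℝ := fun x => ‖w x‖ ^ 2 with hgdef
  set g' : ℝ → ℝ := fun x => 2 * (inner ℝ (w x) (deriv w x) : ℝ) with hg'def
  have hgeq : ∀ x, g x = ‖w x‖ ^ 2 := fun _ => rfl
  have hg : ∀ x, HasDerivAt g (g' x) x := fun x =>
    ((hw.differentiable one_ne_zero x).hasDerivAt).norm_sq
  have hgc : Continuous g := (hwc.norm).pow 2
  have hg'c : Continuous g' := continuous_const.mul (hwc.inner hw'c)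
  have hgnn : ∀ x, 0 ≤ g x := fun x => sq_nonneg _
  have hgbd : ∀ x, g x ≤ C ^ 2 := fun x =>
    pow_le_pow_left₀ (norm_nonneg _) (hC x).1 2
  have hw'bd : ∀ x, ‖deriv w x‖ ^ 2 ≤ C ^ 2 := fun x =>
    pow_le_pow_left₀ (norm_nonneg _) (hC x).2 2
  have hg'bd : ∀ x, |g' x| ≤ ‖w x‖ ^ 2 + ‖deriv w x‖ ^ 2 := by
    intro x
    have h1 : |(inner ℝ (w x) (deriv w x) : ℝ)| ≤ ‖w x‖ * ‖deriv w x‖ :=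
      abs_real_inner_le_norm _ _
    rw [hg'def, abs_mul, abs_two]
    nlinarith [sq_nonneg (‖w x‖ - ‖deriv w x‖), norm_nonneg (w x), norm_nonneg (deriv w x)]
  have hg'bdC : ∀ x, |g' x| ≤ 2 * C ^ 2 := fun x =>
    le_trans (hg'bd x) (by linarith [hgbd x, hw'bd x, hgeq x])
  -- the integrand
  set B : ℝ → ℝ := fun x => ρ * (‖deriv w x‖ ^ 2 / 2 + V (w x)) + ‖w x‖ ^ 2 / 2 with hBdef
  have hBc : Continuous B := by
    apply Continuous.add _ ((hwc.norm.pow 2).div_const 2)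
    exact continuous_const.mul (((hw'c.norm.pow 2).div_const 2).add (hV.continuous.comp hwc))
  obtain ⟨KV, hKV⟩ : ∃ K, ∀ x, |V (w x)| ≤ K := by
    obtain ⟨K, hK⟩ := (isCompact_closedBall (0 : EuclideanSpace ℝ (Fin n)) C).exists_bound_of_continuousOn
      (hV.continuous.continuousOn)
    exact ⟨K, fun x => by
      simpa [Real.norm_eq_abs] using hK (w x) (mem_closedBall_zero_iff.2 (hC x).1)⟩
  set KB : ℝ := ρ * (C ^ 2 / 2 + KV) + C ^ 2 / 2 with hKBdef
  have hBbd : ∀ x, |B x| ≤ KB := by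
    intro x
    have h4 := abs_le.1 (hKV x)
    have h2 := hw'bd x
    have h3 := hgbd x
    have h5 := hgeq x
    have h6 := sq_nonneg ‖deriv w x‖
    have h7 := sq_nonneg ‖w x‖
    simp only [hBdef, hKBdef]
    rw [abs_le]
    constructor <;> nlinarith [hρpos.le, h4.1, h4.2]
  have hBlow : ∀ x, μ * (‖w x‖ ^ 2 + ‖deriv w x‖ ^ 2) ≤ B x := by
    intro x
    have hq := hqlow0 (w x)
    rw [sub_zero, hV0, sub_zero] at hq
    have h1 : ρ * (qlow * ‖w x‖ ^ 2) ≤ ρ * V (w x) := mul_le_mul_of_nonneg_left hq hρpos.le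
    have h2 : -(1/4 : ℝ) * ‖w x‖ ^ 2 ≤ ρ * qlow * ‖w x‖ ^ 2 :=
      mul_le_mul_of_nonneg_right (by nlinarith) (sq_nonneg _)
    have hμ1 : μ ≤ ρ / 2 := min_le_left _ _
    have hμ2 : μ ≤ 1/4 := min_le_right _ _
    simp only [hBdef]
    nlinarith [sq_nonneg ‖w x‖, sq_nonneg ‖deriv w x‖]
  -- upper comparison function U
  set U : ℝ → ℝ := fun x => E x * (κ * g x + |g' x|) with hUdef
  have hUc : Continuous U := hEc.mul ((continuous_const.mul hgc).add hg'c.abs)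
  have hUbd : ∀ x, ‖U x‖ ≤ (κ * C ^ 2 + 2 * C ^ 2) * E x := by
    intro x
    have h0 : abs (κ * g x + |g' x|) = κ * g x + |g' x| :=
      abs_of_nonneg (add_nonneg (mul_nonneg hκpos.le (hgnn x)) (abs_nonneg _))
    calc ‖U x‖ = E x * (κ * g x + |g' x|) := by
          rw [Real.norm_eq_abs, hUdef]; simp only []
          rw [abs_mul, abs_of_pos (hEpos x), h0]
      _ ≤ E x * (κ * C ^ 2 + 2 * C ^ 2) := by
          apply mul_le_mul_of_nonneg_left _ (hEpos x).le
          nlinarith [hgbd x, hg'bdC x, hκpos.le, hgnn x]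
      _ = (κ * C ^ 2 + 2 * C ^ 2) * E x := mul_comm _ _
  have hUint : Integrable U :=
    (hEint.const_mul (κ * C ^ 2 + 2 * C ^ 2)).mono' hUc.aestronglyMeasurable
      (ae_of_all _ hUbd)
  -- the firewall integrand W
  set W : ℝ → ℝ := fun x => E x * B x with hWdef
  have hWc : Continuous W := hEc.mul hBc
  have hWbd : ∀ x, ‖W x‖ ≤ KB * E x := by
    intro x
    calc ‖W x‖ = E x * |B x| := by
          rw [Real.norm_eq_abs, hWdef]; simp only []
          rw [abs_mul, abs_of_pos (hEpos x)]
      _ ≤ E x * KB := mul_le_mul_of_nonneg_left (hBbd x) (hEpos x).le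
      _ = KB * E x := mul_comm _ _
  have hWint : Integrable W :=
    (hEint.const_mul KB).mono' hWc.aestronglyMeasurable (ae_of_all _ hWbd)
  -- derivative-difference bounds
  have habs_sub : ∀ x, |g' x - κ * g x| ≤ (2 + κ) * C ^ 2 := by
    intro x
    have h1 := abs_le.1 (hg'bdC x)
    rw [abs_le]
    constructor <;> nlinarith [hκpos.le, hgbd x, hgnn x]
  have habs_add : ∀ x, |g' x + κ * g x| ≤ (2 + κ) * C ^ 2 := by
    intro x
    have h1 := abs_le.1 (hg'bdC x)
    rw [abs_le]
    constructor <;> nlinarith [hκpos.le, hgbd x, hgnn x]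
  ------------------------------------------------------------------
  -- FTC on (ξ, ∞)
  have hexp_deriv : ∀ x : ℝ, HasDerivAt (fun y => Real.exp (-(κ * (y - ξ))))
      (-κ * Real.exp (-(κ * (x - ξ)))) x := by
    intro x
    have h1 : HasDerivAt (fun y : ℝ => -(κ * (y - ξ))) (-κ) x := by
      simpa using (((hasDerivAt_id x).sub_const ξ).const_mul κ).fun_neg
    simpa [mul_comm] using h1.exp
  have hDplus : ∀ x : ℝ, HasDerivAt (fun y => Real.exp (-(κ * (y - ξ))) * g y)
      (Real.exp (-(κ * (x - ξ))) * (g' x - κ * g x)) x := by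
    intro x
    have h := (hexp_deriv x).fun_mul (hg x)
    exact h.congr_deriv (by ring)
  have hEexpc : Continuous (fun x : ℝ => Real.exp (-(κ * (x - ξ)))) :=
    Real.continuous_exp.comp ((continuous_const.mul (continuous_id.sub continuous_const)).neg)
  have hDplusInt : IntegrableOn
      (fun x => Real.exp (-(κ * (x - ξ))) * (g' x - κ * g x)) (Ioi ξ) := by
    apply Integrable.mono' ((hEint.const_mul ((2 + κ) * C ^ 2)).integrableOn)
    · exact (hEexpc.mul (hg'c.sub (continuous_const.mul hgc))).aestronglyMeasurable.restrict
    · rw [ae_restrict_iff' measurableSet_Ioi]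
      refine ae_of_all _ fun x hx => ?_
      have habs : |x - ξ| = x - ξ := abs_of_nonneg (sub_nonneg.2 (le_of_lt hx))
      have hEq : E x = Real.exp (-(κ * (x - ξ))) := by
        simp only [hEdef, habs]
      rw [Real.norm_eq_abs, abs_mul, abs_of_pos (Real.exp_pos _), ← hEq, mul_comm]
      exact mul_le_mul_of_nonneg_right (habs_sub x) (hEpos x).le
  have htend_plus : Tendsto (fun y => Real.exp (-(κ * (y - ξ))) * g y) atTop (𝓝 0) := by
    have h1 : Tendsto (fun y : ℝ => κ * (y - ξ)) atTop atTop := by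
      have := (tendsto_atTop_add_const_right atTop (-ξ) tendsto_id).const_mul_atTop hκpos
      simpa [sub_eq_add_neg] using this
    have h2 : Tendsto (fun y : ℝ => Real.exp (-(κ * (y - ξ)))) atTop (𝓝 0) := by
      have := Real.tendsto_exp_neg_atTop_nhds_zero.comp h1
      simpa [Function.comp_def] using this
    have h3 := h2.mul_const (C ^ 2)
    rw [zero_mul] at h3
    refine squeeze_zero_norm (fun y => ?_) h3
    rw [Real.norm_eq_abs, abs_mul, abs_of_pos (Real.exp_pos _), abs_of_nonneg (hgnn y)]
    exact mul_le_mul_of_nonneg_left (hgbd y) (Real.exp_pos _).le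
  have hIoi : ∫ x in Ioi ξ, Real.exp (-(κ * (x - ξ))) * (g' x - κ * g x)
      = 0 - Real.exp (-(κ * (ξ - ξ))) * g ξ :=
    integral_Ioi_of_hasDerivAt_of_tendsto' (fun x _ => hDplus x) hDplusInt htend_plus
  have hIoi' : ∫ x in Ioi ξ, Real.exp (-(κ * (x - ξ))) * (g' x - κ * g x) = -g ξ := by
    rw [hIoi]; simp
  have hplus : g ξ ≤ ∫ x in Ioi ξ, U x := by
    have hneg : ∫ x in Ioi ξ, -(Real.exp (-(κ * (x - ξ))) * (g' x - κ * g x)) = g ξ := by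
      rw [integral_neg, hIoi']; ring
    rw [← hneg]
    apply setIntegral_mono_on hDplusInt.neg hUint.integrableOn measurableSet_Ioi
    intro x hx
    have habs : |x - ξ| = x - ξ := abs_of_nonneg (sub_nonneg.2 (le_of_lt hx))
    have hEq : E x = Real.exp (-(κ * (x - ξ))) := by simp only [hEdef, habs]
    have h1 : κ * g x - g' x ≤ κ * g x + |g' x| := by linarith [neg_abs_le (g' x)]
    have h2 := mul_le_mul_of_nonneg_left h1 (Real.exp_pos (-(κ * (x - ξ)))).le
    calc -(Real.exp (-(κ * (x - ξ))) * (g' x - κ * g x))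
        = Real.exp (-(κ * (x - ξ))) * (κ * g x - g' x) := by ring
      _ ≤ Real.exp (-(κ * (x - ξ))) * (κ * g x + |g' x|) := h2
      _ = U x := by simp only [hUdef]; rw [hEq]
  ------------------------------------------------------------------
  -- FTC on (-∞, ξ]
  have hexp_deriv2 : ∀ x : ℝ, HasDerivAt (fun y => Real.exp (-(κ * (ξ - y))))
      (κ * Real.exp (-(κ * (ξ - x)))) x := by
    intro x
    have h1 : HasDerivAt (fun y : ℝ => -(κ * (ξ - y))) κ x := by
      simpa using (((hasDerivAt_id x).const_sub ξ).const_mul κ).fun_neg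
    simpa [mul_comm] using h1.exp
  have hDminus : ∀ x : ℝ, HasDerivAt (fun y => Real.exp (-(κ * (ξ - y))) * g y)
      (Real.exp (-(κ * (ξ - x))) * (g' x + κ * g x)) x := by
    intro x
    have h := (hexp_deriv2 x).fun_mul (hg x)
    exact h.congr_deriv (by ring)
  have hEexpc2 : Continuous (fun x : ℝ => Real.exp (-(κ * (ξ - x)))) :=
    Real.continuous_exp.comp ((continuous_const.mul (continuous_const.sub continuous_id)).neg)
  have hDminusInt : IntegrableOn
      (fun x => Real.exp (-(κ * (ξ - x))) * (g' x + κ * g x)) (Iic ξ) := by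
    apply Integrable.mono' ((hEint.const_mul ((2 + κ) * C ^ 2)).integrableOn)
    · exact (hEexpc2.mul (hg'c.add (continuous_const.mul hgc))).aestronglyMeasurable.restrict
    · rw [ae_restrict_iff' measurableSet_Iic]
      refine ae_of_all _ fun x hx => ?_
      have habs : |x - ξ| = ξ - x := by
        rw [abs_of_nonpos (sub_nonpos.2 hx), neg_sub]
      have hEq : E x = Real.exp (-(κ * (ξ - x))) := by simp only [hEdef, habs]
      rw [Real.norm_eq_abs, abs_mul, abs_of_pos (Real.exp_pos _), ← hEq, mul_comm]
      exact mul_le_mul_of_nonneg_right (habs_add x) (hEpos x).le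
  have htend_minus : Tendsto (fun y => Real.exp (-(κ * (ξ - y))) * g y) atBot (𝓝 0) := by
    have h1 : Tendsto (fun y : ℝ => κ * (ξ - y)) atBot atTop := by
      have h0 : Tendsto (fun y : ℝ => ξ - y) atBot atTop := by
        have := tendsto_atTop_add_const_left atBot ξ tendsto_neg_atBot_atTop
        simpa [sub_eq_add_neg] using this
      exact h0.const_mul_atTop hκpos
    have h2 : Tendsto (fun y : ℝ => Real.exp (-(κ * (ξ - y)))) atBot (𝓝 0) := by
      have := Real.tendsto_exp_neg_atTop_nhds_zero.comp h1
      simpa [Function.comp_def] using this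
    have h3 := h2.mul_const (C ^ 2)
    rw [zero_mul] at h3
    refine squeeze_zero_norm (fun y => ?_) h3
    rw [Real.norm_eq_abs, abs_mul, abs_of_pos (Real.exp_pos _), abs_of_nonneg (hgnn y)]
    exact mul_le_mul_of_nonneg_left (hgbd y) (Real.exp_pos _).le
  have hIic : ∫ x in Iic ξ, Real.exp (-(κ * (ξ - x))) * (g' x + κ * g x)
      = Real.exp (-(κ * (ξ - ξ))) * g ξ - 0 :=
    integral_Iic_of_hasDerivAt_of_tendsto' (fun x _ => hDminus x) hDminusInt htend_minus
  have hIic' : ∫ x in Iic ξ, Real.exp (-(κ * (ξ - x))) * (g' x + κ * g x) = g ξ := by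
    rw [hIic]; simp
  have hminus : g ξ ≤ ∫ x in Iic ξ, U x := by
    rw [← hIic']
    apply setIntegral_mono_on hDminusInt hUint.integrableOn measurableSet_Iic
    intro x hx
    have habs : |x - ξ| = ξ - x := by
      rw [abs_of_nonpos (sub_nonpos.2 hx), neg_sub]
    have hEq : E x = Real.exp (-(κ * (ξ - x))) := by simp only [hEdef, habs]
    have h1 : g' x + κ * g x ≤ κ * g x + |g' x| := by linarith [le_abs_self (g' x)]
    have h2 := mul_le_mul_of_nonneg_left h1 (Real.exp_pos (-(κ * (ξ - x)))).le
    calc Real.exp (-(κ * (ξ - x))) * (g' x + κ * g x)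
        ≤ Real.exp (-(κ * (ξ - x))) * (κ * g x + |g' x|) := h2
      _ = U x := by simp only [hUdef]; rw [hEq]
  ------------------------------------------------------------------
  -- combine
  have hsum : 2 * g ξ ≤ ∫ x, U x := by
    have h := intervalIntegral.integral_Iic_add_Ioi (b := ξ) hUint.integrableOn hUint.integrableOn
    linarith [hplus, hminus]
  have hclaim : ∀ x, μ * U x ≤ (1 + κ) * W x := by
    intro x
    have h1 : κ * g x + |g' x| ≤ (1 + κ) * (‖w x‖ ^ 2 + ‖deriv w x‖ ^ 2) := by
      have h := hg'bd x
      have hgx := hgeq x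
      nlinarith [hκpos.le, sq_nonneg ‖deriv w x‖, sq_nonneg ‖w x‖]
    have h2 := hBlow x
    have hE := (hEpos x).le
    have h1κ : (0:ℝ) ≤ 1 + κ := by linarith [hκpos.le]
    simp only [hUdef, hWdef]
    nlinarith [mul_le_mul_of_nonneg_left h1 (mul_nonneg hμpos.le hE),
      mul_le_mul_of_nonneg_left h2 (mul_nonneg h1κ hE)]
  have hintmono : μ * ∫ x, U x ≤ (1 + κ) * ∫ x, W x := by
    rw [← integral_const_mul, ← integral_const_mul]
    exact integral_mono (hUint.const_mul μ) (hWint.const_mul (1 + κ)) hclaim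
  have hds : descSmall qlow lamMin dEsc ^ 2 = dEsc ^ 2 * (μ / ((1 + κ) / 2)) := by
    rw [descSmall, mul_pow,
      Real.sq_sqrt (div_nonneg hμpos.le (by linarith [hκpos.le] : (0:ℝ) ≤ (1 + κ) / 2))]
  have hWle : (∫ x, W x) ≤ dEsc ^ 2 * (μ / ((1 + κ) / 2)) := by
    rw [← hds]; exact hI
  have h1κ : (0:ℝ) < 1 + κ := by linarith
  have hfin1 : μ * (2 * g ξ) ≤ μ * ∫ x, U x := mul_le_mul_of_nonneg_left hsum hμpos.le
  have hfin2 : (1 + κ) * ∫ x, W x ≤ (1 + κ) * (dEsc ^ 2 * (μ / ((1 + κ) / 2))) :=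
    mul_le_mul_of_nonneg_left hWle h1κ.le
  have hfin3 : (1 + κ) * (dEsc ^ 2 * (μ / ((1 + κ) / 2))) = 2 * μ * dEsc ^ 2 := by
    field_simp
  have hgξ : g ξ ≤ dEsc ^ 2 := by nlinarith
  have hgξ' : ‖w ξ‖ ^ 2 ≤ dEsc ^ 2 := hgξ
  exact le_of_pow_le_pow_left₀ two_ne_zero hdEsc.le hgξ'

end
end

section
/- Let c₀ > 0 and let x : [0,+∞) → ℝ satisfy x(t+s) ≤ x(t) + c₀ s for all t, s ≥ 0. Define x̄(s) = sup_{t ≥ 0} ( x(t+s) − x(t) ), c_inf = liminf_{t→+∞} x(t)/t, and c̄_sup = limsup_{s→+∞} x̄(s)/s. If c is a real number with c_inf < c < c̄_sup, then there exist sequences (t_p), (s_p) and (s̄_p) of real numbers such that: for every p, t_p ≥ 0 and 0 ≤ s_p ≤ s̄_p; x(t_p + s_p) − x(t_p) − c s_p → +∞ as p → +∞; and, for every p, x(t_p + s̄_p) − x(t_p) − c s̄_p ≤ 0. -/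
open Filter Topology Set

/-- Large excursions to the right and returns for the escape point in a frame
travelling at speed `c`. -/
theorem statement14
    (c₀ : ℝ) (hc₀ : 0 < c₀) (x : ℝ → ℝ)
    (hx : ∀ t s : ℝ, 0 ≤ t → 0 ≤ s → x (t + s) ≤ x t + c₀ * s) (c : ℝ)
    (h1 : Filter.liminf (fun t => x t / t) atTop < c)
    (h2 : c < Filter.limsup
        (fun s => sSup ((fun t => x (t + s) - x t) '' Ici 0) / s) atTop) :
    ∃ t s sbar : ℕ → ℝ,
      (∀ p, 0 ≤ t p ∧ 0 ≤ s p ∧ s p ≤ sbar p) ∧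
      Tendsto (fun p => x (t p + s p) - x (t p) - c * s p) atTop atTop ∧
      ∀ p, x (t p + sbar p) - x (t p) - c * sbar p ≤ 0 := by
  set f : ℝ → ℝ := fun t => x t / t with hf
  set g : ℝ → ℝ := fun s => sSup ((fun t => x (t + s) - x t) '' Ici 0) / s with hg
  have hne : ∀ s : ℝ, ((fun t => x (t + s) - x t) '' Ici 0).Nonempty :=
    fun s => ⟨x (0 + s) - x 0, ⟨0, mem_Ici.mpr le_rfl, rfl⟩⟩
  have hbdd : ∀ s : ℝ, 0 ≤ s → ∀ y ∈ ((fun t => x (t + s) - x t) '' Ici 0), y ≤ c₀ * s := by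
    rintro s hs y ⟨t, ht, rfl⟩
    have := hx t s ht hs
    simp only at *
    linarith
  have hBdd : ∀ s : ℝ, 0 ≤ s → BddAbove ((fun t => x (t + s) - x t) '' Ici 0) :=
    fun s hs => ⟨c₀ * s, hbdd s hs⟩
  -- lower bound on g
  have hgge : ∀ s : ℝ, 0 < s → (x s - x 0) / s ≤ g s := by
    intro s hs
    have hmem : x s - x 0 ∈ ((fun t => x (t + s) - x t) '' Ici 0) :=
      ⟨0, mem_Ici.mpr le_rfl, by simp⟩
    have := le_csSup (hBdd s hs.le) hmem
    exact div_le_div_of_nonneg_right this hs.le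
  -- f eventually bounded above
  have hfub : ∀ᶠ t in atTop, f t ≤ c₀ + 1 := by
    filter_upwards [eventually_ge_atTop (max 1 |x 0|)] with t ht
    have ht1 : (1:ℝ) ≤ t := le_trans (le_max_left _ _) ht
    have htpos : (0:ℝ) < t := lt_of_lt_of_le one_pos ht1
    have hxt : x t ≤ x 0 + c₀ * t := by
      have := hx 0 t le_rfl htpos.le
      simpa using this
    have hx0 : x 0 ≤ t := le_trans (le_abs_self _) (le_trans (le_max_right _ _) ht)
    have : x t ≤ t + c₀ * t := by linarith
    calc f t = x t / t := rfl
      _ ≤ (t + c₀ * t) / t := div_le_div_of_nonneg_right this htpos.le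
      _ = 1 + c₀ := by field_simp
      _ = c₀ + 1 := by ring
  have hcof : atTop.IsCoboundedUnder (· ≥ ·) f :=
    isCoboundedUnder_ge_of_eventually_le atTop hfub
  set c'' : ℝ := (Filter.liminf f atTop + c) / 2 with hc''
  have h1a : Filter.liminf f atTop < c'' := by rw [hc'']; linarith
  have h1b : c'' < c := by rw [hc'']; linarith
  have hfreqf : ∃ᶠ t in atTop, f t < c'' := frequently_lt_of_liminf_lt hcof h1a
  -- coboundedness of g
  have hcog : atTop.IsCoboundedUnder (· ≤ ·) g := by
    by_contra hnc
    have htend : ∀ b : ℝ, ∀ᶠ s in atTop, g s < b := by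
      intro b
      rw [Filter.IsCoboundedUnder, Filter.IsCobounded] at hnc
      push_neg at hnc
      obtain ⟨a, ha, hab⟩ := hnc b
      rw [eventually_map] at ha
      filter_upwards [ha] with s hs
      exact lt_of_le_of_lt hs hab
    -- f tends to -infinity
    have htendf : ∀ b : ℝ, ∀ᶠ s in atTop, f s < b := by
      intro b
      filter_upwards [htend (b - 1), eventually_ge_atTop (max 1 |x 0|)] with s hgs hs
      have hs1 : (1:ℝ) ≤ s := le_trans (le_max_left _ _) hs
      have hspos : (0:ℝ) < s := lt_of_lt_of_le one_pos hs1
      have hx0 : |x 0| ≤ s := le_trans (le_max_right _ _) hs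
      have h1' : (x s - x 0) / s ≤ g s := hgge s hspos
      have h2' : f s = x s / s := rfl
      have : x 0 / s ≤ 1 := by
        rw [div_le_one hspos]
        exact le_trans (le_abs_self _) hx0
      have : f s ≤ g s + 1 := by
        rw [h2']
        have : x s / s = (x s - x 0) / s + x 0 / s := by field_simp; ring
        rw [this]
        linarith
      linarith
    -- liminf f = 0
    have hliminf : Filter.liminf f atTop = 0 := by
      rw [Filter.liminf_eq]
      convert Real.sSup_empty using 2
      case e'_2 => rfl
      rw [eq_empty_iff_forall_notMem]
      intro a ha
      simp only [mem_setOf_eq] at ha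
      obtain ⟨s, hs1, hs2⟩ := (ha.and (htendf a)).exists
      exact absurd hs1 (not_le.mpr hs2)
    -- limsup g = 0
    have hlimsup : Filter.limsup g atTop = 0 := by
      rw [Filter.limsup_eq]
      have huniv : {a : ℝ | ∀ᶠ s in atTop, g s ≤ a} = univ := by
        rw [eq_univ_iff_forall]
        intro a
        filter_upwards [htend a] with s hs
        exact hs.le
      rw [huniv]
      have : ¬ BddBelow (univ : Set ℝ) := by
        rintro ⟨b, hb⟩
        have := hb (mem_univ (b - 1))
        linarith
      rw [csInf_of_not_bddBelow this, Real.sInf_empty]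
    rw [hliminf] at h1
    rw [hlimsup] at h2
    linarith
  set c' : ℝ := (c + Filter.limsup g atTop) / 2 with hc'
  have h2a : c < c' := by rw [hc']; linarith
  have h2b : c' < Filter.limsup g atTop := by rw [hc']; linarith
  have hfreqg : ∃ᶠ s in atTop, c' < g s := frequently_lt_of_lt_limsup hcog h2b
  -- main construction
  have key : ∀ p : ℕ, ∃ t s sb : ℝ,
      (0 ≤ t ∧ 0 ≤ s ∧ s ≤ sb) ∧ ((c' - c) * p ≤ x (t + s) - x t - c * s) ∧
      (x (t + sb) - x t - c * sb ≤ 0) := by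
    intro p
    obtain ⟨s, hs, hgs⟩ := (frequently_atTop.mp hfreqg) (max (p:ℝ) 1)
    have hs1 : (1:ℝ) ≤ s := le_trans (le_max_right _ _) hs
    have hsp : (p:ℝ) ≤ s := le_trans (le_max_left _ _) hs
    have hspos : (0:ℝ) < s := lt_of_lt_of_le one_pos hs1
    have hsup : c' * s < sSup ((fun t => x (t + s) - x t) '' Ici 0) :=
      (lt_div_iff₀ hspos).mp hgs
    obtain ⟨y, ⟨t, ht, rfl⟩, hy⟩ := exists_lt_of_lt_csSup (hne s) hsup
    simp only at hy
    -- now find return point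
    obtain ⟨u, hu, hfu⟩ := (frequently_atTop.mp hfreqf)
      (max (max (t + s) 1) ((c * t - x t) / (c - c'')))
    have hu1 : (1:ℝ) ≤ u := le_trans (le_trans (le_max_right _ _) (le_max_left _ _)) hu
    have hupos : (0:ℝ) < u := lt_of_lt_of_le one_pos hu1
    have huts : t + s ≤ u := le_trans (le_trans (le_max_left _ _) (le_max_left _ _)) hu
    have huq : (c * t - x t) / (c - c'') ≤ u := le_trans (le_max_right _ _) hu
    have hcc'' : (0:ℝ) < c - c'' := by linarith
    have hxu : x u < c'' * u := (div_lt_iff₀ hupos).mp hfu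
    have hquot : c * t - x t ≤ (c - c'') * u := by
      rw [← div_le_iff₀' hcc''] at *
      exact huq
    refine ⟨t, s, u - t, ⟨ht, by linarith, by linarith⟩, ?_, ?_⟩
    · have : (c' - c) * p ≤ (c' - c) * s :=
        mul_le_mul_of_nonneg_left hsp (by linarith)
      nlinarith
    · have : t + (u - t) = u := by ring
      rw [this]
      nlinarith
  choose T S SB hts hexc hret using key
  refine ⟨T, S, SB, hts, ?_, hret⟩
  have htend : Tendsto (fun p : ℕ => (c' - c) * (p:ℝ)) atTop atTop :=
    Tendsto.const_mul_atTop (by linarith) tendsto_natCast_atTop_atTop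
  exact tendsto_atTop_mono hexc htend
end

section
/- Let c₀ > 0 and let x : [0,+∞) → ℝ satisfy x(t+s) ≤ x(t) + c₀ s for all t, s ≥ 0. Define x̄(s) = sup_{t ≥ 0} ( x(t+s) − x(t) ), c_inf = liminf_{t→+∞} x(t)/t, and c̄_sup = limsup_{s→+∞} x̄(s)/s. If c is a real number with c_inf < c < c̄_sup, then for every τ > 0 there exist sequences (t'_p) and (s'_p) of real numbers such that: for every p, t'_p ≥ 0 and τ ≤ s'_p ≤ 2τ; for every p and every s ∈ [0, τ], x(t'_p + s) − x(t'_p) − c s ≥ 0; for every p, x(t'_p + s'_p) − x(t'_p) − c s'_p ≤ 1; and t'_p → +∞ as p → +∞. -/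
open Filter Topology Set

private lemma le_of_forall_eps (a b : ℝ) (h : ∀ ε : ℝ, 0 < ε → a ≤ b + ε) : a ≤ b := by
  by_contra hc
  push_neg at hc
  have := h ((a - b) / 2) (by linarith)
  linarith

private lemma upLip_sSup_le (y : ℝ → ℝ) (L : ℝ) (hL : 0 < L)
    (hy : ∀ t t' : ℝ, 0 ≤ t → t ≤ t' → y t' ≤ y t + L * (t' - t))
    (S : Set ℝ) (hS0 : ∀ t ∈ S, (0:ℝ) ≤ t) (hne : S.Nonempty) (hbdd : BddAbove S)
    (v : ℝ) (hv : ∀ t ∈ S, y t ≤ v) : y (sSup S) ≤ v := by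
  refine le_of_forall_eps _ _ (fun δ hδ => ?_)
  obtain ⟨t, htS, htlt⟩ := exists_lt_of_lt_csSup hne
    (show sSup S - δ / L < sSup S by
      have : 0 < δ / L := div_pos hδ hL
      linarith)
  have htle : t ≤ sSup S := le_csSup hbdd htS
  have h1 : y (sSup S) ≤ y t + L * (sSup S - t) := hy t _ (hS0 t htS) htle
  have h2 : sSup S - t ≤ δ / L := by linarith
  have h3 : L * (sSup S - t) ≤ L * (δ / L) :=
    mul_le_mul_of_nonneg_left h2 (le_of_lt hL)
  have h4 : L * (δ / L) = δ := by field_simp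
  have := hv t htS
  linarith

private lemma upLip_right_ge (y : ℝ → ℝ) (L : ℝ) (hL : 0 < L)
    (hy : ∀ t t' : ℝ, 0 ≤ t → t ≤ t' → y t' ≤ y t + L * (t' - t))
    (σ B v : ℝ) (h0 : 0 ≤ σ) (hσB : σ < B)
    (hev : ∀ t, σ < t → t ≤ B → v < y t) : v ≤ y σ := by
  refine le_of_forall_eps _ _ (fun δ hδ => ?_)
  set t := min B (σ + δ / L) with ht_def
  have hδL : 0 < δ / L := div_pos hδ hL
  have hσt : σ < t := lt_min hσB (by linarith)
  have htB : t ≤ B := min_le_left _ _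
  have h1 : v < y t := hev t hσt htB
  have h2 : y t ≤ y σ + L * (t - σ) := hy σ t h0 (le_of_lt hσt)
  have h3 : t - σ ≤ δ / L := by
    have := min_le_right B (σ + δ / L)
    simp only [ht_def] at *
    linarith
  have h4 : L * (t - σ) ≤ L * (δ / L) := mul_le_mul_of_nonneg_left h3 (le_of_lt hL)
  have h5 : L * (δ / L) = δ := by field_simp
  linarith

/-- The escape point remains to the right during a controlled time interval and
ends up to the left, in a frame travelling at speed `c`. -/
theorem statement15
    (c₀ : ℝ) (hc₀ : 0 < c₀) (x : ℝ → ℝ)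
    (hx : ∀ t s : ℝ, 0 ≤ t → 0 ≤ s → x (t + s) ≤ x t + c₀ * s) (c : ℝ)
    (h1 : Filter.liminf (fun t => x t / t) atTop < c)
    (h2 : c < Filter.limsup
        (fun s => sSup ((fun t => x (t + s) - x t) '' Ici 0) / s) atTop) :
    ∀ τ : ℝ, 0 < τ →
      ∃ t' s' : ℕ → ℝ,
        (∀ p, 0 ≤ t' p ∧ τ ≤ s' p ∧ s' p ≤ 2 * τ) ∧
        (∀ p, ∀ s ∈ Icc (0:ℝ) τ, 0 ≤ x (t' p + s) - x (t' p) - c * s) ∧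
        (∀ p, x (t' p + s' p) - x (t' p) - c * s' p ≤ 1) ∧
        Tendsto t' atTop atTop := by
  intro τ hτ
  classical
  -- the moving-frame function
  set y : ℝ → ℝ := fun t => x t - c * t with hy_def
  set L : ℝ := |c₀ - c| + 1 with hL_def
  have hL : 0 < L := by positivity
  have hy : ∀ t t' : ℝ, 0 ≤ t → t ≤ t' → y t' ≤ y t + L * (t' - t) := by
    intro t t' ht htt
    have h := hx t (t' - t) ht (by linarith)
    have h' : t + (t' - t) = t' := by ring
    rw [h'] at h
    have habs : c₀ - c ≤ |c₀ - c| := le_abs_self _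
    have hnn : (0:ℝ) ≤ t' - t := by linarith
    have : (c₀ - c) * (t' - t) ≤ L * (t' - t) := by
      apply mul_le_mul_of_nonneg_right _ hnn
      rw [hL_def]; linarith
    simp only [hy_def]
    nlinarith
  -- crash times : y goes below any level at arbitrarily late times
  have hcrash : ∀ M T₀ : ℝ, ∃ T, T₀ ≤ T ∧ y T ≤ M := by
    -- first, a speed c₁ < c frequently bounding x t / t from above
    have K1 : ∃ c₁ : ℝ, c₁ < c ∧ ∃ᶠ t in (atTop : Filter ℝ), x t / t < c₁ := by
      set V : Set ℝ := {a | ∀ᶠ t in (atTop : Filter ℝ), a ≤ x t / t} with hV_def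
      by_cases hne : V.Nonempty
      · -- the liminf is honest
        have hbdd : BddAbove V := by
          refine ⟨c₀ + |x 0|, fun a ha => ?_⟩
          have hup : ∀ᶠ t in (atTop : Filter ℝ), x t / t ≤ c₀ + |x 0| := by
            filter_upwards [eventually_ge_atTop (1:ℝ)] with t ht
            have h0t : (0:ℝ) < t := by linarith
            have hxt : x t ≤ x 0 + c₀ * t := by
              have := hx 0 t le_rfl (by linarith)
              rwa [zero_add] at this
            rw [div_le_iff₀ h0t]
            have : |x 0| * 1 ≤ |x 0| * t := by
              apply mul_le_mul_of_nonneg_left ht (abs_nonneg _)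
            nlinarith [neg_abs_le (x 0), le_abs_self (x 0)]
          obtain ⟨t, h1t, h2t⟩ := (ha.and hup).exists
          linarith
        have hliminf : Filter.liminf (fun t => x t / t) atTop = sSup V := Filter.liminf_eq
        rw [hliminf] at h1
        refine ⟨(sSup V + c) / 2, by linarith, ?_⟩
        by_contra hcon
        rw [Filter.not_frequently] at hcon
        have hmem : (sSup V + c) / 2 ∈ V := by
          filter_upwards [hcon] with t ht
          push_neg at ht
          exact ht
        have := le_csSup hbdd hmem
        linarith
      · -- junk liminf : every level is frequently undercut
        refine ⟨c - 1, by linarith, ?_⟩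
        by_contra hcon
        rw [Filter.not_frequently] at hcon
        refine hne ⟨c - 1, ?_⟩
        filter_upwards [hcon] with t ht
        push_neg at ht
        exact ht
    obtain ⟨c₁, hc₁, hfr⟩ := K1
    intro M T₀
    rw [Filter.frequently_atTop] at hfr
    obtain ⟨T, hT1, hT2⟩ := hfr (max 1 (max T₀ (M / (c₁ - c))))
    have hT1' : (1:ℝ) ≤ T := le_trans (le_max_left _ _) hT1
    have hTpos : (0:ℝ) < T := by linarith
    have hTT₀ : T₀ ≤ T := le_trans (le_trans (le_max_left _ _) (le_max_right _ _)) hT1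
    have hTM : M / (c₁ - c) ≤ T := le_trans (le_trans (le_max_right _ _) (le_max_right _ _)) hT1
    refine ⟨T, hTT₀, ?_⟩
    have hxT : x T < c₁ * T := by
      rw [div_lt_iff₀ hTpos] at hT2
      linarith
    have hneg : c₁ - c < 0 := by linarith
    have : (c₁ - c) * T ≤ M := by
      have h := mul_le_mul_of_nonpos_left hTM (le_of_lt hneg)
      have hcc : (c₁ - c) * (M / (c₁ - c)) = M :=
        mul_div_cancel₀ M (by linarith : c₁ - c ≠ 0)
      linarith
    simp only [hy_def]
    nlinarith
  -- rises : arbitrarily late, arbitrarily large rises of y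
  have hrise : ∀ R S₀ : ℝ, 0 ≤ S₀ → ∃ A D : ℝ, S₀ ≤ A ∧ A ≤ D ∧ y A + R ≤ y D := by
    set u : ℝ → ℝ := fun s => sSup ((fun t => x (t + s) - x t) '' Ici 0) / s with hu_def
    have himg_ne : ∀ s : ℝ, ((fun t => x (t + s) - x t) '' Ici 0).Nonempty :=
      fun s => ⟨x (0 + s) - x 0, ⟨0, mem_Ici.mpr le_rfl, rfl⟩⟩
    have himg_bdd : ∀ s : ℝ, 0 ≤ s → BddAbove ((fun t => x (t + s) - x t) '' Ici 0) := by
      intro s hs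
      refine ⟨c₀ * s, fun v hv => ?_⟩
      obtain ⟨t, ht, rfl⟩ := hv
      simp only [mem_Ici] at ht
      have := hx t s ht hs
      dsimp only
      linarith
    have hu_le : ∀ s : ℝ, 1 ≤ s → u s ≤ c₀ := by
      intro s hs
      have hspos : (0:ℝ) < s := by linarith
      simp only [hu_def]
      rw [div_le_iff₀ hspos]
      refine csSup_le (himg_ne s) (fun v hv => ?_)
      obtain ⟨t, ht, rfl⟩ := hv
      simp only [mem_Ici] at ht
      have := hx t s ht (by linarith)
      dsimp only
      linarith
    have K2 : ∃ c₂ : ℝ, c < c₂ ∧ ∃ᶠ s in (atTop : Filter ℝ), c₂ < u s := by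
      set U : Set ℝ := {a | ∀ᶠ s in (atTop : Filter ℝ), u s ≤ a} with hU_def
      have hUne : U.Nonempty := by
        refine ⟨c₀, ?_⟩
        filter_upwards [eventually_ge_atTop (1:ℝ)] with s hs using hu_le s hs
      have hlimsup : Filter.limsup u atTop = sInf U := Filter.limsup_eq
      have h2' : c < sInf U := by
        rw [← hlimsup]
        exact h2
      by_cases hBB : BddBelow U
      · refine ⟨(c + sInf U) / 2, by linarith, ?_⟩
        by_contra hcon
        rw [Filter.not_frequently] at hcon
        have hmem : (c + sInf U) / 2 ∈ U := by
          filter_upwards [hcon] with s hs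
          push_neg at hs
          exact hs
        have := csInf_le hBB hmem
        linarith
      · -- junk limsup : impossible
        exfalso
        have hjunk : sInf U = 0 := Real.sInf_of_not_bddBelow hBB
        have hc0 : c < 0 := by rw [hjunk] at h2'; exact h2'
        set V : Set ℝ := {a | ∀ᶠ t in (atTop : Filter ℝ), a ≤ x t / t} with hV_def
        by_cases hne : V.Nonempty
        · obtain ⟨a₀, ha₀⟩ := hne
          -- then u is eventually bounded below
          have hulow : ∀ᶠ s in (atTop : Filter ℝ), a₀ - |x 0| ≤ u s := by
            filter_upwards [eventually_ge_atTop (1:ℝ),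
              eventually_ge_atTop (max 1 (|x 0|)),
              ha₀.filter_mono (le_refl _)] with s hs1 hs2 hs3
            have hspos : (0:ℝ) < s := by linarith
            have hmem : x (0 + s) - x 0 ∈ (fun t => x (t + s) - x t) '' Ici 0 :=
              ⟨0, mem_Ici.mpr le_rfl, rfl⟩
            have hle : x (0 + s) - x 0 ≤ sSup ((fun t => x (t + s) - x t) '' Ici 0) :=
              le_csSup (himg_bdd s (by linarith)) hmem
            have hxs : a₀ * s ≤ x s := by
              rw [le_div_iff₀ hspos] at hs3
              exact hs3
            have habs : |x 0| * 1 ≤ |x 0| * s := by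
              apply mul_le_mul_of_nonneg_left _ (abs_nonneg _)
              linarith
            simp only [hu_def]
            rw [le_div_iff₀ hspos]
            rw [zero_add] at hle
            nlinarith [le_abs_self (x 0), neg_abs_le (x 0)]
          obtain ⟨a, haU, halt⟩ := not_bddBelow_iff.mp hBB (a₀ - |x 0|)
          have haU' : ∀ᶠ s in (atTop : Filter ℝ), u s ≤ a := haU
          obtain ⟨s, hs1, hs2⟩ := (haU'.and hulow).exists
          linarith
        · -- V empty : liminf is junk 0, contradicting c < 0
          have hVempty : V = ∅ := not_nonempty_iff_eq_empty.mp hne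
          have hliminf : Filter.liminf (fun t => x t / t) atTop = sSup V := Filter.liminf_eq
          rw [hliminf, hVempty, Real.sSup_empty] at h1
          linarith
    obtain ⟨c₂, hc₂, hfr⟩ := K2
    set η : ℝ := c₂ - c with hη_def
    have hη : 0 < η := by simp only [hη_def]; linarith
    intro R S₀ hS₀
    rw [Filter.frequently_atTop] at hfr
    obtain ⟨s, hs1, hs2⟩ := hfr (max (S₀ + 1) (max 1 ((R + L * S₀ + 1) / η)))
    have hs_S : S₀ + 1 ≤ s := le_trans (le_max_left _ _) hs1
    have hs_1 : (1:ℝ) ≤ s := le_trans (le_trans (le_max_left _ _) (le_max_right _ _)) hs1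
    have hs_R : (R + L * S₀ + 1) / η ≤ s :=
      le_trans (le_trans (le_max_right _ _) (le_max_right _ _)) hs1
    have hspos : (0:ℝ) < s := by linarith
    have hηs : R + L * S₀ + 1 ≤ η * s := by
      rw [div_le_iff₀ hη] at hs_R
      linarith [hs_R]
    -- extract a concrete rise
    have hsup : c₂ * s < sSup ((fun t => x (t + s) - x t) '' Ici 0) := by
      simp only [hu_def] at hs2
      rw [lt_div_iff₀ hspos] at hs2
      linarith
    obtain ⟨v, hv, hvgt⟩ := exists_lt_of_lt_csSup (himg_ne s) hsup
    obtain ⟨t, ht0, rfl⟩ := hv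
    simp only [mem_Ici] at ht0
    dsimp only at hvgt
    have hyrise : y t + η * s ≤ y (t + s) := by
      simp only [hy_def, hη_def]
      have hexp : c * (t + s) = c * t + c * s := by ring
      linarith
    by_cases htS : S₀ ≤ t
    · refine ⟨t, t + s, htS, by linarith, ?_⟩
      have : R ≤ η * s := by nlinarith
      linarith
    · push_neg at htS
      refine ⟨S₀, t + s, le_rfl, by linarith, ?_⟩
      have hyA : y S₀ ≤ y t + L * (S₀ - t) := hy t S₀ ht0 (le_of_lt htS)
      have hLb : L * (S₀ - t) ≤ L * S₀ := by
        apply mul_le_mul_of_nonneg_left _ (le_of_lt hL)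
        linarith
      linarith
  -- main step : good points exist beyond any time
  have lemA : ∀ (S : Set ℝ), (∀ t ∈ S, (0:ℝ) ≤ t) → S.Nonempty → BddAbove S →
      ∀ v : ℝ, (∀ t ∈ S, y t ≤ v) → y (sSup S) ≤ v :=
    fun S h1' h2' h3' v h4' => upLip_sSup_le y L hL hy S h1' h2' h3' v h4'
  have lemB : ∀ σ B v : ℝ, 0 ≤ σ → σ < B → (∀ t, σ < t → t ≤ B → v < y t) → v ≤ y σ :=
    fun σ B v h1' h2' h3' => upLip_right_ge y L hL hy σ B v h1' h2' h3'
  have key : ∀ S₀ : ℝ, 0 ≤ S₀ → ∃ u, S₀ ≤ u ∧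
      (∀ s, 0 ≤ s → s ≤ τ → y u ≤ y (u + s)) ∧
      (∃ s', τ ≤ s' ∧ s' ≤ 2 * τ ∧ y (u + s') ≤ y u + 1) := by
    intro S₀ hS₀
    by_contra hbad'
    push_neg at hbad'
    -- hbad' : ∀ u, S₀ ≤ u → (∀ s, 0 ≤ s → s ≤ τ → y u ≤ y (u + s)) →
    --          ∀ s', τ ≤ s' → s' ≤ 2 * τ → y u + 1 < y (u + s')
    obtain ⟨A, D, hSA, hAD, hR⟩ := hrise (L * τ + 2) S₀ hS₀
    have hA0 : (0:ℝ) ≤ A := le_trans hS₀ hSA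
    set b : ℝ := y A with hb_def
    -- base point
    set T0 : Set ℝ := {t | A ≤ t ∧ t ≤ D ∧ y t ≤ b} with hT0_def
    have hT0ne : T0.Nonempty := ⟨A, le_rfl, hAD, le_rfl⟩
    have hT0bdd : BddAbove T0 := ⟨D, fun t ht => ht.2.1⟩
    have hT0nn : ∀ t ∈ T0, (0:ℝ) ≤ t := fun t ht => le_trans hA0 ht.1
    set σ0 : ℝ := sSup T0 with hσ0_def
    have hσ0A : A ≤ σ0 := le_csSup hT0bdd ⟨le_rfl, hAD, le_rfl⟩
    have hσ0nn : (0:ℝ) ≤ σ0 := le_trans hA0 hσ0A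
    have hσ0S : S₀ ≤ σ0 := le_trans hSA hσ0A
    -- members of T0 are at distance ≥ τ + 2/L from D
    have hT0far : ∀ t ∈ T0, t ≤ D - τ - 2 / L := by
      intro t ht
      obtain ⟨htA, htD, htv⟩ := ht
      have h0t : (0:ℝ) ≤ t := le_trans hA0 htA
      have hDle : y D ≤ y t + L * (D - t) := hy t D h0t htD
      -- b + L*τ + 2 ≤ y D ≤ b + L * (D - t)
      have : L * τ + 2 ≤ L * (D - t) := by linarith
      have hdiv : τ + 2 / L ≤ D - t := by
        rw [← sub_nonneg]
        have hexp : D - t - (τ + 2 / L) = (L * (D - t) - (L * τ + 2)) / L := by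
          field_simp
        rw [hexp]
        apply div_nonneg _ (le_of_lt hL)
        linarith
      linarith
    have hσ0far : σ0 ≤ D - τ - 2 / L := csSup_le hT0ne hT0far
    have hσ0D : σ0 + τ < D := by
      have : 0 < 2 / L := by positivity
      linarith
    -- floor above σ0
    have hfloor0 : ∀ t, σ0 < t → t < D → b < y t := by
      intro t ht1 ht2
      by_contra hle
      push_neg at hle
      have : t ∈ T0 := ⟨le_trans hσ0A (le_of_lt ht1), le_of_lt ht2, hle⟩
      have := le_csSup hT0bdd this
      linarith
    have hval0 : y σ0 = b := by
      have hle : y σ0 ≤ b := lemA T0 hT0nn hT0ne hT0bdd b (fun t ht => ht.2.2)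
      have hge : b ≤ y σ0 := by
        refine lemB σ0 ((σ0 + D) / 2) b hσ0nn (by linarith) ?_
        intro t ht1 ht2
        exact hfloor0 t ht1 (by linarith)
      linarith
    -- the inductive step
    have step : ∀ σk v : ℝ, 0 ≤ σk → S₀ ≤ σk → y σk = v →
        (∃ W, σk + τ < W ∧ ∀ t, σk < t → t < W → v < y t) →
        (y (sSup {t | σk ≤ t ∧ t ≤ σk + τ ∧ y t ≤ v + 1}) = v + 1 ∧
          σk < sSup {t | σk ≤ t ∧ t ≤ σk + τ ∧ y t ≤ v + 1} ∧
          sSup {t | σk ≤ t ∧ t ≤ σk + τ ∧ y t ≤ v + 1} < σk + τ ∧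
          ∃ W', sSup {t | σk ≤ t ∧ t ≤ σk + τ ∧ y t ≤ v + 1} + τ < W' ∧
            ∀ t, sSup {t | σk ≤ t ∧ t ≤ σk + τ ∧ y t ≤ v + 1} < t → t < W' → v + 1 < y t) := by
      intro σk v hσknn hσkS hσkv ⟨W, hWτ, hWfloor⟩
      -- σk is a good-candidate : cond2 holds
      have hcond2 : ∀ s, 0 ≤ s → s ≤ τ → y σk ≤ y (σk + s) := by
        intro s hs0 hsτ
        rcases eq_or_lt_of_le hs0 with h | h
        · rw [← h, add_zero]
        · have h1 : σk < σk + s := by linarith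
          have h2 : σk + s < W := by linarith
          have := hWfloor (σk + s) h1 h2
          linarith [hσkv]
      have hnc3 : ∀ s', τ ≤ s' → s' ≤ 2 * τ → y σk + 1 < y (σk + s') :=
        hbad' σk hσkS hcond2
      -- the first return below v + 1 after σk + τ
      obtain ⟨Tc, hTc1, hTc2⟩ := hcrash (v + 1) (σk + τ)
      set Scrash : Set ℝ := {t | σk + τ ≤ t ∧ y t ≤ v + 1} with hScrash_def
      have hScne : Scrash.Nonempty := ⟨Tc, hTc1, hTc2⟩
      have hScbdd : BddBelow Scrash := ⟨σk + τ, fun t ht => ht.1⟩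
      set W' : ℝ := sInf Scrash with hW'_def
      have hW'lb : σk + 2 * τ ≤ W' := by
        refine le_csInf hScne ?_
        intro t ⟨ht1, ht2⟩
        by_contra hcon
        push_neg at hcon
        have hs1 : τ ≤ t - σk := by linarith
        have hs2 : t - σk ≤ 2 * τ := by linarith
        have := hnc3 (t - σk) hs1 hs2
        rw [add_sub_cancel] at this
        linarith [hσkv]
      have hW'floor : ∀ t, σk + τ ≤ t → t < W' → v + 1 < y t := by
        intro t ht1 ht2
        by_contra hle
        push_neg at hle
        have : t ∈ Scrash := ⟨ht1, hle⟩
        have := csInf_le hScbdd this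
        linarith
      -- the new crossing point
      set Tk : Set ℝ := {t | σk ≤ t ∧ t ≤ σk + τ ∧ y t ≤ v + 1} with hTk_def
      have hTkne : Tk.Nonempty := ⟨σk, le_rfl, by linarith, by linarith [hσkv]⟩
      have hTkbdd : BddAbove Tk := ⟨σk + τ, fun t ht => ht.2.1⟩
      have hTknn : ∀ t ∈ Tk, (0:ℝ) ≤ t := fun t ht => le_trans hσknn ht.1
      set σ' : ℝ := sSup Tk with hσ'_def
      have hσ'ge : σk ≤ σ' := le_csSup hTkbdd ⟨le_rfl, by linarith, by linarith [hσkv]⟩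
      have hσ'le : σ' ≤ σk + τ := csSup_le hTkne (fun t ht => ht.2.1)
      have hσ'nn : (0:ℝ) ≤ σ' := le_trans hσknn hσ'ge
      have hvle : y σ' ≤ v + 1 := lemA Tk hTknn hTkne hTkbdd (v + 1) (fun t ht => ht.2.2)
      have hστval : v + 1 < y (σk + τ) := by
        have := hnc3 τ le_rfl (by linarith)
        linarith [hσkv]
      have hσ'lt : σ' < σk + τ := by
        rcases lt_or_eq_of_le hσ'le with h | h
        · exact h
        · exfalso; rw [h] at hvle; linarith
      have hup : ∀ t, σ' < t → t ≤ σk + τ → v + 1 < y t := by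
        intro t ht1 ht2
        by_contra hle
        push_neg at hle
        have : t ∈ Tk := ⟨le_trans hσ'ge (le_of_lt ht1), ht2, hle⟩
        have := le_csSup hTkbdd this
        linarith
      have hvge : v + 1 ≤ y σ' := lemB σ' (σk + τ) (v + 1) hσ'nn hσ'lt hup
      have hval : y σ' = v + 1 := le_antisymm hvle hvge
      have hneq : σk < σ' := by
        rcases lt_or_eq_of_le hσ'ge with h | h
        · exact h
        · exfalso; rw [← h] at hval; linarith [hσkv]
      refine ⟨hval, hneq, hσ'lt, W', by linarith, ?_⟩
      intro t ht1 ht2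
      by_cases hcase : t ≤ σk + τ
      · exact hup t ht1 hcase
      · push_neg at hcase
        exact hW'floor t (le_of_lt hcase) ht2
    -- the recursively defined sequence of crossing points
    set σf : ℕ → ℝ := fun k => Nat.rec σ0
      (fun _ σk => sSup {t | σk ≤ t ∧ t ≤ σk + τ ∧ y t ≤ y σk + 1}) k with hσf_def
    have hσf_succ : ∀ k, σf (k + 1) =
        sSup {t | σf k ≤ t ∧ t ≤ σf k + τ ∧ y t ≤ y (σf k) + 1} := fun k => rfl
    -- the invariant
    have main : ∀ k : ℕ, (y (σf k) = b + k) ∧ S₀ ≤ σf k ∧ (0:ℝ) ≤ σf k ∧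
        (∃ W, σf k + τ < W ∧ ∀ t, σf k < t → t < W → b + k < y t) := by
      intro k
      induction k with
      | zero =>
        refine ⟨by simpa using (show y (σf 0) = b from hval0), hσ0S, hσ0nn, D, hσ0D, ?_⟩
        intro t ht1 ht2
        simpa using hfloor0 t ht1 ht2
      | succ k ih =>
        obtain ⟨hval, hS, hnn, hW⟩ := ih
        have hW' : ∃ W, σf k + τ < W ∧ ∀ t, σf k < t → t < W → y (σf k) < y t := by
          rw [hval]; exact hW
        have hstep := step (σf k) (y (σf k)) hnn hS rfl hW'
        rw [← hσf_succ] at hstep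
        obtain ⟨h1, h2, h3, W', h4, h5⟩ := hstep
        rw [hval] at h1 h5
        refine ⟨by rw [h1]; push_cast; ring, le_trans hS (le_of_lt h2),
          le_trans hnn (le_of_lt h2), W', h4, ?_⟩
        intro t ht1 ht2
        have := h5 t ht1 ht2
        push_cast
        linarith
    -- monotonicity facts
    have hmono : ∀ k : ℕ, σf k < σf (k + 1) ∧ σf (k + 1) < σf k + τ := by
      intro k
      obtain ⟨hval, hS, hnn, hW⟩ := main k
      have hW' : ∃ W, σf k + τ < W ∧ ∀ t, σf k < t → t < W → y (σf k) < y t := by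
        rw [hval]; exact hW
      have hstep := step (σf k) (y (σf k)) hnn hS rfl hW'
      rw [← hσf_succ] at hstep
      exact ⟨hstep.2.1, hstep.2.2.1⟩
    have hfloorτ : ∀ k : ℕ, ∀ t, σf k < t → t ≤ σf k + τ → b + k < y t := by
      intro k t ht1 ht2
      obtain ⟨_, _, _, W, hWτ, hWfloor⟩ := main k
      exact hWfloor t ht1 (by linarith)
    have hsm : StrictMono σf := strictMono_nat_of_lt_succ (fun k => (hmono k).1)
    -- final contradiction
    by_cases hbb : BddAbove (Set.range σf)
    · -- bounded case : values blow up near the limit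
      set σinf : ℝ := sSup (Set.range σf) with hσinf_def
      have hrange_ne : (Set.range σf).Nonempty := ⟨σf 0, 0, rfl⟩
      obtain ⟨w, ⟨k0, rfl⟩, hk0⟩ := exists_lt_of_lt_csSup hrange_ne
        (show σinf - τ < σinf by linarith)
      have hub : ∀ k, σf k ≤ σinf := fun k => le_csSup hbb ⟨k, rfl⟩
      have hblow : ∀ k, k0 ≤ k → b + k < y σinf := by
        intro k hk
        have h1 : σf k < σinf := lt_of_lt_of_le (hsm (Nat.lt_succ_self k)) (hub (k + 1))
        have h2 : σinf ≤ σf k + τ := by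
          have : σf k0 ≤ σf k := hsm.monotone hk
          linarith
        exact hfloorτ k σinf h1 h2
      obtain ⟨k1, hk1⟩ := exists_nat_gt (y σinf - b)
      have := hblow (max k0 k1) (le_max_left _ _)
      have hc : (k1 : ℝ) ≤ ((max k0 k1 : ℕ) : ℝ) := Nat.cast_le.mpr (le_max_right _ _)
      linarith
    · -- unbounded case : contradiction with a deep crash
      obtain ⟨T, hT1, hT2⟩ := hcrash (b - 1) (σf 0)
      have hex : ∃ k : ℕ, T < σf k := by
        rw [not_bddAbove_iff] at hbb
        obtain ⟨w, ⟨k, rfl⟩, hw⟩ := hbb T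
        exact ⟨k, hw⟩
      set k' := Nat.find hex with hk'_def
      have hk'spec : T < σf k' := Nat.find_spec hex
      have hk'ne : k' ≠ 0 := by
        intro h0
        rw [h0] at hk'spec
        linarith
      obtain ⟨j, hj⟩ := Nat.exists_eq_succ_of_ne_zero hk'ne
      have hjlt : ¬ (T < σf j) := Nat.find_min hex
        (show j < Nat.find hex by rw [← hk'_def, hj]; exact Nat.lt_succ_self j)
      push_neg at hjlt
      have hsucc : T < σf (j + 1) := by rw [hj] at hk'spec; exact hk'spec
      have hjτ : σf (j + 1) < σf j + τ := (hmono j).2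
      rcases eq_or_lt_of_le hjlt with h | h
      · have hval : y (σf j) = b + j := (main j).1
        rw [h] at hval
        have : (0:ℝ) ≤ (j : ℝ) := Nat.cast_nonneg j
        linarith
      · have := hfloorτ j T h (by linarith)
        have hc : (0:ℝ) ≤ (j : ℝ) := Nat.cast_nonneg j
        linarith
  -- assemble the sequences
  have hseq : ∀ p : ℕ, ∃ u v : ℝ, (p : ℝ) ≤ u ∧
      (∀ s, 0 ≤ s → s ≤ τ → y u ≤ y (u + s)) ∧
      (τ ≤ v ∧ v ≤ 2 * τ ∧ y (u + v) ≤ y u + 1) := by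
    intro p
    obtain ⟨u, hu1, hu2, v, hv1, hv2, hv3⟩ := key p (Nat.cast_nonneg p)
    exact ⟨u, v, hu1, hu2, hv1, hv2, hv3⟩
  choose t' s' hp1 hp2 hp3 using hseq
  refine ⟨t', s', ?_, ?_, ?_, ?_⟩
  · intro p
    exact ⟨le_trans (Nat.cast_nonneg p) (hp1 p), (hp3 p).1, (hp3 p).2.1⟩
  · intro p s hs
    have h := hp2 p s hs.1 hs.2
    simp only [hy_def] at h
    have hexp : c * (t' p + s) = c * t' p + c * s := by ring
    linarith [hexp, h]
  · intro p
    have h := (hp3 p).2.2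
    simp only [hy_def] at h
    have hexp : c * (t' p + s' p) = c * t' p + c * s' p := by ring
    linarith [hexp, h]
  · exact tendsto_atTop_mono hp1 tendsto_natCast_atTop_atTop
end
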